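/- arXiv:2505.03287 — 9 statements merged into one kernel-verified Lean document; each statement's English description precedes it below -/
import Mathlib

section
/- Let A be a unital C*-algebra and let a, b be positive norm-one elements of A. Then ‖a − b‖ = 1 if and only if there exists a pure state ω on A such that {ω(a), ω(b)} = {0, 1}. -/
open scoped ComplexOrder

variable {A : Type*} [CStarAlgebra A] [PartialOrder A] [StarOrderedRing A]

/-- A state on a unital C*-algebra: a positive linear functional of norm one. -/
def IsState (ω : A →L[ℂ] ℂ) : Prop :=
  (∀ a : A, 0 ≤ a → 0 ≤ ω a) ∧ ‖ω‖ = 1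

/-- A pure state: an extreme point of the state space. -/
def IsPureState (ω : A →L[ℂ] ℂ) : Prop :=
  ω ∈ Set.extremePoints ℝ {φ : A →L[ℂ] ℂ | IsState φ}

namespace NormSubPure

lemma apply_algebraMap (φ : A →L[ℂ] ℂ) (h1 : φ 1 = 1) (z : ℂ) :
    φ (algebraMap ℂ A z) = z := by
  rw [Algebra.algebraMap_eq_smul_one, map_smul, h1, smul_eq_mul, mul_one]

lemma im_eq_zero (φ : A →L[ℂ] ℂ) (hn : ‖φ‖ ≤ 1) (h1 : φ 1 = 1) {x : A}
    (hx : IsSelfAdjoint x) : (φ x).im = 0 := by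
  have hA : Nontrivial A := by
    by_contra h
    rw [not_nontrivial_iff_subsingleton] at h
    have h0 : (1 : A) = 0 := Subsingleton.elim _ _
    rw [h0, map_zero] at h1
    exact one_ne_zero h1.symm
  have key : ∀ n : ℝ, (φ x).re ^ 2 + ((φ x).im + n) ^ 2 ≤ ‖x‖ ^ 2 + n ^ 2 := by
    intro n
    set u : A := algebraMap ℂ A (n * Complex.I) with hu
    have hsu : star u = -u := by
      rw [hu, ← map_neg, ← algebraMap_star_comm]
      congr 1
      simp [Complex.star_def]
    have hu2 : u * u = algebraMap ℂ A (-(n ^ 2 : ℝ)) := by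
      rw [hu, ← map_mul]
      congr 1
      push_cast
      rw [mul_mul_mul_comm, Complex.I_mul_I]
      ring
    have hy2 : star (x + u) * (x + u) = x * x + algebraMap ℝ A (n ^ 2) := by
      have hcomm : u * x = x * u := (Algebra.commutes _ x)
      have expand : (x + -u) * (x + u) = x * x + x * u - u * x - u * u := by noncomm_ring
      rw [star_add, hx.star_eq, hsu, expand, hcomm, hu2]
      have : algebraMap ℂ A (-(n ^ 2 : ℝ)) = - algebraMap ℝ A (n ^ 2) := by
        rw [map_neg]
        norm_cast
      rw [this]
      abel
    have hnorm : ‖x + u‖ ^ 2 ≤ ‖x‖ ^ 2 + n ^ 2 := by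
      have hcs := CStarRing.norm_star_mul_self (x := x + u)
      calc ‖x + u‖ ^ 2 = ‖star (x + u) * (x + u)‖ := by rw [hcs]; ring
        _ = ‖x * x + algebraMap ℝ A (n ^ 2)‖ := by rw [hy2]
        _ ≤ ‖x * x‖ + ‖algebraMap ℝ A (n ^ 2)‖ := norm_add_le _ _
        _ ≤ ‖x‖ ^ 2 + n ^ 2 := by
            have h1' : ‖x * x‖ ≤ ‖x‖ ^ 2 := by
              calc ‖x * x‖ ≤ ‖x‖ * ‖x‖ := norm_mul_le x x
                _ = ‖x‖ ^ 2 := (sq ‖x‖).symm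
            have h2' : ‖algebraMap ℝ A (n ^ 2)‖ ≤ n ^ 2 := by
              rw [Algebra.algebraMap_eq_smul_one, norm_smul, norm_one]
              simp [abs_of_nonneg (sq_nonneg n)]
            linarith
    have happ : φ (x + u) = φ x + n * Complex.I := by
      rw [map_add, hu, apply_algebraMap φ h1]
    have hb : ‖φ (x + u)‖ ≤ ‖x + u‖ := by
      calc ‖φ (x + u)‖ ≤ ‖φ‖ * ‖x + u‖ := φ.le_opNorm _
        _ ≤ 1 * ‖x + u‖ := mul_le_mul_of_nonneg_right hn (norm_nonneg _)
        _ = ‖x + u‖ := one_mul _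
    have hfin : ‖φ x + n * Complex.I‖ ^ 2 ≤ ‖x‖ ^ 2 + n ^ 2 := by
      rw [← happ]
      calc ‖φ (x + u)‖ ^ 2 ≤ ‖x + u‖ ^ 2 := pow_le_pow_left₀ (norm_nonneg _) hb 2
        _ ≤ ‖x‖ ^ 2 + n ^ 2 := hnorm
    rw [Complex.sq_norm, Complex.normSq_apply] at hfin
    simpa [Complex.add_re, Complex.add_im, sq] using hfin
  by_contra him
  set s := (φ x).im with hs
  have h2 : ∀ n : ℝ, 2 * n * s ≤ ‖x‖ ^ 2 := by
    intro n
    have := key n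
    nlinarith [sq_nonneg ((φ x).re), sq_nonneg s]
  have := h2 ((‖x‖ ^ 2 + 1) / (2 * s))
  have heq : 2 * ((‖x‖ ^ 2 + 1) / (2 * s)) * s = ‖x‖ ^ 2 + 1 := by
    field_simp
  rw [heq] at this
  linarith

lemma norm_le_of_le {x : A} {r : ℝ} (hr : 0 ≤ r) (hx : IsSelfAdjoint x)
    (h1 : x ≤ algebraMap ℝ A r) (h2 : -(algebraMap ℝ A r) ≤ x) : ‖x‖ ≤ r := by
  obtain h | h := subsingleton_or_nontrivial A
  · simp [Subsingleton.elim x 0, hr]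
  rcases CStarAlgebra.norm_or_neg_norm_mem_spectrum hx with h' | h'
  · exact (le_algebraMap_iff_spectrum_le hx).mp h1 ‖x‖ h'
  · have h2' : algebraMap ℝ A (-r) ≤ x := by simpa using h2
    have := (algebraMap_le_iff_le_spectrum hx).mp h2' (-‖x‖) h'
    linarith

lemma nonneg_of_norm_le_one (φ : A →L[ℂ] ℂ) (hn : ‖φ‖ ≤ 1) (h1 : φ 1 = 1) {a : A}
    (ha : 0 ≤ a) : 0 ≤ φ a := by
  have hsa : IsSelfAdjoint a := .of_nonneg ha
  have him : (φ a).im = 0 := im_eq_zero φ hn h1 hsa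
  set t := ‖a‖ / 2 with hts
  have ht : 0 ≤ t := by positivity
  have htsa : IsSelfAdjoint (algebraMap ℝ A t) := IsSelfAdjoint.algebraMap A (IsSelfAdjoint.all t)
  have hsub : ‖a - algebraMap ℝ A t‖ ≤ t := by
    apply norm_le_of_le ht (hsa.sub htsa)
    · rw [sub_le_iff_le_add, ← map_add]
      have hteq : t + t = ‖a‖ := by rw [hts]; ring
      rw [hteq]
      exact hsa.le_algebraMap_norm_self
    · have := sub_le_sub_right ha (algebraMap ℝ A t)
      simpa using this
  have happ : φ (a - algebraMap ℝ A t) = φ a - t := by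
    rw [map_sub, IsScalarTower.algebraMap_apply ℝ ℂ A, apply_algebraMap φ h1]
    norm_num
  have habs : ‖φ a - (t : ℂ)‖ ≤ t := by
    rw [← happ]
    calc ‖φ (a - algebraMap ℝ A t)‖ ≤ ‖φ‖ * ‖a - algebraMap ℝ A t‖ := φ.le_opNorm _
      _ ≤ 1 * t := mul_le_mul hn hsub (norm_nonneg _) zero_le_one
      _ = t := one_mul t
  have hre : 0 ≤ (φ a).re := by
    have h3 : |(φ a).re - t| ≤ t := by
      have h4 := Complex.abs_re_le_norm (φ a - t)
      rw [Complex.sub_re, Complex.ofReal_re] at h4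
      calc |(φ a).re - t| ≤ ‖φ a - (t : ℂ)‖ := h4
        _ = ‖φ a - (t : ℂ)‖ := rfl
        _ ≤ t := habs
    have := abs_le.mp h3
    linarith [this.1]
  rw [Complex.le_def]
  simp [hre, him]

lemma exists_state [Nontrivial A] {c : A} (hc : IsSelfAdjoint c)
    (h1 : (1 : ℂ) ∈ spectrum ℂ c) :
    ∃ φ : A →L[ℂ] ℂ, ‖φ‖ = 1 ∧ φ 1 = 1 ∧ φ c = 1 := by
  have hnormal : IsStarNormal c := hc.isStarNormal
  set B := StarAlgebra.elemental ℂ c with hB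
  obtain ⟨χ, hχ⟩ := (StarAlgebra.elemental.bijective_characterSpaceToSpectrum c).2 ⟨1, h1⟩
  have hχc : χ ⟨c, StarAlgebra.elemental.self_mem ℂ c⟩ = 1 := by
    have := congrArg Subtype.val hχ
    simpa [StarAlgebra.elemental.characterSpaceToSpectrum] using this
  have hB1 : ((1 : B) : A) = 1 := rfl
  have hBnt : Nontrivial B := by
    refine nontrivial_of_ne 1 0 fun h => ?_
    have : ((1 : B) : A) = ((0 : B) : A) := by rw [h]
    simp [hB1] at this
  let ψ : B →L[ℂ] ℂ := WeakDual.toStrongDual (χ : WeakDual ℂ B)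
  have hψ_apply : ∀ x : B, ψ x = χ x := fun _ => rfl
  have hψ1 : ψ 1 = 1 := by rw [hψ_apply]; exact map_one χ
  have hψ_le : ‖ψ‖ ≤ 1 := by
    refine ContinuousLinearMap.opNorm_le_bound _ zero_le_one fun x => ?_
    rw [one_mul, hψ_apply]
    exact spectrum.norm_le_norm_of_mem (AlgHom.apply_mem_spectrum (χ : B →⋆ₐ[ℂ] ℂ).toAlgHom x)
  have hψnorm : ‖ψ‖ = 1 := by
    refine le_antisymm hψ_le ?_
    have := ψ.le_opNorm 1
    rw [hψ1, norm_one, norm_one, mul_one] at this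
    exact this
  obtain ⟨g, hg, hgnorm⟩ :=
    exists_extension_norm_eq (Subalgebra.toSubmodule B.toSubalgebra) ψ
  refine ⟨g, by rw [hgnorm]; exact hψnorm, ?_, ?_⟩
  · have h3 := hg ⟨1, show (1 : A) ∈ B from one_mem B⟩
    have h2 : ψ (1 : B) = 1 := hψ1
    have h4 : g (1 : A) = ψ (1 : B) := h3
    rw [h4, h2]
  · have h3 := hg ⟨c, StarAlgebra.elemental.self_mem ℂ c⟩
    have h2 : ψ (⟨c, StarAlgebra.elemental.self_mem ℂ c⟩ : B) = 1 := by
      rw [hψ_apply]; exact hχc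
    have h4 : g c = ψ (⟨c, StarAlgebra.elemental.self_mem ℂ c⟩ : B) := h3
    rw [h4, h2]

noncomputable instance : LocallyConvexSpace ℝ (WeakDual ℂ A) :=
  WeakBilin.locallyConvexSpace (B := ContinuousLinearMap.coeLM ℂ)

lemma isClosed_nonneg : IsClosed {z : ℂ | 0 ≤ z} := by
  have h : {z : ℂ | 0 ≤ z} = Complex.re ⁻¹' Set.Ici 0 ∩ Complex.im ⁻¹' {0} := by
    ext z; simp [Complex.le_def, eq_comm]
  rw [h]
  exact (isClosed_Ici.preimage Complex.continuous_re).inter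
    (isClosed_singleton.preimage Complex.continuous_im)

lemma complex_eq_one_of_convex {z w : ℂ} {r s : ℝ} (hz : ‖z‖ ≤ 1) (hw : ‖w‖ ≤ 1)
    (hr : 0 < r) (hs : 0 < s) (hrs : r + s = 1) (h : r • z + s • w = 1) :
    z = 1 ∧ w = 1 := by
  have hre : r * z.re + s * w.re = 1 := by
    have := congrArg Complex.re h
    simpa [Complex.real_smul, Complex.add_re, Complex.mul_re] using this
  have hzre : z.re ≤ 1 := (Complex.re_le_norm z).trans hz
  have hwre : w.re ≤ 1 := (Complex.re_le_norm w).trans hw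
  have hz1 : z.re = 1 := by nlinarith
  have hw1 : w.re = 1 := by nlinarith
  have hzn : Complex.normSq z ≤ 1 := by
    rw [← Complex.sq_norm]
    nlinarith [norm_nonneg z]
  have hwn : Complex.normSq w ≤ 1 := by
    rw [← Complex.sq_norm]
    nlinarith [norm_nonneg w]
  rw [Complex.normSq_apply, hz1] at hzn
  rw [Complex.normSq_apply, hw1] at hwn
  have hzim : z.im = 0 := by
    have h5 : z.im * z.im ≤ 0 := by linarith
    have h6 := mul_self_nonneg z.im
    exact mul_self_eq_zero.mp (le_antisymm h5 h6)
  have hwim : w.im = 0 := by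
    have h5 : w.im * w.im ≤ 0 := by linarith
    have h6 := mul_self_nonneg w.im
    exact mul_self_eq_zero.mp (le_antisymm h5 h6)
  constructor
  · exact Complex.ext (by rw [hz1, Complex.one_re]) (by rw [hzim, Complex.one_im])
  · exact Complex.ext (by rw [hw1, Complex.one_re]) (by rw [hwim, Complex.one_im])

set_option maxHeartbeats 2000000 in
lemma exists_pure_state [Nontrivial A] {c : A} (hc : IsSelfAdjoint c) (hc1 : ‖c‖ ≤ 1)
    (h1 : (1 : ℂ) ∈ spectrum ℂ c) :
    ∃ ω : A →L[ℂ] ℂ, IsPureState ω ∧ ω c = 1 := by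
  classical
  set F : Set (WeakDual ℂ A) :=
    {φ | ‖WeakDual.toStrongDual φ‖ ≤ 1 ∧ (∀ a : A, 0 ≤ a → 0 ≤ φ a) ∧ φ c = 1} with hF
  -- members of F are states
  have hstate : ∀ φ : WeakDual ℂ A, φ ∈ F → IsState (WeakDual.toStrongDual φ) := by
    rintro φ ⟨hn, hpos, hc'⟩
    refine ⟨hpos, le_antisymm hn ?_⟩
    have h0 : (1 : ℝ) = ‖φ c‖ := by rw [hc']; simp
    have := (WeakDual.toStrongDual φ).le_opNorm c
    have h2 : ‖φ c‖ ≤ ‖WeakDual.toStrongDual φ‖ * ‖c‖ := this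
    nlinarith [norm_nonneg (WeakDual.toStrongDual φ)]
  -- F is closed
  have hclosed : IsClosed F := by
    have hF' : F = (WeakDual.toStrongDual ⁻¹' Metric.closedBall 0 1) ∩
        ((⋂ a : A, {φ : WeakDual ℂ A | 0 ≤ a → 0 ≤ φ a}) ∩
          ((fun φ : WeakDual ℂ A => φ c) ⁻¹' {1})) := by
      ext φ
      simp [hF, Set.mem_iInter, mem_closedBall_zero_iff, and_assoc]
    rw [hF']
    refine (WeakDual.isClosed_closedBall 0 1).inter (IsClosed.inter ?_ ?_)
    · refine isClosed_iInter fun a => ?_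
      by_cases ha : 0 ≤ a
      · have : {φ : WeakDual ℂ A | 0 ≤ a → 0 ≤ φ a} =
            (fun φ : WeakDual ℂ A => φ a) ⁻¹' {z | 0 ≤ z} := by
          ext φ; simp [ha]
        rw [this]
        exact isClosed_nonneg.preimage (WeakDual.eval_continuous a)
      · have : {φ : WeakDual ℂ A | 0 ≤ a → 0 ≤ φ a} = Set.univ := by
          ext φ; simp [ha]
        rw [this]; exact isClosed_univ
    · exact isClosed_singleton.preimage (WeakDual.eval_continuous c)
  -- F is compact
  have hcompact : IsCompact F := by
    refine (WeakDual.isCompact_closedBall (𝕜 := ℂ) (E := A) 0 1).of_isClosed_subset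
      hclosed ?_
    intro φ hφ
    simpa [mem_closedBall_zero_iff] using hφ.1
  -- F is nonempty
  have hne : F.Nonempty := by
    obtain ⟨φ, hφn, hφ1, hφc⟩ := exists_state hc h1
    refine ⟨WeakDual.toStrongDual.symm φ, ?_, ?_, ?_⟩
    · show ‖φ‖ ≤ 1; rw [hφn]
    · intro a ha
      exact nonneg_of_norm_le_one φ hφn.le hφ1 ha
    · exact hφc
  -- F is convex
  have hconv : Convex ℝ F := by
    rintro φ ⟨hφn, hφp, hφc⟩ ψ ⟨hψn, hψp, hψc⟩ r s hr hs hrs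
    refine ⟨?_, ?_, ?_⟩
    · show ‖r • WeakDual.toStrongDual φ + s • WeakDual.toStrongDual ψ‖ ≤ 1
      calc ‖r • WeakDual.toStrongDual φ + s • WeakDual.toStrongDual ψ‖
          ≤ ‖r • WeakDual.toStrongDual φ‖ + ‖s • WeakDual.toStrongDual ψ‖ := norm_add_le _ _
        _ = |r| * ‖WeakDual.toStrongDual φ‖ + |s| * ‖WeakDual.toStrongDual ψ‖ := by
            rw [norm_smul, norm_smul, Real.norm_eq_abs, Real.norm_eq_abs]
        _ ≤ r * 1 + s * 1 := by
            rw [abs_of_nonneg hr, abs_of_nonneg hs]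
            exact add_le_add (mul_le_mul_of_nonneg_left hφn hr)
              (mul_le_mul_of_nonneg_left hψn hs)
        _ = 1 := by rw [mul_one, mul_one, hrs]
    · intro a ha
      show 0 ≤ r • φ a + s • ψ a
      rw [Complex.real_smul, Complex.real_smul]
      have h0r : 0 ≤ (r : ℂ) := by exact_mod_cast hr
      have h0s : 0 ≤ (s : ℂ) := by exact_mod_cast hs
      exact add_nonneg (mul_nonneg h0r (hφp a ha)) (mul_nonneg h0s (hψp a ha))
    · show r • φ c + s • ψ c = 1
      rw [hφc, hψc, Complex.real_smul, Complex.real_smul, mul_one, mul_one,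
        ← Complex.ofReal_add, hrs, Complex.ofReal_one]
  -- Krein-Milman
  obtain ⟨ω, hωF, hωext⟩ := hcompact.extremePoints_nonempty hne
  refine ⟨WeakDual.toStrongDual ω, ⟨hstate ω hωF, ?_⟩, hωF.2.2⟩
  rintro φ hφ ψ hψ ⟨r, s, hr, hs, hrs, heq⟩
  -- both φ and ψ take value 1 at c
  have hφF : WeakDual.toStrongDual.symm φ ∈ F ∧ WeakDual.toStrongDual.symm ψ ∈ F := by
    have happc : r • φ c + s • ψ c = 1 := by
      have := congrArg (fun f : A →L[ℂ] ℂ => f c) heq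
      simpa using this.trans hωF.2.2
    have hφb : ‖φ c‖ ≤ 1 := by
      have := φ.le_opNorm c
      have h2 : ‖φ‖ = 1 := hφ.2
      nlinarith [norm_nonneg (φ c)]
    have hψb : ‖ψ c‖ ≤ 1 := by
      have := ψ.le_opNorm c
      have h2 : ‖ψ‖ = 1 := hψ.2
      nlinarith [norm_nonneg (ψ c)]
    obtain ⟨hφ1, hψ1⟩ := complex_eq_one_of_convex hφb hψb hr hs hrs happc
    exact ⟨⟨hφ.2.le, hφ.1, hφ1⟩, ⟨hψ.2.le, hψ.1, hψ1⟩⟩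
  have hseg : ω ∈ openSegment ℝ (WeakDual.toStrongDual.symm φ) (WeakDual.toStrongDual.symm ψ) :=
    ⟨r, s, hr, hs, hrs, heq⟩
  have he1 := hωext hφF.1 hφF.2 hseg
  exact congrArg WeakDual.toStrongDual he1

end NormSubPure

namespace NormSubPure

lemma state_values (ω : A →L[ℂ] ℂ) (hst : IsState ω) {x y : A} (hx : 0 ≤ x) (hy : 0 ≤ y)
    (hx1 : ‖x‖ ≤ 1) (heq : ω (x - y) = 1) : ω x = 1 ∧ ω y = 0 := by
  obtain ⟨hpos, hn⟩ := hst
  have hxx := hpos x hx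
  have hyy := hpos y hy
  have hxre : 0 ≤ (ω x).re ∧ (ω x).im = 0 := by
    rw [Complex.le_def] at hxx; simpa [eq_comm] using hxx
  have hyre : 0 ≤ (ω y).re ∧ (ω y).im = 0 := by
    rw [Complex.le_def] at hyy; simpa [eq_comm] using hyy
  have hxabs : ‖ω x‖ ≤ 1 := by
    have := ω.le_opNorm x
    rw [hn, one_mul] at this
    exact this.trans hx1
  have hxrle : (ω x).re ≤ 1 := (Complex.re_le_norm _).trans hxabs
  have hsubeq : ω x - ω y = 1 := by rw [← map_sub]; exact heq
  have hre : (ω x).re - (ω y).re = 1 := by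
    have := congrArg Complex.re hsubeq
    simpa using this
  have hxr : (ω x).re = 1 := by linarith [hyre.1]
  have hyr : (ω y).re = 0 := by linarith
  constructor
  · exact Complex.ext (by rw [hxr, Complex.one_re]) (by rw [hxre.2, Complex.one_im])
  · exact Complex.ext (by rw [hyr, Complex.zero_re]) (by rw [hyre.2, Complex.zero_im])

end NormSubPure

/-- For positive norm-one elements `a, b` of a unital C*-algebra, `‖a - b‖ = 1` iff
there is a pure state `ω` with `{ω a, ω b} = {0, 1}`. -/
theorem norm_sub_eq_one_iff_exists_pureState (a b : A)
    (ha : 0 ≤ a) (hb : 0 ≤ b) (ha1 : ‖a‖ = 1) (hb1 : ‖b‖ = 1) :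
    ‖a - b‖ = 1 ↔ ∃ ω : A →L[ℂ] ℂ, IsPureState ω ∧ ({ω a, ω b} : Set ℂ) = {0, 1} := by
  have hA : Nontrivial A := by
    refine nontrivial_of_ne a 0 fun h => ?_
    rw [h, norm_zero] at ha1
    exact one_ne_zero ha1.symm
  have hsa : IsSelfAdjoint a := .of_nonneg ha
  have hsb : IsSelfAdjoint b := .of_nonneg hb
  have hsc : IsSelfAdjoint (a - b) := hsa.sub hsb
  have hsc' : IsSelfAdjoint (b - a) := hsb.sub hsa
  have hle : ‖a - b‖ ≤ 1 := by
    apply NormSubPure.norm_le_of_le zero_le_one hsc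
    · calc a - b ≤ a := sub_le_self a hb
        _ ≤ algebraMap ℝ A ‖a‖ := hsa.le_algebraMap_norm_self
        _ = algebraMap ℝ A 1 := by rw [ha1]
    · have h5 : b - a ≤ algebraMap ℝ A 1 := by
        calc b - a ≤ b := sub_le_self b ha
          _ ≤ algebraMap ℝ A ‖b‖ := hsb.le_algebraMap_norm_self
          _ = algebraMap ℝ A 1 := by rw [hb1]
      have h6 := neg_le_neg h5
      simpa using h6
  constructor
  · intro hnorm
    rcases CStarAlgebra.norm_or_neg_norm_mem_spectrum hsc with h' | h'
    · rw [hnorm] at h'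
      have h1C : (1 : ℂ) ∈ spectrum ℂ (a - b) := by
        have := spectrum.algebraMap_mem ℂ h'
        simpa using this
      obtain ⟨ω, hω, hωc⟩ := NormSubPure.exists_pure_state hsc hle h1C
      obtain ⟨hωa, hωb⟩ := NormSubPure.state_values ω hω.1 ha hb ha1.le hωc
      refine ⟨ω, hω, ?_⟩
      rw [hωa, hωb]
      exact Set.pair_comm 1 0
    · rw [hnorm] at h'
      have h1R : (1 : ℝ) ∈ spectrum ℝ (b - a) := by
        rw [show b - a = -(a - b) by abel, ← spectrum.neg_eq]
        simpa using h'
      have h1C : (1 : ℂ) ∈ spectrum ℂ (b - a) := by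
        have := spectrum.algebraMap_mem ℂ h1R
        simpa using this
      have hle' : ‖b - a‖ ≤ 1 := by rw [norm_sub_rev]; exact hle
      obtain ⟨ω, hω, hωc⟩ := NormSubPure.exists_pure_state hsc' hle' h1C
      obtain ⟨hωb, hωa⟩ := NormSubPure.state_values ω hω.1 hb ha hb1.le hωc
      refine ⟨ω, hω, ?_⟩
      rw [hωa, hωb]
  · rintro ⟨ω, hω, hset⟩
    have hst : IsState ω := hω.1
    have hub : ‖ω (a - b)‖ ≤ ‖a - b‖ := by
      have := ω.le_opNorm (a - b)
      rwa [hst.2, one_mul] at this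
    have hma : ω a ∈ ({0, 1} : Set ℂ) := by
      rw [← hset]; exact Set.mem_insert _ _
    have h1m : (1 : ℂ) ∈ ({ω a, ω b} : Set ℂ) := by rw [hset]; simp
    have h0m : (0 : ℂ) ∈ ({ω a, ω b} : Set ℂ) := by rw [hset]; simp
    have hval : ‖ω (a - b)‖ = 1 := by
      rw [map_sub]
      rcases (by simpa using hma : ω a = 0 ∨ ω a = 1) with h0 | h1
      · have hb1' : ω b = 1 := by
          rcases (by simpa [eq_comm] using h1m : ω a = 1 ∨ ω b = 1) with h | h
          · rw [h0] at h; exact absurd h (by norm_num)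
          · exact h
        rw [h0, hb1']
        simp
      · have hb0' : ω b = 0 := by
          rcases (by simpa [eq_comm] using h0m : ω a = 0 ∨ ω b = 0) with h | h
          · rw [h1] at h; exact absurd h (by norm_num)
          · exact h
        rw [h1, hb0']
        simp
    refine le_antisymm hle ?_
    calc (1 : ℝ) = ‖ω (a - b)‖ := hval.symm
      _ ≤ ‖a - b‖ := hub
end

section
/- Let A be a unital C*-algebra and let p be a projection in A. Then p is central (i.e., commutes with every element of A) if and only if ‖p − q‖ = 1 for every projection q in A with q ≠ p. -/
variable {A : Type*} [CStarAlgebra A] [PartialOrder A] [StarOrderedRing A]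

private lemma proj_norm_le_one (e : A) (he : IsSelfAdjoint e)
    (he2 : IsIdempotentElem e) : ‖e‖ ≤ 1 := by
  have h1 : ‖e‖ * ‖e‖ = ‖e‖ := by
    rw [← CStarRing.norm_star_mul_self (x := e), he.star_eq, he2.eq]
  nlinarith [norm_nonneg e]

/-- A projection `p` in a unital C*-algebra is central iff it is at distance one
from every other projection. -/
theorem central_iff_norm_sub_proj_eq_one (p : A) (hp : IsSelfAdjoint p)
    (hp2 : IsIdempotentElem p) :
    (∀ x : A, p * x = x * p) ↔
      ∀ q : A, IsSelfAdjoint q → IsIdempotentElem q → q ≠ p → ‖p - q‖ = 1 := by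
  constructor
  · intro hc q hq hq2 hqp
    set a := p - q with ha_def
    have ha : IsSelfAdjoint a := hp.sub hq
    have hne : a ≠ 0 := sub_ne_zero.mpr hqp.symm
    have hpq : p * q = q * p := hc q
    have key : a * (a * a) = a := by
      have hpp : ∀ x : A, p * (p * x) = p * x := fun x => by rw [← mul_assoc, hp2.eq]
      have hqq : ∀ x : A, q * (q * x) = q * x := fun x => by rw [← mul_assoc, hq2.eq]
      have hqp' : ∀ x : A, q * (p * x) = p * (q * x) := fun x => by
        rw [← mul_assoc, ← hpq, mul_assoc]
      simp only [ha_def, mul_sub, sub_mul, mul_assoc, hpp, hqq, hqp', hp2.eq, hq2.eq,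
        mul_one, one_mul]
      simp only [← mul_assoc, hp2.eq, hq2.eq, ← hpq]
      abel_nf
    have h1 : ‖a * a‖ = ‖a‖ * ‖a‖ := by
      rw [← CStarRing.norm_star_mul_self (x := a), ha.star_eq]
    have h2 : ‖a * a‖ * ‖a * a‖ = ‖a * a‖ := by
      have haa : IsSelfAdjoint (a * a) := by
        rw [IsSelfAdjoint, star_mul, ha.star_eq]
      have : (a * a) * (a * a) = a * a := by
        calc (a * a) * (a * a) = a * (a * (a * a)) := by noncomm_ring
        _ = a * a := by rw [key]
      calc ‖a * a‖ * ‖a * a‖ = ‖star (a * a) * (a * a)‖ :=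
            (CStarRing.norm_star_mul_self (x := a * a)).symm
      _ = ‖a * a‖ := by rw [haa.star_eq, this]
    have hz : ‖a‖ ≠ 0 := norm_ne_zero_iff.mpr hne
    have hz2 : ‖a * a‖ ≠ 0 := by rw [h1]; exact mul_ne_zero hz hz
    have h3 : ‖a * a‖ = 1 := by
      have := h2.trans (mul_one ‖a * a‖).symm
      exact mul_left_cancel₀ hz2 this
    rw [h3] at h1
    rcases mul_self_eq_one_iff.mp h1.symm with h4 | h4
    · exact h4
    · exfalso; nlinarith [norm_nonneg a]
  · intro H
    rcases subsingleton_or_nontrivial A with hS | hN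
    · intro x; exact Subsingleton.elim _ _
    by_contra hcon
    push_neg at hcon
    obtain ⟨x, hx⟩ := hcon
    -- produce a nonzero corner element b = (1-p) * c * p
    have hb : ∃ c : A, (1 - p) * c * p ≠ 0 := by
      by_cases h1 : (1 - p) * x * p ≠ 0
      · exact ⟨x, h1⟩
      · push_neg at h1
        have h2 : p * x * (1 - p) ≠ 0 := by
          intro h2
          apply hx
          have e1 : x * p = p * (x * p) := by
            refine sub_eq_zero.mp ?_
            have := h1
            simp only [sub_mul, one_mul, mul_assoc] at this
            linear_combination (norm := abel) this
          have e2 : p * x = (p * x) * p := by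
            refine sub_eq_zero.mp ?_
            have := h2
            simp only [mul_sub, mul_one] at this
            linear_combination (norm := abel) this
          calc p * x = p * x * p := e2
          _ = x * p := by rw [mul_assoc, ← e1]
        refine ⟨star x, fun h3 => h2 ?_⟩
        have : star ((1 - p) * star x * p) = p * x * (1 - p) := by
          simp [star_mul, hp.star_eq, mul_assoc]
        rw [← this, h3, star_zero]
    obtain ⟨c, hc0⟩ := hb
    set b := (1 - p) * c * p with hb_def
    have hbn : ‖b‖ ≠ 0 := norm_ne_zero_iff.mpr hc0
    have hbpos : (0:ℝ) < ‖b‖ := lt_of_le_of_ne (norm_nonneg _) (Ne.symm hbn)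
    set a := (4 * ‖b‖)⁻¹ • b with ha_def
    have hna : ‖a‖ = 1/4 := by
      rw [ha_def, norm_smul, Real.norm_eq_abs, abs_of_pos (by positivity)]
      field_simp
    have hap : a * p = a := by
      rw [ha_def, smul_mul_assoc]
      congr 1
      rw [hb_def, mul_assoc ((1 - p) * c) p p, hp2.eq]
    have hpa : p * a = 0 := by
      rw [ha_def, mul_smul_comm, hb_def]
      have : p * ((1 - p) * c * p) = 0 := by
        rw [← mul_assoc, ← mul_assoc, mul_sub, mul_one, hp2.eq, sub_self, zero_mul, zero_mul]
      rw [this, smul_zero]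
    have hpas : p * star a = star a := by
      have h' := congrArg star hap
      rwa [star_mul, hp.star_eq] at h'
    have hasp : star a * p = 0 := by
      have := congrArg star hpa
      rwa [star_mul, hp.star_eq, star_zero] at this
    have ha2 : a * a = 0 := by
      calc a * a = a * p * a := by rw [hap]
      _ = a * (p * a) := mul_assoc a p a
      _ = 0 := by rw [hpa, mul_zero]
    have hsa2 : star a * star a = 0 := by
      have := congrArg star ha2
      rwa [star_mul, star_zero] at this
    set h : A := p + a + star a with hh_def
    have hsh : IsSelfAdjoint h := by
      rw [IsSelfAdjoint, hh_def]
      simp only [star_add, hp.star_eq, star_star]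
      abel
    have hsq : h * h = h + (a * star a + star a * a) := by
      rw [hh_def]
      simp only [add_mul, mul_add, hp2.eq, hpa, hap, hpas, hasp, ha2, hsa2]
      abel
    have hb8 : ‖h * h - h‖ ≤ 1/8 := by
      rw [hsq, add_sub_cancel_left]
      calc ‖a * star a + star a * a‖ ≤ ‖a * star a‖ + ‖star a * a‖ := norm_add_le _ _
      _ ≤ ‖a‖ * ‖star a‖ + ‖star a‖ * ‖a‖ := by
          gcongr <;> exact norm_mul_le _ _
      _ = 1/8 := by rw [norm_star, hna]; norm_num
    -- spectrum bound
    have hcfc : cfc (fun y : ℝ => y^2 - y) h = h * h - h := by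
      rw [cfc_sub (fun y : ℝ => y^2) (fun y : ℝ => y) h (by fun_prop) (by fun_prop),
        cfc_pow_id h 2 hsh, cfc_id' ℝ h hsh, sq]
    have hspec : ∀ y ∈ spectrum ℝ h, |y^2 - y| ≤ 1/8 := by
      intro y hy
      have hmem : y^2 - y ∈ spectrum ℝ (h * h - h) := by
        rw [← hcfc, cfc_map_spectrum (fun y : ℝ => y^2 - y) h hsh (by fun_prop)]
        exact ⟨y, hy, rfl⟩
      calc |y^2 - y| = ‖y^2 - y‖ := (Real.norm_eq_abs _).symm
      _ ≤ ‖h * h - h‖ := spectrum.norm_le_norm_of_mem hmem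
      _ ≤ 1/8 := hb8
    have hU : ∀ y ∈ spectrum ℝ h, y < 1/4 ∨ 3/4 < y := by
      intro y hy
      by_contra hcon2
      push_neg at hcon2
      obtain ⟨h1, h2⟩ := hcon2
      have := abs_le.mp (hspec y hy)
      nlinarith [this.1, this.2]
    set f : ℝ → ℝ := fun y => if y < 1/2 then 0 else 1 with hf_def
    have hcont : ContinuousOn f (spectrum ℝ h) := by
      intro y hy
      rcases hU y hy with hlt | hgt
      · have hev : ∀ᶠ z in nhds y, f z = 0 := by
          filter_upwards [Iio_mem_nhds (show y < 1/2 by linarith)] with z hz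
          simp only [hf_def]
          exact if_pos hz
        exact (Filter.EventuallyEq.continuousAt hev).continuousWithinAt
      · have hev : ∀ᶠ z in nhds y, f z = 1 := by
          filter_upwards [Ioi_mem_nhds (show 1/2 < y by linarith)] with z hz
          simp only [hf_def]
          exact if_neg (not_lt.mpr (le_of_lt hz))
        exact (Filter.EventuallyEq.continuousAt hev).continuousWithinAt
    set q : A := cfc f h with hq_def
    have hq1 : IsSelfAdjoint q := cfc_predicate f h
    have hq2 : IsIdempotentElem q := by
      rw [IsIdempotentElem, hq_def, ← cfc_mul f f h hcont hcont]
      refine cfc_congr fun y _ => ?_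
      simp only [hf_def]
      split <;> norm_num
    have hqh : ‖q - h‖ ≤ 1/6 := by
      have : q - h = cfc (fun y : ℝ => f y - y) h := by
        rw [cfc_sub f (fun y : ℝ => y) h hcont (by fun_prop), cfc_id' ℝ h hsh]
      rw [this]
      refine norm_cfc_le (by norm_num) fun y hy => ?_
      have habs := abs_le.mp (hspec y hy)
      rcases hU y hy with hlt | hgt
      · have : f y = 0 := by
          simp only [hf_def]; exact if_pos (by linarith)
        rw [this, zero_sub, Real.norm_eq_abs, abs_neg, abs_le]
        constructor <;> nlinarith [habs.1, habs.2]
      · have : f y = 1 := by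
          simp only [hf_def]; exact if_neg (by linarith)
        rw [this, Real.norm_eq_abs, abs_le]
        constructor <;> nlinarith [habs.1, habs.2]
    have hqp : q ≠ p := by
      intro he
      have hcorner : (1 - p) * (h - q) * p = a := by
        rw [he, hh_def]
        have : (p + a + star a - p) = a + star a := by abel
        have h2' : (a + star a) * p = a := by rw [add_mul, hap, hasp, add_zero]
        rw [this, mul_assoc, h2', sub_mul, one_mul, hpa, sub_zero]
      have hle : ‖a‖ ≤ 1/6 := by
        rw [← hcorner]
        calc ‖(1 - p) * (h - q) * p‖ ≤ ‖(1 - p) * (h - q)‖ * ‖p‖ := norm_mul_le _ _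
        _ ≤ ‖1 - p‖ * ‖h - q‖ * ‖p‖ := by gcongr; exact norm_mul_le _ _
        _ ≤ 1 * (1/6) * 1 := by
            have n1 : ‖1 - p‖ ≤ 1 :=
              proj_norm_le_one _ ((IsSelfAdjoint.one (R := A)).sub hp) hp2.one_sub
            have n2 : ‖h - q‖ ≤ 1/6 := by rw [norm_sub_rev]; exact hqh
            have n3 : ‖p‖ ≤ 1 := proj_norm_le_one _ hp hp2
            exact mul_le_mul (mul_le_mul n1 n2 (norm_nonneg _) (by norm_num)) n3
              (norm_nonneg _) (by norm_num)
        _ = 1/6 := by norm_num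
      rw [hna] at hle
      norm_num at hle
    have hdist := H q hq1 hq2 hqp
    have : ‖p - q‖ ≤ ‖p - h‖ + ‖h - q‖ := norm_sub_le_norm_sub_add_norm_sub p h q
    have hph : ‖p - h‖ ≤ 1/2 := by
      have : p - h = -(a + star a) := by rw [hh_def]; abel
      rw [this, norm_neg]
      calc ‖a + star a‖ ≤ ‖a‖ + ‖star a‖ := norm_add_le _ _
      _ = 1/2 := by rw [norm_star, hna]; norm_num
    have hhq : ‖h - q‖ ≤ 1/6 := by rw [norm_sub_rev]; exact hqh
    linarith
end

section
/- Let A be a unital C*-algebra and let a be a positive norm-one element of A such that the double sphere condition holds: the set of positive norm-one elements c with ‖c − b‖ = 1 for all positive norm-one b satisfying ‖b − a‖ = 1 equals exactly {a}. Then the spectrum of a is contained in {0, 1}, i.e., a is a projection. -/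
variable (A : Type*) [CStarAlgebra A] [PartialOrder A] [StarOrderedRing A]

/-- The positive unit sphere of a C*-algebra. -/
def posSphere : Set A := {x : A | 0 ≤ x ∧ ‖x‖ = 1}

variable {A}

/-- The unit sphere around a subset `S` of the positive unit sphere. -/
def Sph (S : Set A) : Set A := {x : A | x ∈ posSphere A ∧ ∀ s ∈ S, ‖x - s‖ = 1}

open scoped NNReal ENNReal

/-- helper: selfadjoint element between -1 and 1 has norm at most 1. -/
lemma aux_norm_le_one {x : A} (hsa : IsSelfAdjoint x) (h1 : -(1:A) ≤ x) (h2 : x ≤ 1) :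
    ‖x‖ ≤ 1 := by
  have hspec : ∀ t ∈ spectrum ℝ x, |t| ≤ 1 := by
    intro t ht
    have hle : ∀ t ∈ spectrum ℝ x, t ≤ 1 := by
      rw [← le_algebraMap_iff_spectrum_le (R := ℝ) (a := x) hsa]
      simpa using h2
    have hge : ∀ t ∈ spectrum ℝ x, -1 ≤ t := by
      rw [← algebraMap_le_iff_le_spectrum (R := ℝ) (a := x) hsa]
      simpa using h1
    exact abs_le.mpr ⟨hge t ht, hle t ht⟩
  have hrad : spectralRadius ℝ x ≤ 1 := by
    rw [spectralRadius]
    refine iSup₂_le fun t ht => ?_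
    have : ‖t‖₊ ≤ 1 := by
      rw [← NNReal.coe_le_coe, coe_nnnorm, Real.norm_eq_abs, NNReal.coe_one]
      exact hspec t ht
    exact_mod_cast this
  rw [← hsa.toReal_spectralRadius_eq_norm]
  calc (spectralRadius ℝ x).toReal ≤ (1 : ℝ≥0∞).toReal :=
        ENNReal.toReal_mono (by norm_num) hrad
    _ = 1 := by simp

lemma aux_pm_one_mem {x : A} [Nontrivial A] (hsa : IsSelfAdjoint x) (hx : ‖x‖ = 1) :
    (1:ℝ) ∈ spectrum ℝ x ∨ (-1:ℝ) ∈ spectrum ℝ x := by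
  have h0 : 0 ≤ x ^ 2 := by
    rw [sq]
    nth_rw 1 [← hsa.star_eq]
    exact star_mul_self_nonneg x
  have hn : ‖x ^ 2‖ = 1 := by
    rw [sq]
    nth_rw 1 [← hsa.star_eq]
    rw [CStarRing.norm_star_mul_self, hx, one_mul]
  have h1 : (1:ℝ) ∈ spectrum ℝ (x ^ 2) := by
    rw [← hn]
    exact CStarAlgebra.norm_mem_spectrum_of_nonneg h0
  have hmap : spectrum ℝ (x ^ 2) = (· ^ 2) '' spectrum ℝ x := by
    conv_lhs => rw [← cfc_id (R := ℝ) x hsa, ← cfc_pow _ 2 (ha := hsa)]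
    rw [cfc_map_spectrum ..]
    simp
  rw [hmap] at h1
  obtain ⟨t, ht, ht1⟩ := h1
  rcases mul_self_eq_one_iff.mp (by simpa [pow_two] using ht1) with h | h
  · exact Or.inl (h ▸ ht)
  · exact Or.inr (h ▸ ht)

/-- If a positive norm-one element `a` satisfies the double sphere condition
`Sph (Sph {a}) = {a}`, then `a` is a projection (its spectrum is contained in `{0, 1}`). -/
theorem isProjection_of_double_sphere (a : A) (ha : a ∈ posSphere A)
    (h : Sph (Sph ({a} : Set A)) = {a}) :
    spectrum ℂ a ⊆ {0, 1} ∧ IsIdempotentElem a := by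
  obtain ⟨ha0, ha1⟩ := ha
  have hane : a ≠ 0 := fun hh => by simp [hh] at ha1
  have : Nontrivial A := nontrivial_of_ne a 0 hane
  have hsa : IsSelfAdjoint a := .of_nonneg ha0
  have ha_le1 : a ≤ 1 := (CStarAlgebra.norm_le_one_iff_of_nonneg a ha0).mp ha1.le
  have hsq0 : 0 ≤ a ^ 2 := by
    rw [sq]; nth_rw 1 [← hsa.star_eq]; exact star_mul_self_nonneg a
  have hsqn : ‖a ^ 2‖ = 1 := by
    rw [sq]; nth_rw 1 [← hsa.star_eq]
    rw [CStarRing.norm_star_mul_self, ha1, one_mul]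
  have hsq_le : a ^ 2 ≤ a := by
    simpa using CStarAlgebra.pow_antitone ha0 ha_le1 (show 1 ≤ 2 by norm_num)
  have key : a ^ 2 ∈ Sph (Sph ({a} : Set A)) := by
    refine ⟨⟨hsq0, hsqn⟩, fun b hb => ?_⟩
    obtain ⟨⟨hb0, hb1⟩, hball⟩ := hb
    have hba : ‖b - a‖ = 1 := hball a rfl
    have hb_le1 : b ≤ 1 := (CStarAlgebra.norm_le_one_iff_of_nonneg b hb0).mp hb1.le
    have hsab : IsSelfAdjoint (b - a) := (IsSelfAdjoint.of_nonneg hb0).sub hsa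
    -- upper bound
    have hub : ‖a ^ 2 - b‖ ≤ 1 := by
      refine aux_norm_le_one ((IsSelfAdjoint.of_nonneg hsq0).sub (.of_nonneg hb0)) ?_ ?_
      · rw [neg_le, neg_sub]
        calc b - a ^ 2 ≤ b := by simpa using hsq0
          _ ≤ 1 := hb_le1
      · calc a ^ 2 - b ≤ a ^ 2 := by simpa using hb0
          _ ≤ 1 := hsq_le.trans ha_le1
    -- lower bound
    have hlb : (1:ℝ) ≤ ‖b - a ^ 2‖ := by
      rcases aux_pm_one_mem hsab hba with hmem | hmem
      · -- 1 ∈ σ(b - a); show 1 ∈ σ(b - a²)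
        rw [spectrum.mem_iff] at hmem
        have hmem' : (1:ℝ) ∈ spectrum ℝ (b - a ^ 2) := by
          rw [spectrum.mem_iff]
          intro hu
          apply hmem
          have h0' : 0 ≤ algebraMap ℝ A 1 - (b - a ^ 2) := by
            simp only [map_one]
            have : (1:A) - (b - a ^ 2) = (1 - b) + a ^ 2 := by abel
            rw [this]
            exact add_nonneg (sub_nonneg.mpr hb_le1) hsq0
          refine CStarAlgebra.isUnit_of_le _ ?_ (IsStrictlyPositive.iff_of_unital.mpr ⟨h0', hu⟩)
          simp only [map_one]
          exact sub_le_sub_left (sub_le_sub_left hsq_le b) 1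
        calc (1:ℝ) = ‖(1:ℝ)‖ := by norm_num
          _ ≤ ‖b - a ^ 2‖ := spectrum.norm_le_norm_of_mem hmem'
      · -- -1 ∈ σ(b - a)
        rw [spectrum.mem_iff] at hmem
        have hmem' : (-1:ℝ) ∈ spectrum ℝ (b - a ^ 2) := by
          rw [spectrum.mem_iff]
          intro hu
          apply hmem
          -- rewrite both as negatives
          have e1 : algebraMap ℝ A (-1) - (b - a ^ 2) = -((1 - a ^ 2) + b) := by
            simp only [map_neg, map_one]; abel
          have e2 : algebraMap ℝ A (-1) - (b - a) = -((1 - a) + b) := by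
            simp only [map_neg, map_one]; abel
          rw [e1, IsUnit.neg_iff] at hu
          rw [e2, IsUnit.neg_iff]
          have h0' : 0 ≤ (1 - a ^ 2) + b :=
            add_nonneg (sub_nonneg.mpr (hsq_le.trans ha_le1)) hb0
          have hle2 : (1 - a ^ 2) + b ≤ ((1 - a) + b) + ((1 - a) + b) := by
            rw [← sub_nonneg]
            have : ((1 - a) + b) + ((1 - a) + b) - ((1 - a ^ 2) + b) = (1 - a) ^ 2 + b := by
              noncomm_ring
            rw [this]
            refine add_nonneg ?_ hb0
            rw [sq]
            nth_rw 1 [← (IsSelfAdjoint.of_nonneg (sub_nonneg.mpr ha_le1)).star_eq]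
            exact star_mul_self_nonneg (1 - a)
          have hu2 : IsUnit (((1 - a) + b) + ((1 - a) + b)) :=
            CStarAlgebra.isUnit_of_le _ hle2 (IsStrictlyPositive.iff_of_unital.mpr ⟨h0', hu⟩)
          have h2A : IsUnit (2 : A) := by
            have h2 : algebraMap ℝ A 2 = (2 : A) := map_ofNat _ 2
            exact h2 ▸ (isUnit_of_invertible (2:ℝ)).map (algebraMap ℝ A)
          obtain ⟨w, hw⟩ := h2A
          have hwu : (w : A) * ((1 - a) + b) = ((1 - a) + b) + ((1 - a) + b) := by
            rw [hw, two_mul]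
          rw [← hwu] at hu2
          exact (Units.isUnit_units_mul w _).mp hu2
        calc (1:ℝ) = ‖(-1:ℝ)‖ := by norm_num
          _ ≤ ‖b - a ^ 2‖ := spectrum.norm_le_norm_of_mem hmem'
    have hlb' : (1:ℝ) ≤ ‖a ^ 2 - b‖ := by rwa [norm_sub_rev] at hlb
    exact le_antisymm hub hlb'
  have hsq : a ^ 2 = a := by
    have := h ▸ key
    simpa using this
  have hid : IsIdempotentElem a := by
    rw [IsIdempotentElem, ← sq]; exact hsq
  refine ⟨?_, hid⟩
  intro lam hl
  have hpa : Polynomial.aeval a ((Polynomial.X) ^ 2 - Polynomial.X : Polynomial ℂ) = 0 := by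
    simp [map_sub, hsq]
  have hmap := spectrum.map_polynomial_aeval a ((Polynomial.X) ^ 2 - Polynomial.X : Polynomial ℂ)
  rw [hpa, spectrum.zero_eq] at hmap
  have hmem : lam ^ 2 - lam ∈ ({0} : Set ℂ) := by
    rw [hmap]
    exact ⟨lam, hl, by simp⟩
  have : lam * (lam - 1) = 0 := by
    have := Set.mem_singleton_iff.mp hmem
    ring_nf
    ring_nf at this
    linear_combination this
  rcases mul_eq_zero.mp this with h0 | h1
  · exact Or.inl h0
  · exact Or.inr (by rwa [sub_eq_zero] at h1)
end

section
/- Let p and q be projections in a unital C*-algebra A. Then p and q are orthogonal (pq = 0) if and only if ‖a − b‖ = 1 for all positive norm-one elements a, b ∈ A with pap = a and qbq = b. -/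
variable {A : Type*} [CStarAlgebra A] [PartialOrder A] [StarOrderedRing A]

private lemma norm_le_one_of_mem_Icc' {x : A} (hx : IsSelfAdjoint x)
    (h1 : -(1 : A) ≤ x) (h2 : x ≤ 1) : ‖x‖ ≤ 1 := by
  have hu : ∀ t ∈ spectrum ℝ x, t ≤ 1 := by
    refine (le_algebraMap_iff_spectrum_le (R := ℝ) (a := x) hx).mp ?_
    rwa [map_one]
  have hl : ∀ t ∈ spectrum ℝ x, (-1 : ℝ) ≤ t := by
    refine (algebraMap_le_iff_le_spectrum (R := ℝ) (a := x) hx).mp ?_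
    rwa [map_neg, map_one]
  calc ‖x‖ = ‖cfc (id : ℝ → ℝ) x‖ := by rw [cfc_id ℝ x]
    _ ≤ 1 := norm_cfc_le zero_le_one fun t ht => by
        rw [Real.norm_eq_abs, abs_le]; exact ⟨hl t ht, hu t ht⟩

private lemma proj_norm_le_one_s9 {p : A} (hp : IsSelfAdjoint p) (hp2 : IsIdempotentElem p) :
    ‖p‖ ≤ 1 := by
  have h : ‖p‖ * ‖p‖ = ‖p‖ := by
    rw [← CStarRing.norm_star_mul_self (x := p), hp.star_eq, hp2.eq]
  nlinarith [norm_nonneg p]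

private lemma sandwich {p : A} (hp2 : IsIdempotentElem p) (w : A) :
    p * (p * w * p) * p = p * w * p := by
  have h1 : p * (p * w * p) * p = p * p * w * (p * p) := by simp only [mul_assoc]
  rw [h1, hp2.eq]

set_option maxHeartbeats 1000000 in
private lemma aux_key (p q : A) (hp : IsSelfAdjoint p) (hp2 : IsIdempotentElem p)
    (hq : IsSelfAdjoint q) (hq2 : IsIdempotentElem q) (hpq : p * q ≠ 0)
    (hnorm : ‖(‖p * q * p‖⁻¹ • (p * q * p)) - (‖q * p * q‖⁻¹ • (q * p * q))‖ = 1)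
    (hspec : (1 : ℝ) ∈ spectrum ℝ
      ((‖p * q * p‖⁻¹ • (p * q * p)) - (‖q * p * q‖⁻¹ • (q * p * q)))) : False := by
  -- basic facts
  have hpn : ‖p‖ ≤ 1 := proj_norm_le_one_s9 hp hp2
  have hqn : ‖q‖ ≤ 1 := proj_norm_le_one_s9 hq hq2
  have hpqp_eq : star (q * p) * (q * p) = p * q * p := by
    rw [star_mul, hp.star_eq, hq.star_eq, ← mul_assoc, mul_assoc p q q, hq2.eq]
  have hqpq_eq : star (p * q) * (p * q) = q * p * q := by
    rw [star_mul, hp.star_eq, hq.star_eq, ← mul_assoc, mul_assoc q p p, hp2.eq]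
  have hpqp_pos : 0 ≤ p * q * p := hpqp_eq ▸ star_mul_self_nonneg (q * p)
  have hqpq_pos : 0 ≤ q * p * q := hqpq_eq ▸ star_mul_self_nonneg (p * q)
  have hqp : q * p ≠ 0 := by
    intro h0
    apply hpq
    have := congrArg star h0
    simpa [star_mul, hp.star_eq, hq.star_eq] using this
  have : Nontrivial A := nontrivial_of_ne (p * q) 0 hpq
  have hpqp_ne : p * q * p ≠ 0 := by
    intro h0
    apply hqp
    rw [← hpqp_eq] at h0
    exact CStarRing.star_mul_self_eq_zero_iff _ |>.mp h0
  have hn : (0 : ℝ) < ‖p * q * p‖ := norm_pos_iff.mpr hpqp_ne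
  have hpq_norm : ‖p * q‖ ≤ 1 := by
    calc ‖p * q‖ ≤ ‖p‖ * ‖q‖ := norm_mul_le _ _
      _ ≤ 1 * 1 := mul_le_mul hpn hqn (norm_nonneg q) zero_le_one
      _ = 1 := mul_one 1
  have hn1 : ‖p * q * p‖ ≤ 1 := by
    calc ‖p * q * p‖ ≤ ‖p * q‖ * ‖p‖ := norm_mul_le _ _
      _ ≤ 1 * 1 := mul_le_mul hpq_norm hpn (norm_nonneg p) zero_le_one
      _ = 1 := mul_one 1
  have hmn : ‖q * p * q‖ = ‖p * q * p‖ := by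
    have e1 : ‖q * p * q‖ = ‖p * q‖ * ‖p * q‖ := by
      rw [← hqpq_eq, CStarRing.norm_star_mul_self]
    have e2 : ‖p * q * p‖ = ‖q * p‖ * ‖q * p‖ := by
      rw [← hpqp_eq, CStarRing.norm_star_mul_self]
    have e3 : ‖q * p‖ = ‖p * q‖ := by
      rw [show q * p = star (p * q) by rw [star_mul, hp.star_eq, hq.star_eq], norm_star]
    rw [e1, e2, e3]
  rw [hmn] at hnorm hspec
  set n : ℝ := ‖p * q * p‖ with hn_def
  set a : A := n⁻¹ • (p * q * p) with ha_def
  set b : A := n⁻¹ • (q * p * q) with hb_def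
  -- facts about a, b
  have ha0 : 0 ≤ a := smul_nonneg (inv_nonneg.mpr hn.le) hpqp_pos
  have hb0 : 0 ≤ b := smul_nonneg (inv_nonneg.mpr hn.le) hqpq_pos
  have haSA : IsSelfAdjoint a := .of_nonneg ha0
  have hbSA : IsSelfAdjoint b := .of_nonneg hb0
  have hnorm_a : ‖a‖ = 1 := by
    rw [ha_def, norm_smul, norm_inv, norm_norm, ← hn_def, inv_mul_cancel₀ hn.ne']
  have ha1 : a ≤ 1 := (CStarAlgebra.norm_le_one_iff_of_nonneg a ha0).mp hnorm_a.le
  have hpa : p * a = a := by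
    rw [ha_def, mul_smul_comm]
    congr 1
    rw [← mul_assoc, ← mul_assoc, hp2.eq]
  have hqpq_smul : q * p * q = n • b := by
    rw [hb_def, smul_smul, mul_inv_cancel₀ hn.ne', one_smul]
  set x : A := a - b with hx_def
  have hxSA : IsSelfAdjoint x := haSA.sub hbSA
  have hx_norm : ‖x‖ = 1 := hnorm
  -- the bump function
  set δ : ℝ := n / 5 with hδ_def
  have hδ : 0 < δ := by positivity
  have hδ1 : δ ≤ 1 / 5 := by rw [hδ_def]; linarith
  set ε : ℝ := δ ^ 2 with hε_def
  have hε : 0 < ε := by positivity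
  set f : ℝ → ℝ := fun t => max 0 (min 1 ((t - (1 - ε)) / ε)) with hf_def
  have hf_cont : Continuous f := by
    apply continuous_const.max
    apply continuous_const.min
    fun_prop
  have hf0 : ∀ t, 0 ≤ f t := fun t => le_max_left 0 _
  have hf1 : ∀ t, f t ≤ 1 := fun t => max_le zero_le_one (min_le_left _ _)
  have hfval1 : f 1 = 1 := by
    have h' : (1 - (1 - ε)) / ε = 1 := by field_simp; ring
    rw [hf_def]
    simp only [h']
    norm_num
  have hfsmall : ∀ t ≤ 1 - ε, f t = 0 := by
    intro t ht
    have h' : (t - (1 - ε)) / ε ≤ 0 :=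
      div_nonpos_iff.mpr (Or.inr ⟨by linarith, hε.le⟩)
    exact max_eq_left ((min_le_right _ _).trans h')
  set e : A := cfc f x with he_def
  have he0 : 0 ≤ e := cfc_nonneg fun t _ => hf0 t
  have heSA : IsSelfAdjoint e := .of_nonneg he0
  have he_star : star e = e := heSA.star_eq
  have he_norm_le : ‖e‖ ≤ 1 := norm_cfc_le zero_le_one fun t _ => by
    rw [Real.norm_eq_abs, abs_of_nonneg (hf0 t)]; exact hf1 t
  have he_norm : ‖e‖ = 1 := by
    refine le_antisymm he_norm_le ?_
    have := norm_apply_le_norm_cfc f x hspec hf_cont.continuousOn hxSA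
    rwa [hfval1, norm_one] at this
  have hσ : ∀ t ∈ spectrum ℝ x, |t| ≤ 1 := by
    intro t ht
    have := spectrum.norm_le_norm_of_mem ht
    rwa [Real.norm_eq_abs, hx_norm] at this
  -- ‖x * e - e‖ ≤ ε
  have hxe : ‖x * e - e‖ ≤ ε := by
    have hft : Continuous fun t : ℝ => t * f t := continuous_id.mul hf_cont
    have h1 : cfc (fun t => t * f t - f t) x
        = cfc (fun t => t * f t) x - cfc f x :=
      cfc_sub _ _ x hft.continuousOn hf_cont.continuousOn
    have h2 : cfc (fun t => t * f t) x = cfc (fun t : ℝ => t) x * cfc f x :=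
      cfc_mul _ _ x continuous_id.continuousOn hf_cont.continuousOn
    have hcalc : x * e - e = cfc (fun t => t * f t - f t) x := by
      rw [h1, h2, cfc_id' ℝ x, he_def]
    rw [hcalc]
    apply norm_cfc_le hε.le
    intro t ht
    rw [Real.norm_eq_abs]
    have h3 : t * f t - f t = (t - 1) * f t := by ring
    rw [h3, abs_mul]
    rcases le_or_gt t (1 - ε) with hc | hc
    · rw [hfsmall t hc]
      simp [hε.le]
    · have ht1 : t ≤ 1 := by
        have := hσ t ht
        rw [abs_le] at this
        exact this.2
      have habs : |t - 1| ≤ ε := by rw [abs_le]; constructor <;> linarith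
      calc |t - 1| * |f t| ≤ ε * 1 := by
            apply mul_le_mul habs _ (abs_nonneg _) hε.le
            rw [abs_of_nonneg (hf0 t)]
            exact hf1 t
        _ = ε := mul_one ε
  -- e (1 - x) e is small
  have hx_le_one : x ≤ 1 := by
    have := IsSelfAdjoint.le_algebraMap_norm_self (a := x) hxSA
    rwa [hx_norm, map_one] at this
  have hconj : ‖e * ((1 : A) - x) * e‖ ≤ ε := by
    calc ‖e * ((1 : A) - x) * e‖ = ‖e * (((1 : A) - x) * e)‖ := by rw [mul_assoc]
      _ ≤ ‖e‖ * ‖((1 : A) - x) * e‖ := norm_mul_le _ _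
      _ = ‖e‖ * ‖e - x * e‖ := by rw [sub_mul, one_mul]
      _ ≤ 1 * ε := by
          apply mul_le_mul he_norm_le _ (norm_nonneg _) zero_le_one
          rw [norm_sub_rev]; exact hxe
      _ = ε := one_mul ε
  have hsplit : e * ((1 : A) - x) * e = e * ((1 : A) - a) * e + e * b * e := by
    rw [show (1 : A) - x = ((1 : A) - a) + b from by rw [hx_def]; abel, mul_add, add_mul]
  have heae0 : 0 ≤ e * ((1 : A) - a) * e := by
    have := star_left_conjugate_nonneg (sub_nonneg.mpr ha1) e
    rwa [he_star] at this
  have hebe0 : 0 ≤ e * b * e := by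
    have := star_left_conjugate_nonneg hb0 e
    rwa [he_star] at this
  have hebe : ‖e * b * e‖ ≤ ε := by
    refine le_trans (CStarAlgebra.norm_le_norm_of_nonneg_of_le hebe0 ?_) hconj
    rw [hsplit]
    exact le_add_of_nonneg_left heae0
  have heae : ‖e * ((1 : A) - a) * e‖ ≤ ε := by
    refine le_trans (CStarAlgebra.norm_le_norm_of_nonneg_of_le heae0 ?_) hconj
    rw [hsplit]
    exact le_add_of_nonneg_right hebe0
  -- ‖p q e‖ ≤ δ
  have hpqe : ‖p * q * e‖ ≤ δ := by
    have hstar : star (p * q * e) * (p * q * e) = e * (q * p * q) * e := by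
      rw [star_mul, star_mul, he_star, hq.star_eq, hp.star_eq]
      simp only [mul_assoc]
      rw [← mul_assoc p p, hp2.eq]
    have hs : ‖p * q * e‖ * ‖p * q * e‖ = n * ‖e * b * e‖ := by
      rw [← CStarRing.norm_star_mul_self, hstar, hqpq_smul, mul_smul_comm, smul_mul_assoc,
        norm_smul, Real.norm_eq_abs, abs_of_nonneg hn.le]
    have : ‖p * q * e‖ * ‖p * q * e‖ ≤ δ ^ 2 := by
      rw [hs, ← hε_def]
      calc n * ‖e * b * e‖ ≤ 1 * ε := by
            apply mul_le_mul hn1 hebe (norm_nonneg _) zero_le_one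
        _ = ε := one_mul ε
    nlinarith [norm_nonneg (p * q * e)]
  -- ‖(1 - a) e‖ ≤ δ
  have h1ae : ‖((1 : A) - a) * e‖ ≤ δ := by
    set y : A := (1 : A) - a with hy_def
    have hy0 : 0 ≤ y := sub_nonneg.mpr ha1
    have hySA : IsSelfAdjoint y := .of_nonneg hy0
    have hy1 : y ≤ 1 := by
      rw [hy_def]
      calc (1 : A) - a ≤ 1 - 0 := by gcongr
        _ = 1 := sub_zero 1
    have hyy : y * y ≤ y := by
      have := CStarAlgebra.pow_antitone hy0 hy1 (one_le_two : (1 : ℕ) ≤ 2)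
      simpa [sq, pow_one] using this
    have hstar : star (y * e) * (y * e) = e * (y * y) * e := by
      rw [star_mul, he_star, hySA.star_eq]
      simp only [mul_assoc]
    have hyy0 : 0 ≤ y * y := by
      have := star_mul_self_nonneg y
      rwa [hySA.star_eq] at this
    have hconj_yy : 0 ≤ e * (y * y) * e := by
      have := star_left_conjugate_nonneg hyy0 e
      rwa [he_star] at this
    have hle : e * (y * y) * e ≤ e * y * e := by
      have := star_left_conjugate_le_conjugate hyy e
      rwa [he_star] at this
    have hs : ‖y * e‖ * ‖y * e‖ ≤ ε := by
      rw [← CStarRing.norm_star_mul_self, hstar]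
      exact le_trans (CStarAlgebra.norm_le_norm_of_nonneg_of_le hconj_yy hle) heae
    rw [hε_def] at hs
    nlinarith [norm_nonneg (y * e)]
  have hae : ‖a * e - e‖ ≤ δ := by
    rw [norm_sub_rev, show e - a * e = ((1 : A) - a) * e from by rw [sub_mul, one_mul]]
    exact h1ae
  -- ‖p e - e‖ ≤ 2 δ
  have hpe : ‖p * e - e‖ ≤ 2 * δ := by
    have hid : p * e - e = p * (e - a * e) + (a * e - e) := by
      rw [mul_sub, ← mul_assoc, hpa]
      abel
    rw [hid]
    calc ‖p * (e - a * e) + (a * e - e)‖ ≤ ‖p * (e - a * e)‖ + ‖a * e - e‖ := norm_add_le _ _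
      _ ≤ 1 * δ + δ := by
          apply add_le_add _ hae
          calc ‖p * (e - a * e)‖ ≤ ‖p‖ * ‖e - a * e‖ := norm_mul_le _ _
            _ ≤ 1 * δ := by
                apply mul_le_mul hpn _ (norm_nonneg _) zero_le_one
                rw [norm_sub_rev]; exact hae
      _ = 2 * δ := by ring
  -- final contradiction
  have hpq_norm : ‖p * q‖ ≤ 1 := by
    calc ‖p * q‖ ≤ ‖p‖ * ‖q‖ := norm_mul_le _ _
      _ ≤ 1 * 1 := mul_le_mul hpn hqn (norm_nonneg q) zero_le_one
      _ = 1 := mul_one 1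
  have hid2 : (p * q * p) * e = (p * q) * (p * e - e) + p * q * e := by
    rw [mul_sub, mul_assoc]
    abel
  have h3δ : ‖(p * q * p) * e‖ ≤ 3 * δ := by
    rw [hid2]
    calc ‖(p * q) * (p * e - e) + p * q * e‖
        ≤ ‖(p * q) * (p * e - e)‖ + ‖p * q * e‖ := norm_add_le _ _
      _ ≤ 1 * (2 * δ) + δ := by
          apply add_le_add _ hpqe
          calc ‖(p * q) * (p * e - e)‖ ≤ ‖p * q‖ * ‖p * e - e‖ := norm_mul_le _ _
            _ ≤ 1 * (2 * δ) := mul_le_mul hpq_norm hpe (norm_nonneg _) zero_le_one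
      _ = 3 * δ := by ring
  have hae_up : ‖a * e‖ ≤ 3 / 5 := by
    have : a * e = n⁻¹ • ((p * q * p) * e) := by rw [ha_def, smul_mul_assoc]
    rw [this, norm_smul, norm_inv, Real.norm_eq_abs, abs_of_nonneg hn.le]
    calc n⁻¹ * ‖(p * q * p) * e‖ ≤ n⁻¹ * (3 * δ) := by
          apply mul_le_mul_of_nonneg_left h3δ (by positivity)
      _ = 3 / 5 := by
          rw [hδ_def]
          field_simp
  have hae_down : (4 : ℝ) / 5 ≤ ‖a * e‖ := by
    have h' : ‖e‖ - ‖a * e‖ ≤ ‖e - a * e‖ := norm_sub_norm_le _ _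
    have h'' : ‖e - a * e‖ ≤ δ := by rw [norm_sub_rev]; exact hae
    rw [he_norm] at h'
    linarith
  linarith

/-- Two projections `p, q` in a unital C*-algebra are orthogonal iff `‖a - b‖ = 1` for all
positive norm-one elements `a, b` with `p a p = a` and `q b q = b`. -/
theorem orthogonal_iff_dist_one (p q : A) (hp : IsSelfAdjoint p) (hp2 : IsIdempotentElem p)
    (hq : IsSelfAdjoint q) (hq2 : IsIdempotentElem q) :
    p * q = 0 ↔
      ∀ a b : A, 0 ≤ a → ‖a‖ = 1 → p * a * p = a →
        0 ≤ b → ‖b‖ = 1 → q * b * q = b → ‖a - b‖ = 1 := by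
  constructor
  · intro hpq a b ha0 ha1 hpa hb0 hb1 hqb
    have hqp : q * p = 0 := by
      have := congrArg star hpq
      simpa [star_mul, hp.star_eq, hq.star_eq] using this
    have haSA : IsSelfAdjoint a := .of_nonneg ha0
    have hbSA : IsSelfAdjoint b := .of_nonneg hb0
    have h1 : q * (p * (a * p)) = 0 := by rw [← mul_assoc, hqp, zero_mul]
    have hba : b * a = 0 := by
      conv_lhs => rw [← hqb, ← hpa]
      simp only [mul_assoc, h1, mul_zero]
    have hb_le : b ≤ 1 := (CStarAlgebra.norm_le_one_iff_of_nonneg b hb0).mp hb1.le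
    have ha_le : a ≤ 1 := (CStarAlgebra.norm_le_one_iff_of_nonneg a ha0).mp ha1.le
    have hub : ‖a - b‖ ≤ 1 := by
      apply norm_le_one_of_mem_Icc' (haSA.sub hbSA)
      · have h' : -(1 : A) ≤ -b := neg_le_neg hb_le
        have h'' : -b ≤ a - b := by
          have := add_le_add_right ha0 (-b)
          simpa [sub_eq_add_neg] using this
        exact h'.trans h''
      · calc a - b ≤ a - 0 := by gcongr
          _ = a := sub_zero a
          _ ≤ 1 := ha_le
    have hlb : 1 ≤ ‖a - b‖ := by
      have key : (a - b) * a = a * a := by rw [sub_mul, hba, sub_zero]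
      have h2 : ‖a * a‖ = 1 := by
        calc ‖a * a‖ = ‖star a * a‖ := by rw [haSA.star_eq]
          _ = ‖a‖ * ‖a‖ := CStarRing.norm_star_mul_self
          _ = 1 := by rw [ha1, mul_one]
      calc (1 : ℝ) = ‖a * a‖ := h2.symm
        _ = ‖(a - b) * a‖ := by rw [key]
        _ ≤ ‖a - b‖ * ‖a‖ := norm_mul_le _ _
        _ = ‖a - b‖ := by rw [ha1, mul_one]
    linarith
  · intro h
    by_contra hpq
    have hqp : q * p ≠ 0 := by
      intro h0
      apply hpq
      have := congrArg star h0
      simpa [star_mul, hp.star_eq, hq.star_eq] using this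
    have hp0 : p ≠ 0 := by rintro rfl; exact hpq (zero_mul q)
    have : Nontrivial A := nontrivial_of_ne p 0 hp0
    have hpqp_eq : star (q * p) * (q * p) = p * q * p := by
      rw [star_mul, hp.star_eq, hq.star_eq, ← mul_assoc, mul_assoc p q q, hq2.eq]
    have hqpq_eq : star (p * q) * (p * q) = q * p * q := by
      rw [star_mul, hp.star_eq, hq.star_eq, ← mul_assoc, mul_assoc q p p, hp2.eq]
    have hpqp_pos : 0 ≤ p * q * p := hpqp_eq ▸ star_mul_self_nonneg (q * p)
    have hqpq_pos : 0 ≤ q * p * q := hqpq_eq ▸ star_mul_self_nonneg (p * q)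
    have hpqp_ne : p * q * p ≠ 0 := by
      intro h0
      apply hqp
      rw [← hpqp_eq] at h0
      exact CStarRing.star_mul_self_eq_zero_iff _ |>.mp h0
    have hqpq_ne : q * p * q ≠ 0 := by
      intro h0
      apply hpq
      rw [← hqpq_eq] at h0
      exact CStarRing.star_mul_self_eq_zero_iff _ |>.mp h0
    have hn : (0 : ℝ) < ‖p * q * p‖ := norm_pos_iff.mpr hpqp_ne
    have hm : (0 : ℝ) < ‖q * p * q‖ := norm_pos_iff.mpr hqpq_ne
    have ha0 : 0 ≤ ‖p * q * p‖⁻¹ • (p * q * p) :=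
      smul_nonneg (inv_nonneg.mpr hn.le) hpqp_pos
    have hb0 : 0 ≤ ‖q * p * q‖⁻¹ • (q * p * q) :=
      smul_nonneg (inv_nonneg.mpr hm.le) hqpq_pos
    have ha1 : ‖(‖p * q * p‖⁻¹ • (p * q * p))‖ = 1 := by
      rw [norm_smul, norm_inv, norm_norm, inv_mul_cancel₀ hn.ne']
    have hb1 : ‖(‖q * p * q‖⁻¹ • (q * p * q))‖ = 1 := by
      rw [norm_smul, norm_inv, norm_norm, inv_mul_cancel₀ hm.ne']
    have hpap : p * (‖p * q * p‖⁻¹ • (p * q * p)) * p = ‖p * q * p‖⁻¹ • (p * q * p) := by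
      rw [mul_smul_comm, smul_mul_assoc]
      congr 1
      exact sandwich hp2 q
    have hqbq : q * (‖q * p * q‖⁻¹ • (q * p * q)) * q = ‖q * p * q‖⁻¹ • (q * p * q) := by
      rw [mul_smul_comm, smul_mul_assoc]
      congr 1
      exact sandwich hq2 p
    have hd : ‖(‖p * q * p‖⁻¹ • (p * q * p)) - (‖q * p * q‖⁻¹ • (q * p * q))‖ = 1 :=
      h _ _ ha0 ha1 hpap hb0 hb1 hqbq
    have hxSA : IsSelfAdjoint
        ((‖p * q * p‖⁻¹ • (p * q * p)) - (‖q * p * q‖⁻¹ • (q * p * q))) :=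
      (IsSelfAdjoint.of_nonneg ha0).sub (IsSelfAdjoint.of_nonneg hb0)
    have hsp := CStarAlgebra.norm_or_neg_norm_mem_spectrum hxSA
    rw [hd] at hsp
    rcases hsp with hsp | hsp
    · exact aux_key p q hp hp2 hq hq2 hpq hd hsp
    · have h1' : (1 : ℝ) ∈ -spectrum ℝ
          ((‖p * q * p‖⁻¹ • (p * q * p)) - (‖q * p * q‖⁻¹ • (q * p * q))) := by
        rw [Set.mem_neg]; simpa using hsp
      rw [spectrum.neg_eq, neg_sub] at h1'
      have hd' : ‖(‖q * p * q‖⁻¹ • (q * p * q)) - (‖p * q * p‖⁻¹ • (p * q * p))‖ = 1 := by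
        rw [norm_sub_rev]; exact hd
      exact aux_key q p hq hq2 hp hp2 hqp hd' h1'
end

section
/- In a complex spin factor V, every projection is either 0, the unit 1, or a minimal projection of the form (1 + i b)/2 where b is an element of V with b̄ = b, ‖b‖ = 1, and ⟨1 | b⟩ = 0. -/
/-- A (complex) spin factor structure on a complex Hilbert space `V`:
a conjugation (conjugate-linear isometry of period 2) together with a distinguished
norm-one element `one` fixed by the conjugation. Here `⟨a|b⟩` of the literature
(linear in the first variable) corresponds to `inner b a` in Mathlib. -/
structure SpinFactor (V : Type*) [NormedAddCommGroup V] [InnerProductSpace ℂ V] where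
  conj : V → V
  conj_add : ∀ x y : V, conj (x + y) = conj x + conj y
  conj_smul : ∀ (c : ℂ) (x : V), conj (c • x) = (starRingEnd ℂ c) • conj x
  conj_conj : ∀ x : V, conj (conj x) = x
  conj_isometry : ∀ x : V, ‖conj x‖ = ‖x‖
  one : V
  norm_one : ‖one‖ = 1
  conj_one : conj one = one

namespace SpinFactor

variable {V : Type*} [NormedAddCommGroup V] [InnerProductSpace ℂ V] (S : SpinFactor V)

/-- The Jordan product `a ∘ b = ⟨a|1⟩b + ⟨b|1⟩a − ⟨a|b̄⟩1` of the spin factor. -/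
noncomputable def jmul (a b : V) : V :=
  (inner ℂ S.one a : ℂ) • b + (inner ℂ S.one b : ℂ) • a - (inner ℂ (S.conj b) a : ℂ) • S.one

/-- The involution `a* = 2⟨1|a⟩1 − ā` of the spin factor. -/
noncomputable def jstar (a : V) : V := (2 * (inner ℂ a S.one : ℂ)) • S.one - S.conj a

/-- The spin factor norm: `‖a‖² = ⟨a|a⟩ + (⟨a|a⟩² − |⟨a|ā⟩|²)^{1/2}`. -/
noncomputable def snorm (a : V) : ℝ :=
  Real.sqrt (‖a‖ ^ 2 + Real.sqrt ((‖a‖ ^ 2) ^ 2 - ‖(inner ℂ (S.conj a) a : ℂ)‖ ^ 2))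

/-- Projections of the spin factor: self-adjoint Jordan idempotents. -/
def IsProjection (p : V) : Prop := S.jmul p p = p ∧ S.jstar p = p

end SpinFactor

open SpinFactor

/-- In a complex spin factor (of dimension at least 3), every projection is `0`, the unit,
or a minimal projection `(1 + i b)/2` with `b` fixed by the conjugation, of norm one and
orthogonal to the unit. -/
theorem spinFactor_projection_classification
    {V : Type*} [NormedAddCommGroup V] [InnerProductSpace ℂ V] [CompleteSpace V]
    (hdim : 3 ≤ Module.rank ℂ V) (S : SpinFactor V) (p : V) (hp : S.IsProjection p) :
    p = 0 ∨ p = S.one ∨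
      ∃ b : V, S.conj b = b ∧ ‖b‖ = 1 ∧ (inner ℂ S.one b : ℂ) = 0 ∧
        p = (2 : ℂ)⁻¹ • (S.one + Complex.I • b) := by
  have conj_sub : ∀ x y : V, S.conj (x - y) = S.conj x - S.conj y := by
    intro x y
    have h := S.conj_add (x - y) y
    rw [sub_add_cancel] at h
    rw [eq_sub_iff_add_eq, ← h]
  obtain ⟨hj, hs⟩ := hp
  unfold SpinFactor.jmul at hj
  unfold SpinFactor.jstar at hs
  set c : ℂ := (inner ℂ S.one p : ℂ) with hc
  set N : ℂ := (inner ℂ p p : ℂ) with hN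
  have h1 : (inner ℂ S.one S.one : ℂ) = 1 := by
    rw [inner_self_eq_norm_sq_to_K, S.norm_one]; norm_num
  have hps : (inner ℂ p S.one : ℂ) = starRingEnd ℂ c := by
    rw [hc, inner_conj_symm]
  rw [hps, sub_eq_iff_eq_add] at hs
  -- conjugation of p
  have hcp : S.conj p = (2 * starRingEnd ℂ c) • S.one - p := by
    rw [hs]; abel
  have hcpp : (inner ℂ (S.conj p) p : ℂ) = 2 * c ^ 2 - N := by
    rw [hcp, inner_sub_left, inner_smul_left]
    simp only [map_mul, RingHomCompTriple.comp_apply, RingHom.id_apply,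
      Complex.conj_conj, map_ofNat]
    rw [← hc, ← hN]; ring
  rw [hcpp, sub_eq_iff_eq_add] at hj
  -- key linear relation
  have key : (2 * c - 1) • p = (2 * c ^ 2 - N) • S.one := by
    calc (2 * c - 1) • p = (c • p + c • p) - p := by module
    _ = (p + (2 * c ^ 2 - N) • S.one) - p := by rw [hj]
    _ = (2 * c ^ 2 - N) • S.one := by abel
  have hn : N = c := by
    have h := congrArg (fun x => (inner ℂ S.one x : ℂ)) key
    simp only [inner_smul_right, h1, mul_one, ← hc] at h
    linear_combination h
  rw [hn] at key
  by_cases h2c : 2 * c - 1 = 0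
  · -- minimal projection case
    right; right
    have hchalf : c = 1 / 2 := by linear_combination h2c / 2
    have hcs : starRingEnd ℂ c = 1 / 2 := by
      rw [hchalf, map_div₀, map_one, map_ofNat]
    have hconj : S.conj p = S.one - p := by
      rw [hcp, hcs]; module
    refine ⟨(-Complex.I) • ((2 : ℂ) • p - S.one), ?_, ?_, ?_, ?_⟩
    · rw [S.conj_smul, conj_sub, S.conj_smul, S.conj_one, hconj]
      simp only [map_neg, Complex.conj_I, map_ofNat, neg_neg]
      module
    · have hinner : (inner ℂ ((2 : ℂ) • p - S.one) ((2 : ℂ) • p - S.one) : ℂ) = 1 := by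
        rw [inner_sub_sub_self, inner_smul_left, inner_smul_right, inner_smul_left,
          inner_smul_right, h1, ← hc, ← hN, hps, hn, hchalf]
        simp only [map_ofNat, map_div₀, map_one]
        norm_num
      have hre : ‖(2 : ℂ) • p - S.one‖ ^ 2 = 1 := by
        rw [← inner_self_eq_norm_sq (𝕜 := ℂ), hinner]
        simp
      have hnr : ‖(2 : ℂ) • p - S.one‖ = 1 := by
        nlinarith [norm_nonneg ((2 : ℂ) • p - S.one)]
      rw [norm_smul]
      simp [hnr]
    · rw [inner_smul_right, inner_sub_right, inner_smul_right, h1, ← hc, hchalf]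
      ring
    · rw [smul_smul]
      have : Complex.I * -Complex.I = 1 := by
        simp [Complex.I_mul_I]
      rw [this, one_smul]
      module
  · -- p is a scalar multiple of one
    have hp1 : p = c • S.one := by
      have heq : (2 * c ^ 2 - c) = c * (2 * c - 1) := by ring
      rw [heq, mul_smul, smul_comm] at key
      exact smul_right_injective V h2c key
    -- c = conj c * c
    have habs : c = starRingEnd ℂ c * c := by
      have h : N = starRingEnd ℂ c * c := by
        rw [hN, hp1, inner_smul_left, inner_smul_right, h1, mul_one]
      rw [← h, hn]
    rcases mul_eq_zero.mp
        (by linear_combination habs : c * (1 - starRingEnd ℂ c) = 0) with h0 | h0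
    · left; rw [hp1, h0, zero_smul]
    · right; left
      have hc1 : c = 1 := by
        have h := congrArg (starRingEnd ℂ) (sub_eq_zero.mp h0)
        simpa using h.symm
      rw [hp1, hc1, one_smul]
end

section
/- In a complex spin factor V, if p = (1 + i b)/2 and q = (1 + i c)/2 are minimal projections (with b, c fixed by the conjugation, norm one, orthogonal to 1), then ‖p − q‖ = ½‖b − c‖ in the spin factor norm; consequently ‖p − q‖ = 1 if and only if c = −b, i.e., q = 1 − p. -/
open SpinFactor

/-- For minimal projections `p = (1 + i b)/2` and `q = (1 + i c)/2` of a complex spin factor,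
the spin-factor distance is `‖p − q‖ = ½‖b − c‖` (Hilbert norm); consequently `‖p − q‖ = 1`
iff `c = −b`, i.e. iff `q = 1 − p`. -/
theorem spinFactor_dist_minimal_projections
    {V : Type*} [NormedAddCommGroup V] [InnerProductSpace ℂ V] [CompleteSpace V]
    (S : SpinFactor V) (b c : V)
    (hb : S.conj b = b) (hc : S.conj c = c) (hb1 : ‖b‖ = 1) (hc1 : ‖c‖ = 1)
    (hbo : (inner ℂ S.one b : ℂ) = 0) (hco : (inner ℂ S.one c : ℂ) = 0)
    (p q : V) (hp : p = (2 : ℂ)⁻¹ • (S.one + Complex.I • b))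
    (hq : q = (2 : ℂ)⁻¹ • (S.one + Complex.I • c)) :
    S.snorm (p - q) = (1 / 2) * ‖b - c‖ ∧
      (S.snorm (p - q) = 1 ↔ c = -b) ∧ (S.snorm (p - q) = 1 ↔ q = S.one - p) := by

  have hne : ((2:ℂ)⁻¹ * Complex.I) ≠ 0 := by
    simp [Complex.I_ne_zero]
  have hd : p - q = ((2:ℂ)⁻¹ * Complex.I) • (b - c) := by
    rw [hp, hq]; module
  have hconjd : S.conj (b - c) = b - c := by
    have h := S.conj_add (b - c) c
    rw [sub_add_cancel, hb, hc] at h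
    have : S.conj (b - c) = b - c := by
      have := h.symm
      linear_combination (norm := abel) this
    exact this
  have hconj : S.conj (p - q) = (starRingEnd ℂ ((2:ℂ)⁻¹ * Complex.I)) • (b - c) := by
    rw [hd, S.conj_smul, hconjd]
  have hinner : (inner ℂ (S.conj (p - q)) (p - q) : ℂ) = -((‖b - c‖:ℂ)^2 / 4) := by
    have hdd : (inner ℂ (b - c) (b - c) : ℂ) = ((‖b - c‖ : ℝ) : ℂ)^2 := by
      exact_mod_cast inner_self_eq_norm_sq_to_K (b - c)
    rw [hconj, hd, inner_smul_left, inner_smul_right, hdd, Complex.conj_conj]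
    have hI : Complex.I^2 = -1 := Complex.I_sq
    linear_combination (norm := (push_cast; ring)) ((‖b - c‖:ℂ)^2/4) * hI
  have habs : ‖(inner ℂ (S.conj (p - q)) (p - q) : ℂ)‖ = ‖b - c‖^2 / 4 := by
    rw [hinner]
    rw [norm_neg]
    have : ((‖b - c‖:ℂ)^2 / 4) = (((‖b - c‖^2 / 4 : ℝ)):ℂ) := by push_cast; ring
    rw [this, Complex.norm_of_nonneg (by positivity)]
  have hnorm : ‖p - q‖ = ‖b - c‖ / 2 := by
    rw [hd, norm_smul]
    simp [Complex.norm_I]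
    ring
  have key : S.snorm (p - q) = (1 / 2) * ‖b - c‖ := by
    unfold SpinFactor.snorm
    rw [habs, hnorm]
    have h1 : (‖b - c‖ / 2)^2 = ‖b - c‖^2 / 4 := by ring
    rw [h1]
    rw [show (‖b - c‖^2/4)^2 - (‖b - c‖^2/4)^2 = 0 by ring, Real.sqrt_zero, add_zero]
    rw [show ‖b - c‖^2/4 = (‖b - c‖/2)^2 by ring, Real.sqrt_sq (by positivity)]
    ring
  have hcb : S.snorm (p - q) = 1 ↔ c = -b := by
    rw [key]
    constructor
    · intro h
      have hbc : ‖b - c‖ = 2 := by linarith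
      have hsq : ‖b - c‖^2 = 4 := by rw [hbc]; norm_num
      rw [@norm_sub_sq ℂ] at hsq
      have hre : (inner ℂ b c : ℂ).re = -1 := by
        rw [hb1, hc1] at hsq
        simp only [RCLike.re_to_complex] at hsq; nlinarith [hsq]
      have hz : ‖b + c‖^2 = 0 := by
        rw [@norm_add_sq ℂ, hb1, hc1]
        simp only [RCLike.re_to_complex]
        rw [hre]; norm_num
      have : b + c = 0 := by
        have := pow_eq_zero_iff (n := 2) (by norm_num) |>.mp hz
        exact norm_eq_zero.mp this
      exact eq_neg_of_add_eq_zero_right this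
    · intro h
      subst h
      rw [show b - -b = (2:ℂ) • b by module, norm_smul, hb1]
      simp
  refine ⟨key, hcb, hcb.trans ?_⟩
  constructor
  · intro h
    rw [hq, hp, h]; module
  · intro h
    rw [hq, hp] at h
    have h2 : ((2:ℂ)⁻¹ * Complex.I) • (c + b) = 0 := by
      linear_combination (norm := module) h
    rcases smul_eq_zero.mp h2 with h3 | h3
    · exact absurd h3 hne
    · exact eq_neg_of_add_eq_zero_left h3
end

section
/- There exist spin factors V₃ (dimension 3) and V₄ (dimension 4), which are not Jordan *-isomorphic, and an order isomorphism Θ between their projection lattices that preserves points at diametrical distance: ‖p − q‖ = 1 if and only if ‖Θ(p) − Θ(q)‖ = 1. -/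
open SpinFactor

/-- Positivity in a spin factor: squares of self-adjoint elements. -/
def SpinFactor.IsPos {V : Type*} [NormedAddCommGroup V] [InnerProductSpace ℂ V]
    (S : SpinFactor V) (a : V) : Prop :=
  ∃ b : V, S.jstar b = b ∧ S.jmul b b = a

-- ====== the concrete spin factor ======

noncomputable def Sp (m : ℕ) [NeZero m] : SpinFactor (EuclideanSpace ℂ (Fin m)) where
  conj x := WithLp.toLp 2 (fun i => starRingEnd ℂ (x i))
  conj_add x y := PiLp.ext fun i => by simp [PiLp.add_apply]
  conj_smul c x := PiLp.ext fun i => by simp [PiLp.smul_apply]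
  conj_conj x := PiLp.ext fun i => by simp
  conj_isometry x := by
    rw [EuclideanSpace.norm_eq, EuclideanSpace.norm_eq]
    congr 1
    refine Finset.sum_congr rfl fun i _ => ?_
    simp
  one := EuclideanSpace.single 0 1
  norm_one := by simp [EuclideanSpace.norm_single]
  conj_one := PiLp.ext fun i => by
    simp [EuclideanSpace.single_apply, apply_ite (starRingEnd ℂ)]

variable {m : ℕ} [NeZero m]

lemma Sp_conj_apply (x : EuclideanSpace ℂ (Fin m)) (i : Fin m) :
    (Sp m).conj x i = starRingEnd ℂ (x i) := rfl

lemma Sp_one_apply (i : Fin m) : (Sp m).one i = if i = 0 then 1 else 0 :=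
  EuclideanSpace.single_apply 0 1 i

lemma inner_one_left (x : EuclideanSpace ℂ (Fin m)) : (inner ℂ (Sp m).one x : ℂ) = x 0 := by
  simp [PiLp.inner_apply, RCLike.inner_apply, Sp_one_apply, apply_ite (starRingEnd ℂ),
    Finset.sum_ite_eq']

lemma inner_one_right (x : EuclideanSpace ℂ (Fin m)) :
    (inner ℂ x (Sp m).one : ℂ) = starRingEnd ℂ (x 0) := by
  simp [PiLp.inner_apply, RCLike.inner_apply, Sp_one_apply, Finset.sum_ite_eq']

lemma inner_conj_left (x y : EuclideanSpace ℂ (Fin m)) :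
    (inner ℂ ((Sp m).conj x) y : ℂ) = ∑ i, x i * y i := by
  simp [PiLp.inner_apply, RCLike.inner_apply, Sp_conj_apply, mul_comm]

lemma jmul_apply (a b : EuclideanSpace ℂ (Fin m)) (i : Fin m) :
    (Sp m).jmul a b i =
      a 0 * b i + b 0 * a i - (∑ j, b j * a j) * (if i = 0 then 1 else 0) := by
  simp [SpinFactor.jmul, PiLp.add_apply, PiLp.sub_apply, PiLp.smul_apply,
    inner_one_left, inner_conj_left, Sp_one_apply, Sp_conj_apply]

lemma jstar_apply (a : EuclideanSpace ℂ (Fin m)) (i : Fin m) :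
    (Sp m).jstar a i =
      2 * starRingEnd ℂ (a 0) * (if i = 0 then 1 else 0) - starRingEnd ℂ (a i) := by
  simp [SpinFactor.jstar, PiLp.sub_apply, PiLp.smul_apply, inner_one_right, Sp_conj_apply,
    Sp_one_apply, mul_assoc]

-- ====== special elements ======

noncomputable def shape (m : ℕ) [NeZero m] (c : ℝ) (t : Fin m → ℝ) : EuclideanSpace ℂ (Fin m) :=
  WithLp.toLp 2 (fun i => (if i = 0 then (c : ℂ) else 0) + (t i : ℂ) * Complex.I)

lemma shape_apply (c : ℝ) (t : Fin m → ℝ) (i : Fin m) :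
    shape m c t i = (if i = 0 then (c : ℂ) else 0) + (t i : ℂ) * Complex.I := rfl

lemma shape_sub (c c' : ℝ) (t t' : Fin m → ℝ) :
    shape m c t - shape m c' t' = shape m (c - c') (t - t') := by
  ext i
  rw [PiLp.sub_apply]
  simp only [shape_apply, Pi.sub_apply, Complex.ofReal_sub]
  by_cases h : i = 0 <;> simp [h] <;> ring

lemma shape_zero : shape m 0 0 = (0 : EuclideanSpace ℂ (Fin m)) := by
  ext i
  simp [shape_apply]

lemma one_eq_shape : (Sp m).one = shape m 1 0 := by
  ext i
  rw [Sp_one_apply, shape_apply]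
  simp

lemma norm_sq_coord (x y : ℝ) : ‖((x : ℂ) + (y : ℂ) * Complex.I)‖ ^ 2 = x ^ 2 + y ^ 2 := by
  rw [Complex.sq_norm, Complex.normSq_apply]
  simp [Complex.add_re, Complex.add_im]
  ring

lemma norm_sq_shape (c : ℝ) (t : Fin m → ℝ) :
    ‖shape m c t‖ ^ 2 = c ^ 2 + ∑ i, t i ^ 2 := by
  rw [EuclideanSpace.norm_eq, Real.sq_sqrt (by positivity)]
  have : ∀ i : Fin m, ‖shape m c t i‖ ^ 2 = (if i = 0 then c ^ 2 else 0) + t i ^ 2 := by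
    intro i
    rw [shape_apply]
    by_cases h : i = 0
    · rw [if_pos h, if_pos h, norm_sq_coord]
    · rw [if_neg h, if_neg h, zero_add]
      have h0 := norm_sq_coord 0 (t i)
      rw [Complex.ofReal_zero, zero_add] at h0
      rw [h0]
      ring
  rw [Finset.sum_congr rfl fun i _ => this i, Finset.sum_add_distrib,
    Finset.sum_ite_eq' Finset.univ (0 : Fin m) (fun _ => c ^ 2)]
  simp

lemma inner_conj_shape (c : ℝ) (t : Fin m → ℝ) (ht0 : t 0 = 0) :
    (inner ℂ ((Sp m).conj (shape m c t)) (shape m c t) : ℂ) =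
      ((c ^ 2 - ∑ i, t i ^ 2 : ℝ) : ℂ) := by
  rw [inner_conj_left]
  have : ∀ i : Fin m, shape m c t i * shape m c t i =
      (if i = 0 then ((c : ℂ) ^ 2 + 2 * c * t i * Complex.I) else 0) - (t i : ℂ) ^ 2 := by
    intro i
    rw [shape_apply]
    by_cases h : i = 0 <;> simp only [h, if_true, if_false, ite_true, ite_false]
    · ring_nf
      rw [Complex.I_sq]
      ring
    · ring_nf
      rw [Complex.I_sq]
      ring
  rw [Finset.sum_congr rfl fun i _ => this i, Finset.sum_sub_distrib,
    Finset.sum_ite_eq' Finset.univ (0 : Fin m) (fun i => (c : ℂ) ^ 2 + 2 * c * t i * Complex.I)]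
  push_cast
  simp [ht0]

lemma snorm_shape (c : ℝ) (t : Fin m → ℝ) (ht0 : t 0 = 0) :
    (Sp m).snorm (shape m c t) = |c| + Real.sqrt (∑ i, t i ^ 2) := by
  set T := ∑ i, t i ^ 2 with hT
  have hT0 : 0 ≤ T := Finset.sum_nonneg fun i _ => sq_nonneg _
  rw [SpinFactor.snorm, norm_sq_shape, inner_conj_shape c t ht0, Complex.norm_real, Real.norm_eq_abs,
    sq_abs]
  have h1 : (c ^ 2 + T) ^ 2 - (c ^ 2 - T) ^ 2 = (2 * |c|) ^ 2 * T := by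
    rw [mul_pow, sq_abs]
    ring
  rw [h1, Real.sqrt_mul (sq_nonneg _), Real.sqrt_sq_eq_abs, abs_of_nonneg (by positivity)]
  have h2 : c ^ 2 + T + 2 * |c| * Real.sqrt T = (|c| + Real.sqrt T) ^ 2 := by
    rw [add_sq, sq_abs, Real.sq_sqrt hT0]
    ring
  rw [h2, Real.sqrt_sq (by positivity)]

-- ====== classification of projections ======

lemma shape_im (c : ℝ) (t : Fin m → ℝ) (i : Fin m) : (shape m c t i).im = t i := by
  rw [shape_apply]
  by_cases h : i = 0 <;> simp [h]

lemma shape_injective (c : ℝ) {t s : Fin m → ℝ} (h : shape m c t = shape m c s) : t = s := by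
  funext i
  have := congrFun (congrArg WithLp.ofLp h) i
  calc t i = (shape m c t i).im := (shape_im c t i).symm
  _ = (shape m c s i).im := by rw [this]
  _ = s i := shape_im c s i

lemma pure_imag_eq {z : ℂ} (h : starRingEnd ℂ z = -z) : z = (z.im : ℂ) * Complex.I := by
  have hre : z.re = 0 := by
    have := congrArg Complex.re h
    simp at this
    linarith
  apply Complex.ext <;> simp [hre]

lemma isProjection_classify (p : EuclideanSpace ℂ (Fin m)) :
    (Sp m).IsProjection p ↔
      p = 0 ∨ p = (Sp m).one ∨
        ∃ t : Fin m → ℝ, t 0 = 0 ∧ ∑ i, t i ^ 2 = 1/4 ∧ p = shape m (1/2) t := by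
  constructor
  · rintro ⟨hm, hs⟩
    have hs' : ∀ i, 2 * starRingEnd ℂ (p 0) * (if i = 0 then 1 else 0) - starRingEnd ℂ (p i)
        = p i := fun i => by rw [← jstar_apply, hs]
    have hm' : ∀ i, p 0 * p i + p 0 * p i - (∑ j, p j * p j) * (if i = 0 then 1 else 0)
        = p i := fun i => by rw [← jmul_apply, hm]
    have hre : starRingEnd ℂ (p 0) = p 0 := by
      have := hs' 0
      simp at this
      linear_combination this
    have him : ∀ i, i ≠ 0 → starRingEnd ℂ (p i) = - p i := by
      intro i hi
      have := hs' i
      rw [if_neg hi] at this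
      linear_combination -this
    by_cases hB : ∀ i, i ≠ 0 → p i = 0
    · -- p is a multiple of e₀
      have hsum : ∑ j, p j * p j = p 0 * p 0 := by
        rw [Finset.sum_eq_single 0]
        · exact fun j _ hj => by rw [hB j hj]; ring
        · simp
      have h0 := hm' 0
      rw [hsum, if_pos rfl] at h0
      have : p 0 * (p 0 - 1) = 0 := by linear_combination h0
      rcases mul_eq_zero.mp this with h | h
      · left
        ext i
        by_cases hi : i = 0
        · rw [hi]; simpa using h
        · simpa using hB i hi
      · right; left
        ext i
        rw [Sp_one_apply]
        by_cases hi : i = 0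
        · rw [hi, if_pos rfl]
          linear_combination h
        · rw [if_neg hi]
          exact hB i hi
    · push_neg at hB
      obtain ⟨k, hk0, hkne⟩ := hB
      have hhalf : p 0 = 1/2 := by
        have := hm' k
        rw [if_neg hk0] at this
        have h2 : (2 * p 0 - 1) * p k = 0 := by linear_combination this
        rcases mul_eq_zero.mp h2 with h | h
        · linear_combination h / 2
        · exact absurd h hkne
      set t : Fin m → ℝ := fun i => if i = 0 then 0 else (p i).im with hts
      have ht0 : t 0 = 0 := by simp [hts]
      have hp : p = shape m (1/2) t := by
        ext i
        rw [shape_apply]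
        by_cases hi : i = 0
        · rw [hi, if_pos rfl, hts]
          simp [hhalf]
        · rw [if_neg hi, hts]
          simp only [hi, if_false, ite_false, zero_add]
          exact pure_imag_eq (him i hi)
      right; right
      refine ⟨t, ht0, ?_, hp⟩
      have h0 := hm' 0
      rw [if_pos rfl, hhalf] at h0
      have hsum0 : ∑ j, p j * p j = 0 := by linear_combination -h0
      have := inner_conj_shape (1/2) t ht0
      rw [inner_conj_left] at this
      rw [hp] at hsum0
      rw [hsum0] at this
      have : ((1:ℝ)/2) ^ 2 - ∑ i, t i ^ 2 = 0 := by
        exact_mod_cast this.symm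
      nlinarith [this]
  · rintro (rfl | rfl | ⟨t, ht0, hsum, rfl⟩)
    · constructor <;> (ext i; simp [jmul_apply, jstar_apply])
    · constructor <;> ext i <;>
        simp [jmul_apply, jstar_apply, Sp_one_apply, Finset.sum_ite_eq', apply_ite (starRingEnd ℂ)] <;>
        by_cases hi : i = 0 <;> simp [hi] <;> norm_num
    · have hin : (∑ j, shape m (1/2) t j * shape m (1/2) t j) = 0 := by
        have := inner_conj_shape (m := m) (1/2) t ht0
        rw [inner_conj_left] at this
        rw [this, hsum]
        norm_num
      constructor
      · ext i
        rw [jmul_apply, hin]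
        have h0 : shape m (1/2) t 0 = 1/2 := by
          rw [shape_apply, if_pos rfl, ht0]
          simp
        rw [h0]
        ring
      · ext i
        rw [jstar_apply]
        have h0 : shape m (1/2) t 0 = 1/2 := by
          rw [shape_apply, if_pos rfl, ht0]
          simp
        rw [h0, shape_apply]
        by_cases hi : i = 0
        · rw [if_pos hi, if_pos hi, hi, ht0]
          simp [Complex.conj_ofNat]
          norm_num
        · rw [if_neg hi, if_neg hi]
          simp

-- ====== positivity ======

lemma shape_coord_zero (c : ℝ) (t : Fin m → ℝ) (ht0 : t 0 = 0) : shape m c t 0 = (c : ℂ) := by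
  rw [shape_apply, if_pos rfl, ht0]
  simp

lemma jmul_zero_zero : (Sp m).jmul 0 0 = 0 := by
  ext i
  simp [jmul_apply]

lemma jstar_zero : (Sp m).jstar 0 = 0 := by
  ext i
  simp [jstar_apply]

lemma isPos_key {a : EuclideanSpace ℂ (Fin m)} (h : (Sp m).IsPos a) :
    0 ≤ (a 0).re ∧ (a 0 = 0 → a = 0) := by
  obtain ⟨b, hbs, hbm⟩ := h
  have hs' : ∀ i, 2 * starRingEnd ℂ (b 0) * (if i = 0 then 1 else 0) - starRingEnd ℂ (b i)
      = b i := fun i => by rw [← jstar_apply, hbs]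
  have hre : starRingEnd ℂ (b 0) = b 0 := by
    have := hs' 0
    simp at this
    linear_combination this
  have him : ∀ i, i ≠ 0 → starRingEnd ℂ (b i) = - b i := by
    intro i hi
    have := hs' i
    rw [if_neg hi] at this
    linear_combination -this
  set β : Fin m → ℝ := fun j => if j = 0 then (b 0).re else (b j).im with hβ
  have hbv : ∀ j, b j = if j = 0 then ((β j : ℝ) : ℂ) else ((β j : ℝ) : ℂ) * Complex.I := by
    intro j
    by_cases hj : j = 0
    · subst hj
      simp only [hβ, if_pos rfl, ite_true]
      exact (Complex.conj_eq_iff_re.mp hre).symm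
    · rw [if_neg hj, hβ]
      simp only [hj, if_false, ite_false]
      exact pure_imag_eq (him j hj)
  have hsq : ∀ j, b j * b j = (((if j = 0 then β j ^ 2 else -(β j ^ 2)) : ℝ) : ℂ) := by
    intro j
    rw [hbv j]
    by_cases hj : j = 0 <;> simp only [hj, if_pos rfl, if_false, ite_true, ite_false]
    · push_cast; ring
    · push_cast
      rw [mul_mul_mul_comm, Complex.I_mul_I]
      push_cast
      ring
  have hsum : (∑ j, b j * b j) = ((∑ j, if j = 0 then β j ^ 2 else -(β j ^ 2) : ℝ) : ℂ) := by
    rw [Finset.sum_congr rfl fun j _ => hsq j]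
    push_cast
    rfl
  have hkey : 2 * β 0 ^ 2 - (∑ j, if j = 0 then β j ^ 2 else -(β j ^ 2)) = ∑ j, β j ^ 2 := by
    have h1 : ∑ j, (β j ^ 2 + (if j = 0 then β j ^ 2 else -(β j ^ 2))) = 2 * β 0 ^ 2 := by
      rw [Finset.sum_congr rfl (fun j _ => show β j ^ 2 + (if j = 0 then β j ^ 2 else -(β j ^ 2))
          = if j = 0 then 2 * β 0 ^ 2 else 0 from by by_cases hj : j = 0 <;> simp [hj] <;> ring),
        Finset.sum_ite_eq' Finset.univ (0 : Fin m) (fun _ => 2 * β 0 ^ 2)]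
      simp
    rw [Finset.sum_add_distrib] at h1
    linarith
  have ha0 : a 0 = ((∑ j, β j ^ 2 : ℝ) : ℂ) := by
    have := hbm
    have h0 : (Sp m).jmul b b 0 = a 0 := by rw [hbm]
    rw [jmul_apply, if_pos rfl, hsum] at h0
    have hb00 : b 0 = ((β 0 : ℝ) : ℂ) := by rw [hbv 0]; simp
    rw [hb00] at h0
    rw [← h0, ← hkey]
    push_cast
    ring
  constructor
  · rw [ha0]
    simp only [Complex.ofReal_re]
    exact Finset.sum_nonneg fun j _ => sq_nonneg _
  · intro h0
    rw [ha0] at h0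
    rw [Complex.ofReal_eq_zero] at h0
    have hs0 : ∑ j, β j ^ 2 = 0 := h0
    have hβ0 : ∀ j, β j = 0 := by
      intro j
      have := (Finset.sum_eq_zero_iff_of_nonneg (fun j _ => sq_nonneg (β j))).mp hs0 j
        (Finset.mem_univ j)
      exact (pow_eq_zero_iff two_ne_zero).mp this
    have hb0 : b = 0 := by
      ext j
      rw [hbv j, hβ0 j]
      simp
    rw [← hbm, hb0, jmul_zero_zero]

-- ====== parametrization ======

def SphT (m : ℕ) [NeZero m] : Type := {t : Fin m → ℝ // t 0 = 0 ∧ ∑ i, t i ^ 2 = 1/4}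

noncomputable def gmap (m : ℕ) [NeZero m] : Bool ⊕ SphT m → EuclideanSpace ℂ (Fin m) :=
  fun k => match k with
  | Sum.inl false => 0
  | Sum.inl true => (Sp m).one
  | Sum.inr t => shape m (1/2) t.1

lemma gmap_isProjection (k : Bool ⊕ SphT m) : (Sp m).IsProjection (gmap m k) := by
  rw [isProjection_classify]
  match k with
  | Sum.inl false => exact Or.inl rfl
  | Sum.inl true => exact Or.inr (Or.inl rfl)
  | Sum.inr t => exact Or.inr (Or.inr ⟨t.1, t.2.1, t.2.2, rfl⟩)

lemma gmap_ff_zero : gmap m (Sum.inl false) 0 = 0 := rfl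

lemma gmap_tt_zero : gmap m (Sum.inl true) 0 = 1 := by
  simp [gmap, Sp_one_apply]

lemma gmap_inr_zero (t : SphT m) : gmap m (Sum.inr t) 0 = 1/2 := by
  show shape m (1/2) t.1 0 = 1/2
  rw [shape_coord_zero _ _ t.2.1]
  norm_num

lemma gmap_injective : Function.Injective (gmap m) := by
  intro k l hkl
  have h0 := congrArg (fun x : EuclideanSpace ℂ (Fin m) => x 0) hkl
  simp only at h0
  match k, l with
  | Sum.inl false, Sum.inl false => rfl
  | Sum.inl true, Sum.inl true => rfl
  | Sum.inl false, Sum.inl true =>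
    rw [gmap_ff_zero, gmap_tt_zero] at h0; norm_num at h0
  | Sum.inl true, Sum.inl false =>
    rw [gmap_ff_zero, gmap_tt_zero] at h0; norm_num at h0
  | Sum.inl false, Sum.inr s =>
    rw [gmap_ff_zero, gmap_inr_zero] at h0; norm_num at h0
  | Sum.inr t, Sum.inl false =>
    rw [gmap_ff_zero, gmap_inr_zero] at h0; norm_num at h0
  | Sum.inl true, Sum.inr s =>
    rw [gmap_tt_zero, gmap_inr_zero] at h0; norm_num at h0
  | Sum.inr t, Sum.inl true =>
    rw [gmap_tt_zero, gmap_inr_zero] at h0; norm_num at h0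
  | Sum.inr t, Sum.inr s =>
    have := shape_injective (1/2) (hkl : shape m (1/2) t.1 = shape m (1/2) s.1)
    rw [Subtype.ext this]

noncomputable def gproj (m : ℕ) [NeZero m] :
    Bool ⊕ SphT m → {p : EuclideanSpace ℂ (Fin m) // (Sp m).IsProjection p} :=
  fun k => ⟨gmap m k, gmap_isProjection k⟩

lemma gproj_bijective : Function.Bijective (gproj m) := by
  constructor
  · intro k l h
    exact gmap_injective (congrArg Subtype.val h)
  · rintro ⟨p, hp⟩
    rcases (isProjection_classify p).mp hp with rfl | rfl | ⟨t, ht0, hsum, rfl⟩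
    · exact ⟨Sum.inl false, rfl⟩
    · exact ⟨Sum.inl true, rfl⟩
    · exact ⟨Sum.inr ⟨t, ht0, hsum⟩, rfl⟩

noncomputable def eproj (m : ℕ) [NeZero m] :
    (Bool ⊕ SphT m) ≃ {p : EuclideanSpace ℂ (Fin m) // (Sp m).IsProjection p} :=
  Equiv.ofBijective (gproj m) gproj_bijective

-- ====== order characterization ======

lemma isPos_zero : (Sp m).IsPos 0 := ⟨0, jstar_zero, jmul_zero_zero⟩

lemma isPos_of_isProjection {p : EuclideanSpace ℂ (Fin m)} (hp : (Sp m).IsProjection p) :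
    (Sp m).IsPos p := ⟨p, hp.2, hp.1⟩

lemma isProjection_one_sub {p : EuclideanSpace ℂ (Fin m)} (hp : (Sp m).IsProjection p) :
    (Sp m).IsProjection ((Sp m).one - p) := by
  rw [isProjection_classify] at hp ⊢
  rcases hp with rfl | rfl | ⟨t, ht0, hsum, rfl⟩
  · rw [sub_zero]; exact Or.inr (Or.inl rfl)
  · rw [sub_self]; exact Or.inl rfl
  · right; right
    refine ⟨-t, by simp [ht0], by simpa using hsum, ?_⟩
    rw [one_eq_shape, shape_sub]
    norm_num

lemma isPos_gmap_sub (k l : Bool ⊕ SphT m) :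
    (Sp m).IsPos (gmap m l - gmap m k) ↔
      (l = k ∨ k = Sum.inl false ∨ l = Sum.inl true) := by
  match k, l with
  | Sum.inl false, l =>
    refine iff_of_true ?_ (Or.inr (Or.inl rfl))
    rw [show gmap m (Sum.inl false) = 0 from rfl, sub_zero]
    exact isPos_of_isProjection (gmap_isProjection l)
  | Sum.inl true, Sum.inl true =>
    exact iff_of_true (by rw [sub_self]; exact isPos_zero) (Or.inl rfl)
  | Sum.inr t, Sum.inl true =>
    refine iff_of_true ?_ (Or.inr (Or.inr rfl))
    exact isPos_of_isProjection (isProjection_one_sub (gmap_isProjection (Sum.inr t)))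
  | Sum.inl true, Sum.inl false =>
    refine iff_of_false (fun h => ?_) (by simp)
    have := (isPos_key h).1
    rw [PiLp.sub_apply, gmap_ff_zero, gmap_tt_zero] at this
    norm_num at this
  | Sum.inl true, Sum.inr s =>
    refine iff_of_false (fun h => ?_) (by simp)
    have := (isPos_key h).1
    rw [PiLp.sub_apply, gmap_tt_zero, gmap_inr_zero] at this
    norm_num at this
  | Sum.inr t, Sum.inl false =>
    refine iff_of_false (fun h => ?_) (by simp)
    have := (isPos_key h).1
    rw [PiLp.sub_apply, gmap_ff_zero, gmap_inr_zero] at this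
    norm_num at this
  | Sum.inr t, Sum.inr s =>
    constructor
    · intro h
      have h0 := (isPos_key h).2
      rw [PiLp.sub_apply, gmap_inr_zero, gmap_inr_zero, sub_self] at h0
      have := sub_eq_zero.mp (h0 rfl)
      exact Or.inl (gmap_injective (show gmap m (Sum.inr s) = gmap m (Sum.inr t) from this))
    · rintro (h | h | h)
      · rw [h, sub_self]; exact isPos_zero
      · exact absurd h (by simp)
      · exact absurd h (by simp)

-- ====== snorm characterization ======

noncomputable def cval : Bool ⊕ SphT m → ℝ
  | Sum.inl false => 0
  | Sum.inl true => 1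
  | Sum.inr _ => 1/2

noncomputable def tval : Bool ⊕ SphT m → (Fin m → ℝ)
  | Sum.inl _ => 0
  | Sum.inr t => t.1

lemma tval_zero (k : Bool ⊕ SphT m) : tval k 0 = 0 := by
  match k with
  | Sum.inl b => rfl
  | Sum.inr t => exact t.2.1

lemma gmap_eq_shape (k : Bool ⊕ SphT m) : gmap m k = shape m (cval k) (tval k) := by
  match k with
  | Sum.inl false => exact shape_zero.symm
  | Sum.inl true => exact one_eq_shape
  | Sum.inr t => rfl

lemma snorm_gmap_sub_eq (k l : Bool ⊕ SphT m) :
    (Sp m).snorm (gmap m k - gmap m l) =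
      |cval k - cval l| + Real.sqrt (∑ i, (tval k i - tval l i) ^ 2) := by
  rw [gmap_eq_shape k, gmap_eq_shape l, shape_sub,
    snorm_shape _ _ (by rw [Pi.sub_apply, tval_zero, tval_zero, sub_zero])]
  congr 1

lemma sqrt_quarter : Real.sqrt (1/4 : ℝ) = 1/2 := by
  rw [show (1/4 : ℝ) = (1/2)^2 by norm_num, Real.sqrt_sq (by norm_num)]

def Drel : (Bool ⊕ SphT m) → (Bool ⊕ SphT m) → Prop
  | Sum.inr t, Sum.inr s => s.1 = -t.1
  | k, l => k ≠ l

lemma snorm_gmap_sub_iff (k l : Bool ⊕ SphT m) :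
    (Sp m).snorm (gmap m k - gmap m l) = 1 ↔ Drel k l := by
  rw [snorm_gmap_sub_eq]
  have sum_s : ∀ s : SphT m, ∑ i, ((0 : Fin m → ℝ) i - s.1 i) ^ 2 = 1/4 := fun s => by
    rw [Finset.sum_congr rfl fun i _ => by rw [Pi.zero_apply, zero_sub, neg_sq]]
    exact s.2.2
  have sum_s' : ∀ s : SphT m, ∑ i, (s.1 i - (0 : Fin m → ℝ) i) ^ 2 = 1/4 := fun s => by
    rw [Finset.sum_congr rfl fun i _ => by rw [Pi.zero_apply, sub_zero]]
    exact s.2.2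
  match k, l with
  | Sum.inl false, Sum.inl false =>
    refine iff_of_false ?_ (by simp [Drel])
    simp [cval, tval]
  | Sum.inl true, Sum.inl true =>
    refine iff_of_false ?_ (by simp [Drel])
    simp [cval, tval]
  | Sum.inl false, Sum.inl true =>
    refine iff_of_true ?_ (by simp [Drel])
    simp [cval, tval]
  | Sum.inl true, Sum.inl false =>
    refine iff_of_true ?_ (by simp [Drel])
    simp [cval, tval]
  | Sum.inl false, Sum.inr s =>
    refine iff_of_true ?_ (by simp [Drel])
    show |0 - 1/2| + Real.sqrt (∑ i, ((0 : Fin m → ℝ) i - s.1 i) ^ 2) = 1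
    rw [sum_s s, sqrt_quarter]
    norm_num [abs_of_nonneg]
  | Sum.inl true, Sum.inr s =>
    refine iff_of_true ?_ (by simp [Drel])
    show |1 - 1/2| + Real.sqrt (∑ i, ((0 : Fin m → ℝ) i - s.1 i) ^ 2) = 1
    rw [sum_s s, sqrt_quarter]
    norm_num [abs_of_nonneg]
  | Sum.inr t, Sum.inl false =>
    refine iff_of_true ?_ (by simp [Drel])
    show |1/2 - 0| + Real.sqrt (∑ i, (t.1 i - (0 : Fin m → ℝ) i) ^ 2) = 1
    rw [sum_s' t, sqrt_quarter]
    norm_num [abs_of_nonneg]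
  | Sum.inr t, Sum.inl true =>
    refine iff_of_true ?_ (by simp [Drel])
    show |1/2 - 1| + Real.sqrt (∑ i, (t.1 i - (0 : Fin m → ℝ) i) ^ 2) = 1
    rw [sum_s' t, sqrt_quarter]
    norm_num [abs_of_nonneg]
  | Sum.inr t, Sum.inr s =>
    show |1/2 - 1/2| + Real.sqrt (∑ i, (t.1 i - s.1 i) ^ 2) = 1 ↔ s.1 = -t.1
    rw [sub_self, abs_zero, zero_add]
    have hid : ∑ i, (t.1 i - s.1 i) ^ 2 + ∑ i, (t.1 i + s.1 i) ^ 2 = 1 := by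
      rw [← Finset.sum_add_distrib,
        Finset.sum_congr rfl fun i _ => show (t.1 i - s.1 i) ^ 2 + (t.1 i + s.1 i) ^ 2
          = 2 * t.1 i ^ 2 + 2 * s.1 i ^ 2 from by ring,
        Finset.sum_add_distrib, ← Finset.mul_sum, ← Finset.mul_sum, t.2.2, s.2.2]
      norm_num
    rw [Real.sqrt_eq_one]
    constructor
    · intro h1
      have h2 : ∑ i, (t.1 i + s.1 i) ^ 2 = 0 := by linarith
      funext i
      have := (Finset.sum_eq_zero_iff_of_nonneg (fun i _ => sq_nonneg (t.1 i + s.1 i))).mp h2 i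
        (Finset.mem_univ i)
      have := (pow_eq_zero_iff two_ne_zero).mp this
      rw [Pi.neg_apply]
      linarith
    · intro h
      rw [Finset.sum_congr rfl fun i _ => show (t.1 i - s.1 i) ^ 2 = 4 * t.1 i ^ 2 from by
        rw [h, Pi.neg_apply]; ring, ← Finset.mul_sum, t.2.2]
      norm_num

-- ====== cardinality ======

open Cardinal in
lemma mk_SphT_le : #(SphT m) ≤ Cardinal.continuum := by
  refine le_trans (Cardinal.mk_le_of_injective (f := fun t : SphT m => t.1) ?_) ?_
  · intro a b h; exact Subtype.ext h
  · rw [Cardinal.mk_arrow]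
    simp [Cardinal.mk_real]
    exact le_of_eq (Cardinal.power_nat_eq Cardinal.aleph0_le_continuum (by
      have := NeZero.pos m; omega))

open Cardinal in
lemma mk_SphT3 : #(SphT 3) = Cardinal.continuum := by
  refine le_antisymm mk_SphT_le ?_
  rw [← Cardinal.mk_Ioo_real (show (0:ℝ) < 1/2 by norm_num)]
  refine Cardinal.mk_le_of_injective (f := fun x : Set.Ioo (0:ℝ) (1/2) =>
    (⟨![0, x.1, Real.sqrt (1/4 - x.1^2)], by
      constructor
      · simp
      · have hx1 := x.2.1
        have hx2 := x.2.2
        rw [Fin.sum_univ_three]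
        simp only [Matrix.cons_val_zero, Matrix.cons_val_one, Matrix.head_cons,
          Matrix.cons_val_two, Matrix.tail_cons]
        rw [Real.sq_sqrt (by nlinarith)]
        ring⟩ : SphT 3)) ?_
  intro a b h
  have := congrFun (congrArg Subtype.val h) 1
  simp only [Matrix.cons_val_one, Matrix.head_cons] at this
  exact Subtype.ext this

open Cardinal in
lemma mk_SphT4 : #(SphT 4) = Cardinal.continuum := by
  refine le_antisymm mk_SphT_le ?_
  rw [← Cardinal.mk_Ioo_real (show (0:ℝ) < 1/2 by norm_num)]
  refine Cardinal.mk_le_of_injective (f := fun x : Set.Ioo (0:ℝ) (1/2) =>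
    (⟨![0, x.1, Real.sqrt (1/4 - x.1^2), 0], by
      constructor
      · simp
      · have hx1 := x.2.1
        have hx2 := x.2.2
        rw [Fin.sum_univ_four]
        simp only [Matrix.cons_val_zero, Matrix.cons_val_one, Matrix.head_cons,
          Matrix.cons_val_two, Matrix.tail_cons, Matrix.cons_val_three]
        rw [Real.sq_sqrt (by nlinarith)]
        ring⟩ : SphT 4)) ?_
  intro a b h
  have := congrFun (congrArg Subtype.val h) 1
  simp only [Matrix.cons_val_one, Matrix.head_cons] at this
  exact Subtype.ext this

def negS (t : SphT m) : SphT m :=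
  ⟨-t.1, by rw [Pi.neg_apply, t.2.1, neg_zero], by
    rw [Finset.sum_congr rfl fun i _ => show (-t.1) i ^ 2 = t.1 i ^ 2 from by
      rw [Pi.neg_apply, neg_sq]]
    exact t.2.2⟩

lemma negS_involutive (t : SphT m) : negS (negS t) = t := Subtype.ext (by simp [negS])

lemma negS_ne (t : SphT m) : negS t ≠ t := by
  intro h
  have h1 : -t.1 = t.1 := congrArg Subtype.val h
  have h2 : t.1 = 0 := by
    funext i
    have := congrFun h1 i
    rw [Pi.neg_apply] at this
    show t.1 i = 0
    linarith [this]
  have h3 := t.2.2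
  rw [h2] at h3
  simp at h3


open Cardinal in
section
section Odd
variable {A : Type*} {B : Type*}

def pairSetoid (σ : A → A) (h2 : ∀ a, σ (σ a) = a) : Setoid A where
  r a b := b = a ∨ b = σ a
  iseqv := by
    constructor
    · exact fun a => Or.inl rfl
    · rintro a b (rfl | rfl)
      · exact Or.inl rfl
      · exact Or.inr (h2 a).symm
    · rintro a b c (rfl | rfl) (rfl | rfl)
      · exact Or.inl rfl
      · exact Or.inr rfl
      · exact Or.inr rfl
      · exact Or.inl (h2 a)

variable (σ : A → A) (τ : B → B) (h2σ : ∀ a, σ (σ a) = a) (h2τ : ∀ b, τ (τ b) = b)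

noncomputable def oddMap (g : Quotient (pairSetoid σ h2σ) → Quotient (pairSetoid τ h2τ)) :
    A → B := fun a =>
  letI : DecidableEq A := Classical.decEq A
  if a = (Quotient.mk (pairSetoid σ h2σ) a).out then (g (Quotient.mk _ a)).out
  else τ ((g (Quotient.mk _ a)).out)

lemma quot_mk_inv (a : A) :
    Quotient.mk (pairSetoid σ h2σ) (σ a) = Quotient.mk (pairSetoid σ h2σ) a :=
  Quotient.sound (Or.inr (h2σ a).symm)

lemma out_cases (a : A) :
    a = (Quotient.mk (pairSetoid σ h2σ) a).out ∨ a = σ ((Quotient.mk (pairSetoid σ h2σ) a).out) :=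
  Quotient.exact (Quotient.out_eq (Quotient.mk (pairSetoid σ h2σ) a))

lemma oddMap_apply_pos (g : Quotient (pairSetoid σ h2σ) → Quotient (pairSetoid τ h2τ)) (a : A)
    (h : a = (Quotient.mk (pairSetoid σ h2σ) a).out) :
    oddMap σ τ h2σ h2τ g a = (g (Quotient.mk _ a)).out := by
  rw [oddMap]; exact if_pos h

lemma oddMap_apply_neg (g : Quotient (pairSetoid σ h2σ) → Quotient (pairSetoid τ h2τ)) (a : A)
    (h : ¬ a = (Quotient.mk (pairSetoid σ h2σ) a).out) :
    oddMap σ τ h2σ h2τ g a = τ ((g (Quotient.mk _ a)).out) := by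
  rw [oddMap]; exact if_neg h

lemma oddMap_left_inv (hfσ : ∀ a, σ a ≠ a) (hfτ : ∀ b, τ b ≠ b)
    (g : Quotient (pairSetoid σ h2σ) ≃ Quotient (pairSetoid τ h2τ)) (a : A) :
    oddMap τ σ h2τ h2σ g.symm (oddMap σ τ h2σ h2τ g a) = a := by
  classical
  rcases out_cases σ h2σ a with h | h
  · rw [oddMap_apply_pos σ τ h2σ h2τ g a h]
    have hq : Quotient.mk (pairSetoid τ h2τ) (g (Quotient.mk (pairSetoid σ h2σ) a)).out
        = g (Quotient.mk (pairSetoid σ h2σ) a) := Quotient.out_eq _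
    rw [oddMap_apply_pos τ σ h2τ h2σ g.symm _ (by rw [hq])]
    rw [hq, Equiv.symm_apply_apply, ← h]
  · have hne : ¬ a = (Quotient.mk (pairSetoid σ h2σ) a).out := by
      intro he
      exact hfσ _ (by rw [← h]; exact he)
    rw [oddMap_apply_neg σ τ h2σ h2τ g a hne]
    have hq : Quotient.mk (pairSetoid τ h2τ) (τ (g (Quotient.mk (pairSetoid σ h2σ) a)).out)
        = g (Quotient.mk (pairSetoid σ h2σ) a) := by
      rw [quot_mk_inv, Quotient.out_eq]
    rw [oddMap_apply_neg τ σ h2τ h2σ g.symm _ (by rw [hq]; exact fun he => hfτ _ he)]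
    rw [hq, Equiv.symm_apply_apply, ← h]

lemma oddMap_odd (hfσ : ∀ a, σ a ≠ a) (hfτ : ∀ b, τ b ≠ b)
    (g : Quotient (pairSetoid σ h2σ) → Quotient (pairSetoid τ h2τ)) (a : A) :
    oddMap σ τ h2σ h2τ g (σ a) = τ (oddMap σ τ h2σ h2τ g a) := by
  classical
  have hmk := quot_mk_inv σ h2σ a
  rcases out_cases σ h2σ a with h | h
  · have hne : ¬ σ a = (Quotient.mk (pairSetoid σ h2σ) (σ a)).out := by
      rw [hmk, ← h]; exact hfσ a
    rw [oddMap_apply_neg σ τ h2σ h2τ g (σ a) hne, oddMap_apply_pos σ τ h2σ h2τ g a h, hmk]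
  · have hpos : σ a = (Quotient.mk (pairSetoid σ h2σ) (σ a)).out := by
      rw [hmk]; conv_lhs => rw [h, h2σ]
    have hne : ¬ a = (Quotient.mk (pairSetoid σ h2σ) a).out := by
      intro he
      exact hfσ _ (by rw [← h]; exact he)
    rw [oddMap_apply_pos σ τ h2σ h2τ g (σ a) hpos, oddMap_apply_neg σ τ h2σ h2τ g a hne, hmk,
      h2τ]

noncomputable def oddEquiv (hfσ : ∀ a, σ a ≠ a) (hfτ : ∀ b, τ b ≠ b)
    (g : Quotient (pairSetoid σ h2σ) ≃ Quotient (pairSetoid τ h2τ)) : A ≃ B where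
  toFun := oddMap σ τ h2σ h2τ g
  invFun := oddMap τ σ h2τ h2σ g.symm
  left_inv := oddMap_left_inv σ τ h2σ h2τ hfσ hfτ g
  right_inv := by
    have := oddMap_left_inv τ σ h2τ h2σ hfτ hfσ g.symm
    intro b
    simpa using this b

end Odd

section Card
open Cardinal

lemma mk_quot_pairSetoid {A : Type u} (σ : A → A) (h2σ : ∀ a, σ (σ a) = a)
    (hfσ : ∀ a, σ a ≠ a) (hA : #A = 𝔠) :
    #(Quotient (pairSetoid σ h2σ)) = 𝔠 := by
  classical
  set Q := Quotient (pairSetoid σ h2σ)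
  have hle : #Q ≤ 𝔠 := by
    rw [← hA]
    exact Cardinal.mk_le_of_surjective (Quotient.mk_surjective)
  have hinj : Function.Injective (fun a : A =>
      if a = (Quotient.mk (pairSetoid σ h2σ) a).out then
        (Sum.inl (Quotient.mk (pairSetoid σ h2σ) a) : Q ⊕ Q)
      else Sum.inr (Quotient.mk (pairSetoid σ h2σ) a)) := by
    intro a b hab
    simp only at hab
    by_cases ha : a = (Quotient.mk (pairSetoid σ h2σ) a).out <;>
        by_cases hb : b = (Quotient.mk (pairSetoid σ h2σ) b).out
    · rw [if_pos ha, if_pos hb, Sum.inl.injEq] at hab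
      rw [ha, hb, hab]
    · rw [if_pos ha, if_neg hb] at hab
      exact absurd hab (by simp)
    · rw [if_neg ha, if_pos hb] at hab
      exact absurd hab (by simp)
    · rw [if_neg ha, if_neg hb, Sum.inr.injEq] at hab
      have h : a = σ ((Quotient.mk (pairSetoid σ h2σ) a).out) :=
        (out_cases σ h2σ a).resolve_left ha
      have h' : b = σ ((Quotient.mk (pairSetoid σ h2σ) b).out) :=
        (out_cases σ h2σ b).resolve_left hb
      rw [h, h', hab]
  have hge : 𝔠 ≤ #Q + #Q := by
    rw [← hA]
    calc #A ≤ #(Q ⊕ Q) := Cardinal.mk_le_of_injective hinj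
    _ = #Q + #Q := by simp [Cardinal.mk_sum]
  have hQinf : ℵ₀ ≤ #Q := by
    by_contra hlt
    push_neg at hlt
    have : #Q + #Q < ℵ₀ := Cardinal.add_lt_aleph0 hlt hlt
    exact absurd (hge.trans_lt this) (not_lt.mpr Cardinal.aleph0_lt_continuum.le)
  have : #Q + #Q = #Q := Cardinal.add_eq_self hQinf
  rw [this] at hge
  exact le_antisymm hle hge

lemma exists_oddEquiv {A B : Type u} (σ : A → A) (τ : B → B)
    (h2σ : ∀ a, σ (σ a) = a) (h2τ : ∀ b, τ (τ b) = b)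
    (hfσ : ∀ a, σ a ≠ a) (hfτ : ∀ b, τ b ≠ b)
    (hA : #A = 𝔠) (hB : #B = 𝔠) :
    ∃ φ : A ≃ B, ∀ a, φ (σ a) = τ (φ a) := by
  obtain ⟨g⟩ := Cardinal.eq.mp
    ((mk_quot_pairSetoid σ h2σ hfσ hA).trans (mk_quot_pairSetoid τ h2τ hfτ hB).symm)
  exact ⟨oddEquiv σ τ h2σ h2τ hfσ hfτ g, oddMap_odd σ τ h2σ h2τ hfσ hfτ g⟩

end Card

end


/-- There exist spin factors of dimensions `3` and `4`, necessarily not Jordan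
`*`-isomorphic, together with an order isomorphism between their projection lattices
preserving points at diametrical distance in both directions. -/
theorem exists_spin_counterexample :
    ∃ (S : SpinFactor (EuclideanSpace ℂ (Fin 3))) (T : SpinFactor (EuclideanSpace ℂ (Fin 4)))
      (Θ : {p : EuclideanSpace ℂ (Fin 3) // S.IsProjection p} →
        {q : EuclideanSpace ℂ (Fin 4) // T.IsProjection q}),
      (¬ ∃ f : EuclideanSpace ℂ (Fin 3) ≃ₗ[ℂ] EuclideanSpace ℂ (Fin 4),
          (∀ a b, f (S.jmul a b) = T.jmul (f a) (f b)) ∧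
          (∀ a, f (S.jstar a) = T.jstar (f a))) ∧
      Function.Bijective Θ ∧
      (∀ p q : {p : EuclideanSpace ℂ (Fin 3) // S.IsProjection p},
        S.IsPos (q.1 - p.1) ↔ T.IsPos ((Θ q).1 - (Θ p).1)) ∧
      (∀ p q : {p : EuclideanSpace ℂ (Fin 3) // S.IsProjection p},
        S.snorm (p.1 - q.1) = 1 ↔ T.snorm ((Θ p).1 - (Θ q).1) = 1) := by
  obtain ⟨φ, hφ⟩ := exists_oddEquiv (negS (m := 3)) (negS (m := 4))
    negS_involutive negS_involutive negS_ne negS_ne mk_SphT3 mk_SphT4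
  set Φ : (Bool ⊕ SphT 3) ≃ (Bool ⊕ SphT 4) := Equiv.sumCongr (Equiv.refl Bool) φ with hΦ
  have hΦl : ∀ b, Φ (Sum.inl b) = Sum.inl b := fun b => rfl
  have hΦr : ∀ t, Φ (Sum.inr t) = Sum.inr (φ t) := fun t => rfl
  -- preservation of the order predicate
  have hO : ∀ k l : Bool ⊕ SphT 3,
      (l = k ∨ k = Sum.inl false ∨ l = Sum.inl true) ↔
        (Φ l = Φ k ∨ Φ k = Sum.inl false ∨ Φ l = Sum.inl true) := by
    intro k l
    refine or_congr ?_ (or_congr ?_ ?_)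
    · exact (Equiv.apply_eq_iff_eq Φ).symm
    · rw [show (Sum.inl false : Bool ⊕ SphT 4) = Φ (Sum.inl false) from rfl,
        Equiv.apply_eq_iff_eq Φ]
    · rw [show (Sum.inl true : Bool ⊕ SphT 4) = Φ (Sum.inl true) from rfl,
        Equiv.apply_eq_iff_eq Φ]
  -- preservation of the diametrical predicate
  have hD : ∀ k l : Bool ⊕ SphT 3, Drel k l ↔ Drel (Φ k) (Φ l) := by
    intro k l
    match k, l with
    | Sum.inl b, Sum.inl b' =>
      show (Sum.inl b ≠ Sum.inl b') ↔ ((Sum.inl b : Bool ⊕ SphT 4) ≠ Sum.inl b')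
      simp
    | Sum.inl b, Sum.inr s =>
      rw [hΦl, hΦr]
      exact iff_of_true (by simp [Drel]) (by simp [Drel])
    | Sum.inr t, Sum.inl b =>
      rw [hΦr, hΦl]
      exact iff_of_true (by simp [Drel]) (by simp [Drel])
    | Sum.inr t, Sum.inr s =>
      show s.1 = -t.1 ↔ (φ s).1 = -(φ t).1
      have e3 : s.1 = -t.1 ↔ s = negS t :=
        ⟨fun h => Subtype.ext h, fun h => congrArg Subtype.val h⟩
      have e4 : (φ s).1 = -(φ t).1 ↔ φ s = negS (φ t) :=
        ⟨fun h => Subtype.ext h, fun h => congrArg Subtype.val h⟩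
      rw [e3, e4, ← hφ t, Equiv.apply_eq_iff_eq]
  refine ⟨Sp 3, Sp 4, ⇑((eproj 3).symm.trans (Φ.trans (eproj 4))), ?_, Equiv.bijective _,
    ?_, ?_⟩
  · rintro ⟨f, -, -⟩
    have := f.finrank_eq
    rw [finrank_euclideanSpace_fin, finrank_euclideanSpace_fin] at this
    norm_num at this
  · intro p q
    have hp : p.1 = gmap 3 ((eproj 3).symm p) :=
      (congrArg Subtype.val (Equiv.apply_symm_apply (eproj 3) p)).symm
    have hq : q.1 = gmap 3 ((eproj 3).symm q) :=
      (congrArg Subtype.val (Equiv.apply_symm_apply (eproj 3) q)).symm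
    have hp' : (((eproj 3).symm.trans (Φ.trans (eproj 4))) p).1
        = gmap 4 (Φ ((eproj 3).symm p)) := rfl
    have hq' : (((eproj 3).symm.trans (Φ.trans (eproj 4))) q).1
        = gmap 4 (Φ ((eproj 3).symm q)) := rfl
    rw [hp, hq, hp', hq', isPos_gmap_sub, isPos_gmap_sub]
    exact hO ((eproj 3).symm p) ((eproj 3).symm q)
  · intro p q
    have hp : p.1 = gmap 3 ((eproj 3).symm p) :=
      (congrArg Subtype.val (Equiv.apply_symm_apply (eproj 3) p)).symm
    have hq : q.1 = gmap 3 ((eproj 3).symm q) :=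
      (congrArg Subtype.val (Equiv.apply_symm_apply (eproj 3) q)).symm
    have hp' : (((eproj 3).symm.trans (Φ.trans (eproj 4))) p).1
        = gmap 4 (Φ ((eproj 3).symm p)) := rfl
    have hq' : (((eproj 3).symm.trans (Φ.trans (eproj 4))) q).1
        = gmap 4 (Φ ((eproj 3).symm q)) := rfl
    rw [hp, hq, hp', hq', snorm_gmap_sub_iff, snorm_gmap_sub_iff]
    exact hD ((eproj 3).symm p) ((eproj 3).symm q)
end

section
/- Let H, K be real Hilbert spaces of dimension at least 1 and let T be a surjective isometry between their unit spheres. Then T extends to a surjective real-linear isometry from H onto K (Tingley's problem for Hilbert spaces). -/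
open scoped RealInnerProductSpace

/-- Tingley's problem for real Hilbert spaces (Ding): every surjective isometry between
the unit spheres of two real Hilbert spaces (of dimension at least one) extends to a
surjective real-linear isometry. -/
theorem tingley_real_hilbert {H K : Type*}
    [NormedAddCommGroup H] [InnerProductSpace ℝ H] [CompleteSpace H] [Nontrivial H]
    [NormedAddCommGroup K] [InnerProductSpace ℝ K] [CompleteSpace K] [Nontrivial K]
    (T : H → K) (hmaps : ∀ x : H, ‖x‖ = 1 → ‖T x‖ = 1)
    (hsurj : ∀ y : K, ‖y‖ = 1 → ∃ x : H, ‖x‖ = 1 ∧ T x = y)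
    (hiso : ∀ x y : H, ‖x‖ = 1 → ‖y‖ = 1 → ‖T x - T y‖ = ‖x - y‖) :
    ∃ L : H →ₗᵢ[ℝ] K, Function.Surjective L ∧ ∀ x : H, ‖x‖ = 1 → L x = T x := by
  classical
  -- T preserves inner products on the sphere
  have hinner : ∀ x y : H, ‖x‖ = 1 → ‖y‖ = 1 → ⟪T x, T y⟫ = ⟪x, y⟫ := by
    intro x y hx hy
    have h1 := hiso x y hx hy
    have e1 : ‖T x - T y‖ ^ 2 = ‖T x‖ ^ 2 - 2 * ⟪T x, T y⟫ + ‖T y‖ ^ 2 :=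
      norm_sub_sq_real _ _
    have e2 : ‖x - y‖ ^ 2 = ‖x‖ ^ 2 - 2 * ⟪x, y⟫ + ‖y‖ ^ 2 := norm_sub_sq_real _ _
    rw [hmaps x hx, hmaps y hy, h1, e2] at e1
    rw [hx, hy] at e1
    linarith
  set f : H → K := fun x => if x = 0 then 0 else ‖x‖ • T (‖x‖⁻¹ • x) with hfdef
  have hf0 : f 0 = 0 := if_pos rfl
  have hfval : ∀ x : H, x ≠ 0 → f x = ‖x‖ • T (‖x‖⁻¹ • x) := fun x hx => if_neg hx
  have hunit : ∀ x : H, x ≠ 0 → ‖(‖x‖⁻¹ • x)‖ = 1 := by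
    intro x hx
    rw [norm_smul, norm_inv, norm_norm, inv_mul_cancel₀ (norm_ne_zero_iff.2 hx)]
  -- f preserves inner products everywhere
  have finner : ∀ x y : H, ⟪f x, f y⟫ = ⟪x, y⟫ := by
    intro x y
    by_cases hx : x = 0
    · subst hx; simp [hf0]
    by_cases hy : y = 0
    · subst hy; simp [hf0]
    have hnx : ‖x‖ ≠ 0 := norm_ne_zero_iff.2 hx
    have hny : ‖y‖ ≠ 0 := norm_ne_zero_iff.2 hy
    rw [hfval x hx, hfval y hy, real_inner_smul_left, real_inner_smul_right,
      hinner _ _ (hunit x hx) (hunit y hy), real_inner_smul_left, real_inner_smul_right]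
    field_simp
  have fadd : ∀ x y : H, f (x + y) = f x + f y := by
    intro x y
    have h0 : ⟪f (x + y) - (f x + f y), f (x + y) - (f x + f y)⟫ = 0 := by
      simp only [inner_sub_left, inner_sub_right, inner_add_left, inner_add_right, finner]
      ring
    exact sub_eq_zero.mp (inner_self_eq_zero.mp h0)
  have fsmul : ∀ (c : ℝ) (x : H), f (c • x) = c • f x := by
    intro c x
    have h0 : ⟪f (c • x) - c • f x, f (c • x) - c • f x⟫ = 0 := by
      simp only [inner_sub_left, inner_sub_right, real_inner_smul_left,
        real_inner_smul_right, finner]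
      ring
    exact sub_eq_zero.mp (inner_self_eq_zero.mp h0)
  have fnorm : ∀ x : H, ‖f x‖ = ‖x‖ := by
    intro x
    have h := finner x x
    rw [real_inner_self_eq_norm_sq, real_inner_self_eq_norm_sq] at h
    nlinarith [norm_nonneg (f x), norm_nonneg x]
  have hfid : ∀ x : H, ‖x‖ = 1 → f x = T x := by
    intro x hx
    have hx0 : x ≠ 0 := by
      intro h; rw [h, norm_zero] at hx; norm_num at hx
    rw [hfval x hx0, hx, inv_one, one_smul, one_smul]
  refine ⟨⟨{ toFun := f, map_add' := fadd, map_smul' := fsmul }, fnorm⟩, ?_, ?_⟩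
  · intro y
    by_cases hy : y = 0
    · exact ⟨0, by simpa [hy] using hf0⟩
    have hny : ‖y‖ ≠ 0 := norm_ne_zero_iff.2 hy
    obtain ⟨x, hx1, hTx⟩ := hsurj (‖y‖⁻¹ • y) (by
      rw [norm_smul, norm_inv, norm_norm, inv_mul_cancel₀ hny])
    refine ⟨‖y‖ • x, ?_⟩
    have : f (‖y‖ • x) = ‖y‖ • f x := fsmul _ _
    show f (‖y‖ • x) = y
    rw [this, hfid x hx1, hTx, smul_inv_smul₀ hny]
  · intro x hx
    exact hfid x hx
end

section
/- Let X and Y be real Banach spaces, let B ⊆ X and C ⊆ Y be closed convex sets with nonempty interior, and let f : B → C be a surjective isometry. Then f extends to a bijective affine isometry from X onto Y (Mankiewicz's theorem). In particular, if moreover 0 ∈ B and f(0) = 0, the extension is a surjective linear isometry. -/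
open Set Metric

set_option maxHeartbeats 1000000

/-- Rigidity: if a point `y` has the same distances as `u` to every point of the
closed ball of radius `e` around the origin, and `‖u‖ ≤ 3e/2`, then `y = u`. -/
lemma rigid_aux {X : Type*} [NormedAddCommGroup X] [NormedSpace ℝ X]
    {e : ℝ} (he : 0 < e) {u y : X} (hu : ‖u‖ ≤ 3/2 * e)
    (H : ∀ z : X, ‖z‖ ≤ e → ‖y - z‖ = ‖u - z‖) : y = u := by
  rcases le_or_gt ‖u‖ e with hue | hue
  · have := H u hue
    simpa [sub_eq_zero] using this
  -- main case
  obtain ⟨d, hd_def⟩ : ∃ d : ℝ, d = ‖u‖ - e := ⟨_, rfl⟩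
  have hd0 : 0 < d := by rw [hd_def]; linarith
  have hd2 : d ≤ e / 2 := by rw [hd_def]; linarith
  have hu0 : u ≠ 0 := by
    intro h; rw [h, norm_zero] at hue; linarith
  have hnu : (0:ℝ) < ‖u‖ := norm_pos_iff.2 hu0
  have hed : e + d = ‖u‖ := by rw [hd_def]; ring
  obtain ⟨uh, huh, hu_eq⟩ : ∃ uh : X, ‖uh‖ = 1 ∧ u = (e + d) • uh := by
    refine ⟨‖u‖⁻¹ • u, ?_, ?_⟩
    · rw [norm_smul, norm_inv, norm_norm, inv_mul_cancel₀ hnu.ne']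
    · rw [smul_smul, hed, mul_inv_cancel₀ hnu.ne', one_smul]
  have hynorm : ‖y‖ = e + d := by
    have h0 := H 0 (by simp [he.le])
    simp only [sub_zero] at h0
    rw [h0, hed]
  have hyz1 : ‖y - e • uh‖ = d := by
    have hz1 : ‖e • uh‖ ≤ e := by rw [norm_smul, huh]; simp [abs_of_pos he, he.le]
    have h2 := H (e • uh) hz1
    rw [h2, hu_eq, ← sub_smul]
    have h3 : e + d - e = d := by ring
    rw [h3, norm_smul, huh, Real.norm_eq_abs, abs_of_pos hd0, mul_one]
  obtain ⟨v, hvn, hy_eq⟩ : ∃ v : X, ‖v‖ = 1 ∧ y = e • uh + d • v := by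
    refine ⟨d⁻¹ • (y - e • uh), ?_, ?_⟩
    · rw [norm_smul, norm_inv, Real.norm_eq_abs, abs_of_pos hd0, hyz1,
        inv_mul_cancel₀ hd0.ne']
    · rw [smul_smul, mul_inv_cancel₀ hd0.ne', one_smul]; abel
  have hy0 : y ≠ 0 := by
    intro h; rw [h, norm_zero] at hynorm; linarith
  obtain ⟨ξ, hξ1, hξy⟩ := exists_dual_vector ℝ y (norm_ne_zero_iff.2 hy0)
  have hξ_le : ∀ w : X, ξ w ≤ ‖w‖ := by
    intro w
    calc ξ w ≤ ‖ξ w‖ := le_abs_self _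
    _ ≤ ‖ξ‖ * ‖w‖ := ξ.le_opNorm w
    _ = ‖w‖ := by rw [hξ1, one_mul]
  have hξu : ξ uh = 1 ∧ ξ v = 1 := by
    have h1 : ξ y = e + d := by rw [hξy, hynorm]; norm_num
    have h2 : e * ξ uh + d * ξ v = e + d := by
      rw [hy_eq] at h1
      simpa [map_add, map_smul, smul_eq_mul] using h1
    have h3 : ξ uh ≤ 1 := by have := hξ_le uh; rwa [huh] at this
    have h4 : ξ v ≤ 1 := by have := hξ_le v; rwa [hvn] at this
    constructor <;> nlinarith
  obtain ⟨hξu, hξv⟩ := hξu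
  by_cases hveq : v = uh
  · rw [hy_eq, hveq, ← add_smul, ← hu_eq]
  -- the nondegenerate case: derive a contradiction
  exfalso
  have hwne : uh - v ≠ 0 := sub_ne_zero.2 (fun h => hveq h.symm)
  have hwpos : (0:ℝ) < ‖uh - v‖ := norm_pos_iff.2 hwne
  obtain ⟨N, hN_def⟩ : ∃ N : ℝ → ℝ, N = fun s => ‖uh + s • (uh - v)‖ := ⟨_, rfl⟩
  have hNs : ∀ s : ℝ, N s = ‖uh + s • (uh - v)‖ := fun s => by rw [hN_def]
  have hNcont : Continuous N := by
    rw [hN_def]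
    exact (continuous_const.add (continuous_id.smul continuous_const)).norm
  have hξNs : ∀ s : ℝ, ξ (uh + s • (uh - v)) = 1 := by
    intro s
    simp [map_add, map_smul, map_sub, hξu, hξv, smul_eq_mul]
  have hN_ge : ∀ s, 1 ≤ N s := by
    intro s
    rw [hNs]
    calc (1:ℝ) = ξ (uh + s • (uh - v)) := (hξNs s).symm
    _ ≤ ‖uh + s • (uh - v)‖ := hξ_le _
  have hN0 : N 0 = 1 := by rw [hNs]; simp [huh]
  have hNm1 : N (-1) = 1 := by
    rw [hNs]
    have : uh + (-1 : ℝ) • (uh - v) = v := by module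
    rw [this, hvn]
  have hN_conv : ∀ s t θ : ℝ, 0 ≤ θ → θ ≤ 1 →
      N (θ * s + (1 - θ) * t) ≤ θ * N s + (1 - θ) * N t := by
    intro s t θ hθ0 hθ1
    have key : uh + (θ * s + (1 - θ) * t) • (uh - v)
        = θ • (uh + s • (uh - v)) + (1 - θ) • (uh + t • (uh - v)) := by module
    rw [hNs, hNs, hNs, key]
    calc ‖θ • (uh + s • (uh - v)) + (1 - θ) • (uh + t • (uh - v))‖
        ≤ ‖θ • (uh + s • (uh - v))‖ + ‖(1 - θ) • (uh + t • (uh - v))‖ := norm_add_le _ _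
    _ = θ * ‖uh + s • (uh - v)‖ + (1 - θ) * ‖uh + t • (uh - v)‖ := by
        rw [norm_smul, norm_smul, Real.norm_eq_abs, Real.norm_eq_abs,
          abs_of_nonneg hθ0, abs_of_nonneg (by linarith)]
  have hN_interval : ∀ a b x : ℝ, N a = 1 → N b = 1 → a ≤ x → x ≤ b → N x = 1 := by
    intro a b x ha hb hax hxb
    rcases eq_or_lt_of_le (hax.trans hxb) with h | h
    · have : x = a := le_antisymm (h ▸ hxb) hax
      rw [this, ha]
    · have hba : 0 < b - a := by linarith
      have hθ0 : 0 ≤ (b - x) / (b - a) := div_nonneg (by linarith) hba.le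
      have hθ1 : (b - x) / (b - a) ≤ 1 := by
        rw [div_le_one hba]; linarith
      have hx_eq : x = ((b - x) / (b - a)) * a + (1 - (b - x) / (b - a)) * b := by
        field_simp
        ring
      have h2 := hN_conv a b ((b - x) / (b - a)) hθ0 hθ1
      rw [← hx_eq, ha, hb] at h2
      have h1 := hN_ge x
      linarith
  have hface : ∀ s : ℝ, -1 ≤ s → s ≤ 0 → N s = 1 :=
    fun s h1 h2 => hN_interval (-1) 0 s hNm1 hN0 h1 h2
  have habs : ∀ s : ℝ, N s = 1 → |s| ≤ 2 / ‖uh - v‖ := by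
    intro s hs
    have h0 : uh + s • (uh - v) - uh = s • (uh - v) := by abel
    have h1 : ‖s • (uh - v)‖ ≤ N s + ‖uh‖ := by
      rw [← h0, hNs]
      exact norm_sub_le _ _
    rw [hs, norm_smul, Real.norm_eq_abs, huh] at h1
    rw [le_div_iff₀ hwpos]
    linarith
  -- the face parameter sets
  obtain ⟨Iu, hIu_def⟩ : ∃ I : Set ℝ, I = {s | 0 ≤ s ∧ N s = 1} := ⟨_, rfl⟩
  obtain ⟨Iv, hIv_def⟩ : ∃ I : Set ℝ, I = {s | 0 ≤ s ∧ N (-1 - s) = 1} := ⟨_, rfl⟩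
  have hIu0 : (0:ℝ) ∈ Iu := by rw [hIu_def]; exact ⟨le_refl _, hN0⟩
  have hIv0 : (0:ℝ) ∈ Iv := by
    rw [hIv_def]
    refine ⟨le_refl _, ?_⟩
    norm_num
    exact hNm1
  have hIu_bdd : BddAbove Iu := by
    refine ⟨2 / ‖uh - v‖, fun s hs => ?_⟩
    rw [hIu_def] at hs
    have := habs s hs.2
    calc s ≤ |s| := le_abs_self s
    _ ≤ _ := this
  have hIv_bdd : BddAbove Iv := by
    refine ⟨2 / ‖uh - v‖, fun s hs => ?_⟩
    rw [hIv_def] at hs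
    have := habs (-1 - s) hs.2
    have h2 : s ≤ |(-1 - s)| := by
      have : s + 1 ≤ |(-1) - s| := by
        rw [abs_sub_comm]
        calc s + 1 ≤ |s + 1| := le_abs_self _
        _ = |s - (-1)| := by norm_num
      calc s ≤ s + 1 := by linarith
      _ ≤ |(-1) - s| := this
      _ = |(-1 - s)| := by norm_num
    linarith
  have hIu_closed : IsClosed Iu := by
    rw [hIu_def]
    have : {s : ℝ | 0 ≤ s ∧ N s = 1} = {s | 0 ≤ s} ∩ N ⁻¹' {1} := by
      ext s; simp
    rw [this]
    exact (isClosed_le continuous_const continuous_id).inter (isClosed_singleton.preimage hNcont)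
  have hIv_closed : IsClosed Iv := by
    rw [hIv_def]
    have : {s : ℝ | 0 ≤ s ∧ N (-1 - s) = 1}
        = {s | 0 ≤ s} ∩ (fun s => N (-1 - s)) ⁻¹' {1} := by
      ext s; simp
    rw [this]
    exact (isClosed_le continuous_const continuous_id).inter
      (isClosed_singleton.preimage (hNcont.comp (continuous_const.sub continuous_id)))
  obtain ⟨Su, hSu_def⟩ : ∃ S : ℝ, S = sSup Iu := ⟨_, rfl⟩
  obtain ⟨Sv, hSv_def⟩ : ∃ S : ℝ, S = sSup Iv := ⟨_, rfl⟩
  have hSu_mem : Su ∈ Iu := by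
    rw [hSu_def]; exact hIu_closed.csSup_mem ⟨0, hIu0⟩ hIu_bdd
  have hSv_mem : Sv ∈ Iv := by
    rw [hSv_def]; exact hIv_closed.csSup_mem ⟨0, hIv0⟩ hIv_bdd
  have hSu_lub : ∀ s ∈ Iu, s ≤ Su := by
    intro s hs; rw [hSu_def]; exact le_csSup hIu_bdd hs
  have hSv_lub : ∀ s ∈ Iv, s ≤ Sv := by
    intro s hs; rw [hSv_def]; exact le_csSup hIv_bdd hs
  rw [hIu_def] at hSu_mem
  rw [hIv_def] at hSv_mem
  have hSu0 : 0 ≤ Su := hSu_mem.1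
  have hSv0 : 0 ≤ Sv := hSv_mem.1
  have hIu_interval : ∀ s, 0 ≤ s → s ≤ Su → N s = 1 :=
    fun s h0 h1 => hN_interval 0 Su s hN0 hSu_mem.2 h0 h1
  have hIv_interval : ∀ s, 0 ≤ s → s ≤ Sv → N (-1 - s) = 1 := by
    intro s h0 h1
    exact hN_interval (-1 - Sv) (-1) (-1 - s) hSv_mem.2 hNm1 (by linarith) (by linarith)
  -- the key relation coming from the hypothesis H
  have hrel : ∀ τ : ℝ, N (-τ) ≤ 1 → N (e * τ / d) = N (e * τ / d - 1) := by
    intro τ hτ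
    have hz_norm : ‖e • (uh + (-τ) • (uh - v))‖ ≤ e := by
      rw [norm_smul, Real.norm_eq_abs, abs_of_pos he, ← hNs]
      nlinarith [hτ, he]
    have hH := H (e • (uh + (-τ) • (uh - v))) hz_norm
    have hd' : d ≠ 0 := hd0.ne'
    have hscal : d * (e * τ / d) = e * τ := by field_simp
    have hscal2 : d * (e * τ / d - 1) = e * τ - d := by
      rw [mul_sub, hscal, mul_one]
    have hrhs1 : d • (uh + (e * τ / d) • (uh - v)) = d • uh + (e * τ) • (uh - v) := by
      rw [smul_add, smul_smul, hscal]
    have hrhs2 : d • (uh + (e * τ / d - 1) • (uh - v))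
        = d • uh + (e * τ - d) • (uh - v) := by
      rw [smul_add, smul_smul, hscal2]
    have hu_side : u - e • (uh + (-τ) • (uh - v)) = d • (uh + (e * τ / d) • (uh - v)) := by
      rw [hu_eq, hrhs1]
      module
    have hy_side : y - e • (uh + (-τ) • (uh - v))
        = d • (uh + (e * τ / d - 1) • (uh - v)) := by
      rw [hy_eq, hrhs2]
      module
    rw [hu_side, hy_side] at hH
    rw [norm_smul, norm_smul, Real.norm_eq_abs, abs_of_pos hd0, ← hNs, ← hNs] at hH
    have := mul_left_cancel₀ hd0.ne' hH
    exact this.symm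
  -- step (i): 1 ∈ Iu
  have hSu1 : 1 ≤ Su := by
    apply hSu_lub
    rw [hIu_def]
    refine ⟨zero_le_one, ?_⟩
    have hde1 : d / e ≤ 1 := by rw [div_le_one he]; linarith
    have hde0 : 0 ≤ d / e := by positivity
    have hleg : N (-(d / e)) ≤ 1 := (hface _ (by linarith) (by linarith)).le
    have h2 := hrel (d / e) hleg
    have h3 : e * (d / e) / d = 1 := by field_simp
    rw [h3] at h2
    norm_num at h2
    rw [h2, hN0]
  -- step (ii)
  have hii : ¬ (d * (Su + 1) / e ≤ 1 + Sv) := by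
    intro hcon
    have hτ0 : 0 ≤ d * (Su + 1) / e := by positivity
    have hleg : N (-(d * (Su + 1) / e)) ≤ 1 := by
      rcases le_or_gt (d * (Su + 1) / e) 1 with h | h
      · exact (hface _ (by linarith) (by linarith)).le
      · have h2 := hIv_interval (d * (Su + 1) / e - 1) (by linarith) (by linarith)
        have h3 : (-1 - (d * (Su + 1) / e - 1)) = -(d * (Su + 1) / e) := by ring
        rw [h3] at h2
        exact h2.le
    have h2 := hrel (d * (Su + 1) / e) hleg
    have h3 : e * (d * (Su + 1) / e) / d = Su + 1 := by field_simp
    rw [h3] at h2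
    have h4 : Su + 1 - 1 = Su := by ring
    rw [h4, hSu_mem.2] at h2
    have h5 : Su + 1 ≤ Su := by
      apply hSu_lub
      rw [hIu_def]
      exact ⟨by linarith, h2⟩
    linarith
  -- step (iii)
  have hiii : ¬ (d * (Sv + 1) / e ≤ Su) := by
    intro hcon
    have hτ0 : 0 ≤ d * (Sv + 1) / e := by positivity
    have hleg : N (-(-(d * (Sv + 1) / e))) ≤ 1 := by
      rw [neg_neg]
      exact (hIu_interval _ hτ0 hcon).le
    have h2 := hrel (-(d * (Sv + 1) / e)) hleg
    have h3 : e * (-(d * (Sv + 1) / e)) / d = -(Sv + 1) := by field_simp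
    rw [h3] at h2
    have hL : N (-(Sv + 1)) = 1 := by
      rw [show -(Sv + 1) = -1 - Sv by ring]
      exact hSv_mem.2
    rw [hL] at h2
    have hR : N (-1 - (Sv + 1)) = 1 := by
      rw [show (-1 - (Sv + 1) : ℝ) = -(Sv + 1) - 1 by ring]
      exact h2.symm
    have h5 : Sv + 1 ≤ Sv := by
      apply hSv_lub
      rw [hIv_def]
      exact ⟨by linarith, hR⟩
    linarith
  -- final contradiction
  push_neg at hii hiii
  rw [lt_div_iff₀ he] at hiii
  have hii' : (1 + Sv) * e < d * (Su + 1) := by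
    have h9 := hii
    rw [lt_div_iff₀ he] at h9
    exact h9
  nlinarith [hii', hiii, hd2, hSu1, hSv0, he, hd0]

lemma midpoint_pres {X Y : Type*} [NormedAddCommGroup X] [NormedSpace ℝ X]
    [NormedAddCommGroup Y] [NormedSpace ℝ Y]
    {B : Set X} {C : Set Y} {f : X → Y} {finv : Y → X}
    (hiso : ∀ x ∈ B, ∀ y ∈ B, ‖f x - f y‖ = ‖x - y‖)
    (hfinv_mem : ∀ y ∈ C, finv y ∈ B)
    (hfinv_right : ∀ y ∈ C, f (finv y) = y)
    (hfinv_left : ∀ x ∈ B, finv (f x) = x)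
    {a : X} {r : ℝ}
    (hBall : Metric.closedBall a r ⊆ B)
    (hBall' : Metric.closedBall (f a) r ⊆ C)
    {u v : X} (hu : u ∈ Metric.closedBall a (r/4)) (hv : v ∈ Metric.closedBall a (r/4)) :
    f (midpoint ℝ u v) = midpoint ℝ (f u) (f v) := by
  rcases eq_or_ne u v with rfl | huv
  · simp [midpoint_self]
  -- basic facts
  have hr4 : (0:ℝ) ≤ r / 4 := le_trans dist_nonneg (mem_closedBall.1 hu)
  have hr : (0:ℝ) ≤ r := by linarith
  have haB : a ∈ B := hBall (mem_closedBall.2 (by rw [dist_self]; exact hr))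
  obtain ⟨t, ht_def⟩ : ∃ t : ℝ, t = ‖u - v‖ := ⟨_, rfl⟩
  have ht0 : 0 < t := by rw [ht_def]; exact norm_pos_iff.2 (sub_ne_zero.2 huv)
  have hdu : dist u a ≤ r/4 := mem_closedBall.1 hu
  have hdv : dist v a ≤ r/4 := mem_closedBall.1 hv
  have ht2 : t ≤ r/2 := by
    rw [ht_def, ← dist_eq_norm]
    calc dist u v ≤ dist u a + dist v a := dist_triangle_right u v a
    _ ≤ r/4 + r/4 := add_le_add hdu hdv
    _ = r/2 := by ring
  have huB : u ∈ B := hBall (mem_closedBall.1 hu |>.trans (by linarith) |> mem_closedBall.2)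
  have hvB : v ∈ B := hBall (mem_closedBall.1 hv |>.trans (by linarith) |> mem_closedBall.2)
  obtain ⟨D, hD_def⟩ : ∃ D : Set X,
      D = Metric.closedBall u t ∩ Metric.closedBall v t := ⟨_, rfl⟩
  obtain ⟨D', hD'_def⟩ : ∃ D' : Set Y,
      D' = Metric.closedBall (f u) t ∩ Metric.closedBall (f v) t := ⟨_, rfl⟩
  have hD_mem : ∀ x, x ∈ D ↔ (‖x - u‖ ≤ t ∧ ‖x - v‖ ≤ t) := by
    intro x
    rw [hD_def]
    simp [mem_closedBall, dist_eq_norm]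
  have hD'_mem : ∀ y, y ∈ D' ↔ (‖y - f u‖ ≤ t ∧ ‖y - f v‖ ≤ t) := by
    intro y
    rw [hD'_def]
    simp [mem_closedBall, dist_eq_norm]
  have hDB : D ⊆ B := by
    intro x hx
    rw [hD_mem] at hx
    apply hBall
    rw [mem_closedBall, dist_eq_norm]
    calc ‖x - a‖ ≤ ‖x - u‖ + ‖u - a‖ := norm_sub_le_norm_sub_add_norm_sub x u a
    _ ≤ t + r/4 := add_le_add hx.1 (by rw [← dist_eq_norm]; exact hdu)
    _ ≤ r := by linarith
  have hD'C : D' ⊆ C := by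
    intro y hy
    rw [hD'_mem] at hy
    apply hBall'
    rw [mem_closedBall, dist_eq_norm]
    have hfua : ‖f u - f a‖ = ‖u - a‖ := hiso u huB a haB
    calc ‖y - f a‖ ≤ ‖y - f u‖ + ‖f u - f a‖ := norm_sub_le_norm_sub_add_norm_sub _ _ _
    _ ≤ t + r/4 := by
        rw [hfua]
        exact add_le_add hy.1 (by rw [← dist_eq_norm]; exact hdu)
    _ ≤ r := by linarith
  -- f maps D to D' and finv back
  have hfD : ∀ x ∈ D, f x ∈ D' := by
    intro x hx
    have hxB := hDB hx
    rw [hD_mem] at hx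
    rw [hD'_mem]
    rw [hiso x hxB u huB, hiso x hxB v hvB]
    exact hx
  have hfinvD : ∀ y ∈ D', finv y ∈ D := by
    intro y hy
    have hyC := hD'C hy
    have hfb := hfinv_mem y hyC
    rw [hD'_mem] at hy
    rw [hD_mem]
    have h1 : ‖finv y - u‖ = ‖y - f u‖ := by
      rw [← hiso (finv y) hfb u huB, hfinv_right y hyC]
    have h2 : ‖finv y - v‖ = ‖y - f v‖ := by
      rw [← hiso (finv y) hfb v hvB, hfinv_right y hyC]
    rw [h1, h2]
    exact hy
  -- reflections
  obtain ⟨σ, hσ_def⟩ : ∃ σ : X → X, σ = fun x => u + v - x := ⟨_, rfl⟩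
  obtain ⟨σ', hσ'_def⟩ : ∃ σ' : Y → Y, σ' = fun y => f u + f v - y := ⟨_, rfl⟩
  have hσ_eval : ∀ x, σ x = u + v - x := fun x => by rw [hσ_def]
  have hσ'_eval : ∀ y, σ' y = f u + f v - y := fun y => by rw [hσ'_def]
  have hσD : ∀ x ∈ D, σ x ∈ D := by
    intro x hx
    rw [hD_mem] at hx ⊢
    rw [hσ_eval]
    constructor
    · have : u + v - x - u = -(x - v) := by abel
      rw [this, norm_neg]; exact hx.2
    · have : u + v - x - v = -(x - u) := by abel
      rw [this, norm_neg]; exact hx.1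
  have hσ'D : ∀ y ∈ D', σ' y ∈ D' := by
    intro y hy
    rw [hD'_mem] at hy ⊢
    rw [hσ'_eval]
    constructor
    · have : f u + f v - y - f u = -(y - f v) := by abel
      rw [this, norm_neg]; exact hy.2
    · have : f u + f v - y - f v = -(y - f u) := by abel
      rw [this, norm_neg]; exact hy.1
  have hσ_diff : ∀ x y : X, ‖σ x - σ y‖ = ‖x - y‖ := by
    intro x y
    rw [hσ_eval, hσ_eval]
    have : u + v - x - (u + v - y) = -(x - y) := by abel
    rw [this, norm_neg]
  have hσ'_diff : ∀ x y : Y, ‖σ' x - σ' y‖ = ‖x - y‖ := by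
    intro x y
    rw [hσ'_eval, hσ'_eval]
    have : f u + f v - x - (f u + f v - y) = -(x - y) := by abel
    rw [this, norm_neg]
  -- midpoint
  obtain ⟨m, hm_def⟩ : ∃ m : X, m = midpoint ℝ u v := ⟨_, rfl⟩
  have hm2 : m + m = u + v := by rw [hm_def]; exact midpoint_add_self ℝ u v
  have hσm : σ m = m := by rw [hσ_eval, ← hm2]; abel
  have hmu : ‖m - u‖ = t/2 := by
    have h9 : (2:ℝ) • (m - u) = v - u := by
      rw [two_smul]
      have h8 : (m - u) + (m - u) = (m + m) - (u + u) := by abel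
      rw [h8, hm2]; abel
    have h10 := congrArg norm h9
    rw [norm_smul, Real.norm_ofNat, norm_sub_rev v u, ← ht_def] at h10
    linarith
  have hmv : ‖m - v‖ = t/2 := by
    have h9 : (2:ℝ) • (m - v) = u - v := by
      rw [two_smul]
      have h8 : (m - v) + (m - v) = (m + m) - (v + v) := by abel
      rw [h8, hm2]; abel
    have h10 := congrArg norm h9
    rw [norm_smul, Real.norm_ofNat, ← ht_def] at h10
    linarith
  have hmD : m ∈ D := by
    rw [hD_mem]
    exact ⟨by rw [hmu]; linarith, by rw [hmv]; linarith⟩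
  have huD : u ∈ D := by
    rw [hD_mem]
    exact ⟨by rw [sub_self, norm_zero]; linarith, by rw [← ht_def]⟩
  have hvD : v ∈ D := by
    rw [hD_mem]
    exact ⟨by rw [norm_sub_rev, ← ht_def], by rw [sub_self, norm_zero]; linarith⟩
  -- the base isometry h₀
  obtain ⟨h₀, hh₀_def⟩ : ∃ h₀ : X → X, h₀ = fun x => σ (finv (σ' (f x))) := ⟨_, rfl⟩
  have hh₀_eval : ∀ x, h₀ x = σ (finv (σ' (f x))) := fun x => by rw [hh₀_def]
  -- `Good` packaged props
  -- prove good for h₀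
  have hfinv_iso : ∀ p ∈ C, ∀ q ∈ C, ‖finv p - finv q‖ = ‖p - q‖ := by
    intro p hp q hq
    rw [← hiso (finv p) (hfinv_mem p hp) (finv q) (hfinv_mem q hq),
      hfinv_right p hp, hfinv_right q hq]
  have h₀_maps : ∀ x ∈ D, h₀ x ∈ D := by
    intro x hx
    rw [hh₀_eval]
    exact hσD _ (hfinvD _ (hσ'D _ (hfD _ hx)))
  have h₀_iso : ∀ p ∈ D, ∀ q ∈ D, ‖h₀ p - h₀ q‖ = ‖p - q‖ := by
    intro p hp q hq
    rw [hh₀_eval, hh₀_eval, hσ_diff]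
    rw [hfinv_iso _ (hD'C (hσ'D _ (hfD _ hp))) _ (hD'C (hσ'D _ (hfD _ hq)))]
    rw [hσ'_diff]
    exact hiso p (hDB hp) q (hDB hq)
  have h₀_u : h₀ u = u := by
    rw [hh₀_eval]
    have h1 : σ' (f u) = f v := by rw [hσ'_eval]; abel
    rw [h1, hfinv_left v hvB, hσ_eval]
    abel
  have h₀_v : h₀ v = v := by
    rw [hh₀_eval]
    have h1 : σ' (f v) = f u := by rw [hσ'_eval]; abel
    rw [h1, hfinv_left u huB, hσ_eval]
    abel
  have hσσ : ∀ x, σ (σ x) = x := by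
    intro x; rw [hσ_eval, hσ_eval]; abel
  have hσ'σ' : ∀ y, σ' (σ' y) = y := by
    intro y; rw [hσ'_eval, hσ'_eval]; abel
  have h₀_surj : ∀ x ∈ D, ∃ p ∈ D, h₀ p = x := by
    intro x hx
    refine ⟨finv (σ' (f (σ x))), hfinvD _ (hσ'D _ (hfD _ (hσD _ hx))), ?_⟩
    rw [hh₀_eval]
    have hmem : σ' (f (σ x)) ∈ D' := hσ'D _ (hfD _ (hσD _ hx))
    rw [hfinv_right _ (hD'C hmem), hσ'σ', hfinv_left _ (hDB (hσD _ hx)), hσσ]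
  -- the doubling step
  have hstar : ∀ h : X → X,
      (∀ x ∈ D, h x ∈ D) → (∀ p ∈ D, ∀ q ∈ D, ‖h p - h q‖ = ‖p - q‖) →
      h u = u → h v = v → (∀ x ∈ D, ∃ p ∈ D, h p = x) →
      ∃ h' : X → X, (∀ x ∈ D, h' x ∈ D) ∧
        (∀ p ∈ D, ∀ q ∈ D, ‖h' p - h' q‖ = ‖p - q‖) ∧
        h' u = u ∧ h' v = v ∧ (∀ x ∈ D, ∃ p ∈ D, h' p = x) ∧
        ‖h' m - m‖ = 2 * ‖h m - m‖ := by
    intro h hmaps hhiso hhu hhv hhsurj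
    have hinjD : ∀ p ∈ D, ∀ q ∈ D, h p = h q → p = q := by
      intro p hp q hq heq
      have h0 : ‖p - q‖ = 0 := by
        rw [← hhiso p hp q hq, heq, sub_self, norm_zero]
      exact sub_eq_zero.1 (norm_eq_zero.1 h0)
    classical
    obtain ⟨g, hg_def⟩ : ∃ g : X → X, g = Function.invFunOn h D := ⟨_, rfl⟩
    have hg_mem : ∀ q ∈ D, g q ∈ D := by
      intro q hq
      obtain ⟨p, hp, hpq⟩ := hhsurj q hq
      rw [hg_def]
      exact Function.invFunOn_mem ⟨p, hp, hpq⟩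
    have hg_right : ∀ q ∈ D, h (g q) = q := by
      intro q hq
      obtain ⟨p, hp, hpq⟩ := hhsurj q hq
      rw [hg_def]
      exact Function.invFunOn_eq ⟨p, hp, hpq⟩
    have hg_left : ∀ p ∈ D, g (h p) = p := by
      intro p hp
      apply hinjD _ (hg_mem _ (hmaps _ hp)) _ hp
      exact hg_right _ (hmaps _ hp)
    have hg_iso : ∀ p ∈ D, ∀ q ∈ D, ‖g p - g q‖ = ‖p - q‖ := by
      intro p hp q hq
      rw [← hhiso _ (hg_mem _ hp) _ (hg_mem _ hq), hg_right _ hp, hg_right _ hq]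
    obtain ⟨h', hh'_def⟩ : ∃ h' : X → X, h' = fun x => σ (g (σ (h x))) := ⟨_, rfl⟩
    have hh'_eval : ∀ x, h' x = σ (g (σ (h x))) := fun x => by rw [hh'_def]
    refine ⟨h', ?_, ?_, ?_, ?_, ?_, ?_⟩
    · intro x hx
      rw [hh'_eval]
      exact hσD _ (hg_mem _ (hσD _ (hmaps _ hx)))
    · intro p hp q hq
      rw [hh'_eval, hh'_eval, hσ_diff,
        hg_iso _ (hσD _ (hmaps _ hp)) _ (hσD _ (hmaps _ hq)), hσ_diff,
        hhiso _ hp _ hq]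
    · rw [hh'_eval, hhu]
      have h1 : σ u = v := by rw [hσ_eval]; abel
      rw [h1]
      have h2 : g v = v := by
        have h3 := hg_left v hvD
        rwa [hhv] at h3
      rw [h2]
      rw [hσ_eval]; abel
    · rw [hh'_eval, hhv]
      have h1 : σ v = u := by rw [hσ_eval]; abel
      rw [h1]
      have h2 : g u = u := by
        have h3 := hg_left u huD
        rwa [hhu] at h3
      rw [h2]
      rw [hσ_eval]; abel
    · intro x hx
      refine ⟨g (σ (h (σ x))), hg_mem _ (hσD _ (hmaps _ (hσD _ hx))), ?_⟩
      rw [hh'_eval]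
      rw [hg_right _ (hσD _ (hmaps _ (hσD _ hx))), hσσ,
        hg_left _ (hσD _ hx), hσσ]
    · have hq : h m ∈ D := hmaps _ hmD
      have hp : g (σ (h m)) ∈ D := hg_mem _ (hσD _ hq)
      rw [hh'_eval]
      calc ‖σ (g (σ (h m))) - m‖ = ‖σ (g (σ (h m))) - σ m‖ := by rw [hσm]
      _ = ‖g (σ (h m)) - m‖ := hσ_diff _ _
      _ = ‖h (g (σ (h m))) - h m‖ := (hhiso _ hp _ hmD).symm
      _ = ‖σ (h m) - h m‖ := by rw [hg_right _ (hσD _ hq)]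
      _ = 2 * ‖h m - m‖ := by
          have h1 : σ (h m) - h m = -((2:ℝ) • (h m - m)) := by
            rw [hσ_eval, ← hm2]
            module
          rw [h1, norm_neg, norm_smul, Real.norm_ofNat]
  -- iterate the doubling
  have hiter : ∀ n : ℕ, ∃ h : X → X, (∀ x ∈ D, h x ∈ D) ∧
      (∀ p ∈ D, ∀ q ∈ D, ‖h p - h q‖ = ‖p - q‖) ∧
      h u = u ∧ h v = v ∧ (∀ x ∈ D, ∃ p ∈ D, h p = x) ∧
      ‖h m - m‖ = 2^n * ‖h₀ m - m‖ := by
    intro n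
    induction n with
    | zero => exact ⟨h₀, h₀_maps, h₀_iso, h₀_u, h₀_v, h₀_surj, by norm_num⟩
    | succ k ih =>
      obtain ⟨h, a1, a2, a3, a4, a5, a6⟩ := ih
      obtain ⟨h', b1, b2, b3, b4, b5, b6⟩ := hstar h a1 a2 a3 a4 a5
      exact ⟨h', b1, b2, b3, b4, b5, by rw [b6, a6]; ring⟩
  have hbound : ∀ n : ℕ, 2^n * ‖h₀ m - m‖ ≤ 2*t := by
    intro n
    obtain ⟨h, a1, a2, a3, a4, a5, a6⟩ := hiter n
    rw [← a6]
    have h1 : h m ∈ D := a1 _ hmD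
    rw [hD_mem] at h1
    calc ‖h m - m‖ ≤ ‖h m - u‖ + ‖u - m‖ := norm_sub_le_norm_sub_add_norm_sub _ _ _
    _ ≤ t + t := add_le_add h1.1 (by rw [norm_sub_rev]; linarith [hmu])
    _ = 2*t := by ring
  have hc0 : ‖h₀ m - m‖ = 0 := by
    by_contra hc
    have hcpos : 0 < ‖h₀ m - m‖ := lt_of_le_of_ne (norm_nonneg _) (Ne.symm hc)
    obtain ⟨n, hn⟩ := pow_unbounded_of_one_lt ((2*t)/‖h₀ m - m‖) one_lt_two
    have h2 := hbound n
    rw [div_lt_iff₀ hcpos] at hn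
    linarith
  have h₀m : h₀ m = m := by
    have h1 := hc0
    rwa [norm_eq_zero, sub_eq_zero] at h1
  -- unfold the conclusion
  have hfmD' : f m ∈ D' := hfD _ hmD
  have hσ'fm : σ' (f m) ∈ D' := hσ'D _ hfmD'
  have h1 : finv (σ' (f m)) = m := by
    have h2 : σ (finv (σ' (f m))) = m := by rw [← hh₀_eval]; exact h₀m
    have h3 := congrArg σ h2
    rwa [hσσ, hσm] at h3
  have h4 := congrArg f h1
  rw [hfinv_right _ (hD'C hσ'fm)] at h4
  rw [hσ'_eval] at h4
  have h9 : (f u + f v - f m) + f m = f m + f m := by rw [h4]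
  have h5 : f m + f m = f u + f v := by rw [← h9]; abel
  have h6 : midpoint ℝ (f u) (f v) + midpoint ℝ (f u) (f v) = f u + f v :=
    midpoint_add_self ℝ _ _
  have h7 : (2:ℝ) • f m = (2:ℝ) • midpoint ℝ (f u) (f v) := by
    rw [two_smul, two_smul, h5, h6]
  have h8 := smul_right_injective Y (by norm_num : (2:ℝ) ≠ 0) h7
  rw [← hm_def]
  exact h8

lemma midpoint_zero_left' {V : Type*} [NormedAddCommGroup V] [NormedSpace ℝ V] (w : V) :
    midpoint ℝ 0 w = (2⁻¹ : ℝ) • w := by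
  apply smul_right_injective V (by norm_num : (2:ℝ) ≠ 0)
  show (2:ℝ) • midpoint ℝ 0 w = (2:ℝ) • (2⁻¹:ℝ) • w
  rw [two_smul, midpoint_add_self, smul_smul]
  norm_num

lemma midpoint_smul'' {V : Type*} [NormedAddCommGroup V] [NormedSpace ℝ V] (c : ℝ) (p q : V) :
    c • midpoint ℝ p q = midpoint ℝ (c • p) (c • q) := by
  apply smul_right_injective V (by norm_num : (2:ℝ) ≠ 0)
  show (2:ℝ) • (c • midpoint ℝ p q) = (2:ℝ) • midpoint ℝ (c • p) (c • q)
  rw [two_smul, two_smul, midpoint_add_self]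
  have h1 : midpoint ℝ p q + midpoint ℝ p q = p + q := midpoint_add_self ℝ p q
  calc c • midpoint ℝ p q + c • midpoint ℝ p q
      = c • (midpoint ℝ p q + midpoint ℝ p q) := by rw [smul_add]
  _ = c • (p + q) := by rw [h1]
  _ = c • p + c • q := by rw [smul_add]

lemma norm_midpoint_le' {V : Type*} [NormedAddCommGroup V] [NormedSpace ℝ V] (p q : V) :
    ‖midpoint ℝ p q‖ ≤ max ‖p‖ ‖q‖ := by
  have h1 : (2:ℝ) • midpoint ℝ p q = p + q := by
    rw [two_smul]; exact midpoint_add_self ℝ p q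
  have h2 := congrArg norm h1
  rw [norm_smul, Real.norm_ofNat] at h2
  have h3 : ‖p + q‖ ≤ ‖p‖ + ‖q‖ := norm_add_le _ _
  have h4 : ‖p‖ ≤ max ‖p‖ ‖q‖ := le_max_left _ _
  have h5 : ‖q‖ ≤ max ‖p‖ ‖q‖ := le_max_right _ _
  nlinarith [norm_nonneg (midpoint ℝ p q)]

lemma extend_linear {X Y : Type*} [NormedAddCommGroup X] [NormedSpace ℝ X]
    [NormedAddCommGroup Y] [NormedSpace ℝ Y]
    {T : X → Y} {e₀ : ℝ} (he₀ : 0 < e₀)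
    (hT0 : T 0 = 0)
    (hT_iso : ∀ w w' : X, ‖w‖ ≤ e₀ → ‖w'‖ ≤ e₀ → ‖T w - T w'‖ = ‖w - w'‖)
    (hT_mid : ∀ w w' : X, ‖w‖ ≤ e₀ → ‖w'‖ ≤ e₀ →
      T (midpoint ℝ w w') = midpoint ℝ (T w) (T w')) :
    ∃ L : X →ₗ[ℝ] Y, (∀ w : X, ‖w‖ ≤ e₀ → L w = T w) ∧
      (∀ x y : X, ‖L x - L y‖ = ‖x - y‖) := by
  classical
  have h0e : ‖(0:X)‖ ≤ e₀ := by rw [norm_zero]; exact he₀.le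
  have hT_half : ∀ w : X, ‖w‖ ≤ e₀ → T ((2⁻¹:ℝ) • w) = (2⁻¹:ℝ) • T w := by
    intro w hw
    have h1 := hT_mid 0 w h0e hw
    rw [midpoint_zero_left', hT0, midpoint_zero_left'] at h1
    exact h1
  have hpow_le : ∀ n : ℕ, ((2:ℝ)⁻¹)^n ≤ 1 := by
    intro n
    apply pow_le_one₀ (by norm_num) (by norm_num)
  have hpow_pos : ∀ n : ℕ, (0:ℝ) < ((2:ℝ)⁻¹)^n := fun n => by positivity
  have hpow_mul : ∀ n : ℕ, ((2:ℝ)⁻¹)^n * (2:ℝ)^n = 1 := by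
    intro n
    rw [← mul_pow]
    norm_num
  have hmemn : ∀ (n : ℕ) (w : X), ‖w‖ ≤ (2:ℝ)^n * e₀ → ‖((2:ℝ)⁻¹)^n • w‖ ≤ e₀ := by
    intro n w hw
    rw [norm_smul, Real.norm_eq_abs, abs_of_pos (hpow_pos n)]
    calc ((2:ℝ)⁻¹)^n * ‖w‖ ≤ ((2:ℝ)⁻¹)^n * ((2:ℝ)^n * e₀) := by
          apply mul_le_mul_of_nonneg_left hw (hpow_pos n).le
    _ = e₀ := by rw [← mul_assoc, hpow_mul, one_mul]
  have hT_pow : ∀ (n : ℕ) (w : X), ‖w‖ ≤ e₀ →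
      T (((2:ℝ)⁻¹)^n • w) = ((2:ℝ)⁻¹)^n • T w := by
    intro n
    induction n with
    | zero => intro w hw; simp
    | succ k ih =>
      intro w hw
      have h1 : ((2:ℝ)⁻¹)^(k+1) • w = (2⁻¹:ℝ) • (((2:ℝ)⁻¹)^k • w) := by
        rw [smul_smul, ← pow_succ']
      have h2 : ‖((2:ℝ)⁻¹)^k • w‖ ≤ e₀ := by
        rw [norm_smul, Real.norm_eq_abs, abs_of_pos (hpow_pos k)]
        calc ((2:ℝ)⁻¹)^k * ‖w‖ ≤ 1 * ‖w‖ :=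
              mul_le_mul_of_nonneg_right (hpow_le k) (norm_nonneg w)
        _ = ‖w‖ := one_mul _
        _ ≤ e₀ := hw
      rw [h1, hT_half _ h2, ih w hw, smul_smul, ← pow_succ']
  have hex : ∀ x : X, ∃ n : ℕ, ‖x‖ ≤ (2:ℝ)^n * e₀ := by
    intro x
    obtain ⟨n, hn⟩ := pow_unbounded_of_one_lt (‖x‖/e₀) (by norm_num : (1:ℝ) < 2)
    refine ⟨n, ?_⟩
    rw [div_lt_iff₀ he₀] at hn
    linarith [hn]
  obtain ⟨Lf, hLf_def⟩ : ∃ Lf : X → Y,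
      Lf = fun x => (2:ℝ)^(Nat.find (hex x)) • T (((2:ℝ)⁻¹)^(Nat.find (hex x)) • x) :=
    ⟨_, rfl⟩
  have hstep : ∀ (m : ℕ) (x : X), ‖x‖ ≤ (2:ℝ)^m * e₀ →
      (2:ℝ)^(m+1) • T (((2:ℝ)⁻¹)^(m+1) • x) = (2:ℝ)^m • T (((2:ℝ)⁻¹)^m • x) := by
    intro m x hx
    have h1 : ((2:ℝ)⁻¹)^(m+1) • x = (2⁻¹:ℝ) • (((2:ℝ)⁻¹)^m • x) := by
      rw [smul_smul, ← pow_succ']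
    rw [h1, hT_half _ (hmemn m x hx), smul_smul]
    congr 1
    rw [pow_succ]
    ring
  have hmono : ∀ (m n : ℕ), m ≤ n → ∀ x : X, ‖x‖ ≤ (2:ℝ)^m * e₀ →
      (2:ℝ)^n • T (((2:ℝ)⁻¹)^n • x) = (2:ℝ)^m • T (((2:ℝ)⁻¹)^m • x) := by
    intro m n hmn
    induction n, hmn using Nat.le_induction with
    | base => intro x _; rfl
    | succ k hk ih =>
      intro x hx
      have hxk : ‖x‖ ≤ (2:ℝ)^k * e₀ := by
        calc ‖x‖ ≤ (2:ℝ)^m * e₀ := hx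
        _ ≤ (2:ℝ)^k * e₀ := by
            apply mul_le_mul_of_nonneg_right _ he₀.le
            exact pow_le_pow_right₀ (by norm_num) hk
      rw [hstep k x hxk, ih x hx]
  have hLf_eq : ∀ (n : ℕ) (x : X), ‖x‖ ≤ (2:ℝ)^n * e₀ →
      Lf x = (2:ℝ)^n • T (((2:ℝ)⁻¹)^n • x) := by
    intro n x hx
    rw [hLf_def]
    have hN : Nat.find (hex x) ≤ n := Nat.find_min' (hex x) hx
    have hNs : ‖x‖ ≤ (2:ℝ)^(Nat.find (hex x)) * e₀ := Nat.find_spec (hex x)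
    exact (hmono _ n hN x hNs).symm
  have hLf_small : ∀ w : X, ‖w‖ ≤ e₀ → Lf w = T w := by
    intro w hw
    have := hLf_eq 0 w (by rw [pow_zero, one_mul]; exact hw)
    rw [this]
    simp
  have hpair : ∀ x y : X, ∃ n : ℕ, ‖x‖ ≤ (2:ℝ)^n * e₀ ∧ ‖y‖ ≤ (2:ℝ)^n * e₀ := by
    intro x y
    obtain ⟨n₁, h₁⟩ := hex x
    obtain ⟨n₂, h₂⟩ := hex y
    refine ⟨max n₁ n₂, ?_, ?_⟩
    · calc ‖x‖ ≤ (2:ℝ)^n₁ * e₀ := h₁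
      _ ≤ (2:ℝ)^(max n₁ n₂) * e₀ := by
          apply mul_le_mul_of_nonneg_right _ he₀.le
          exact pow_le_pow_right₀ (by norm_num) (le_max_left _ _)
    · calc ‖y‖ ≤ (2:ℝ)^n₂ * e₀ := h₂
      _ ≤ (2:ℝ)^(max n₁ n₂) * e₀ := by
          apply mul_le_mul_of_nonneg_right _ he₀.le
          exact pow_le_pow_right₀ (by norm_num) (le_max_right _ _)
  have hLf_iso : ∀ x y : X, ‖Lf x - Lf y‖ = ‖x - y‖ := by
    intro x y
    obtain ⟨n, hx, hy⟩ := hpair x y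
    rw [hLf_eq n x hx, hLf_eq n y hy, ← smul_sub, norm_smul, Real.norm_eq_abs,
      abs_of_pos (by positivity : (0:ℝ) < (2:ℝ)^n),
      hT_iso _ _ (hmemn n x hx) (hmemn n y hy), ← smul_sub, norm_smul,
      Real.norm_eq_abs, abs_of_pos (hpow_pos n), ← mul_assoc]
    have : (2:ℝ)^n * ((2:ℝ)⁻¹)^n = 1 := by rw [mul_comm]; exact hpow_mul n
    rw [this, one_mul]
  have hLf_mid : ∀ x y : X, Lf (midpoint ℝ x y) = midpoint ℝ (Lf x) (Lf y) := by
    intro x y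
    obtain ⟨n, hx, hy⟩ := hpair x y
    have hm : ‖midpoint ℝ x y‖ ≤ (2:ℝ)^n * e₀ := by
      calc ‖midpoint ℝ x y‖ ≤ max ‖x‖ ‖y‖ := norm_midpoint_le' x y
      _ ≤ (2:ℝ)^n * e₀ := max_le hx hy
    rw [hLf_eq n _ hm, hLf_eq n x hx, hLf_eq n y hy]
    rw [midpoint_smul'' (((2:ℝ)⁻¹)^n) x y, hT_mid _ _ (hmemn n x hx) (hmemn n y hy),
      midpoint_smul'']
  have hLf_cont : Continuous Lf := by
    have hdist : ∀ x y : X, dist (Lf x) (Lf y) = dist x y := by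
      intro x y
      rw [dist_eq_norm, dist_eq_norm, hLf_iso]
    exact (Isometry.of_dist_eq hdist).continuous
  obtain ⟨Laff, hLaff⟩ : ∃ Laff : X →ᵃ[ℝ] Y, ⇑Laff = Lf :=
    ⟨AffineMap.ofMapMidpoint Lf hLf_mid hLf_cont, rfl⟩
  have hLf0 : Lf 0 = 0 := by
    rw [hLf_small 0 h0e, hT0]
  have hlin : ∀ x : X, Laff.linear x = Lf x := by
    intro x
    have h1 := AffineMap.decomp Laff
    have h2 : Laff x = Laff.linear x + Laff 0 := by
      conv_lhs => rw [h1]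
      rfl
    have h3 : Laff x = Lf x := by rw [hLaff]
    have h4 : Laff 0 = Lf 0 := by rw [hLaff]
    rw [h3, h4, hLf0, add_zero] at h2
    exact h2.symm
  refine ⟨Laff.linear, ?_, ?_⟩
  · intro w hw
    rw [hlin, hLf_small w hw]
  · intro x y
    rw [hlin, hlin, hLf_iso]

lemma midpoint_const_add {V : Type*} [NormedAddCommGroup V] [NormedSpace ℝ V] (c p q : V) :
    midpoint ℝ (c + p) (c + q) = c + midpoint ℝ p q := by
  apply smul_right_injective V (by norm_num : (2:ℝ) ≠ 0)
  show (2:ℝ) • midpoint ℝ (c + p) (c + q) = (2:ℝ) • (c + midpoint ℝ p q)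
  rw [two_smul, midpoint_add_self, two_smul]
  have h1 : midpoint ℝ p q + midpoint ℝ p q = p + q := midpoint_add_self ℝ p q
  calc c + p + (c + q) = (c + c) + (p + q) := by abel
  _ = (c + c) + (midpoint ℝ p q + midpoint ℝ p q) := by rw [h1]
  _ = c + midpoint ℝ p q + (c + midpoint ℝ p q) := by abel

lemma midpoint_sub_const {V : Type*} [NormedAddCommGroup V] [NormedSpace ℝ V] (p q c : V) :
    midpoint ℝ p q - c = midpoint ℝ (p - c) (q - c) := by
  apply smul_right_injective V (by norm_num : (2:ℝ) ≠ 0)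
  show (2:ℝ) • (midpoint ℝ p q - c) = (2:ℝ) • midpoint ℝ (p - c) (q - c)
  rw [two_smul, two_smul, midpoint_add_self]
  have h1 : midpoint ℝ p q + midpoint ℝ p q = p + q := midpoint_add_self ℝ p q
  calc midpoint ℝ p q - c + (midpoint ℝ p q - c)
      = (midpoint ℝ p q + midpoint ℝ p q) - (c + c) := by abel
  _ = (p + q) - (c + c) := by rw [h1]
  _ = (p - c) + (q - c) := by abel

/-- Mankiewicz's theorem: a surjective isometry between closed convex subsets with nonempty
interior of real Banach spaces extends to a bijective affine isometry; if moreover `0 ∈ B`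
and `f 0 = 0`, the extension can be taken to be a surjective linear isometry. -/
theorem mankiewicz_extension {X Y : Type*}
    [NormedAddCommGroup X] [NormedSpace ℝ X] [CompleteSpace X]
    [NormedAddCommGroup Y] [NormedSpace ℝ Y] [CompleteSpace Y]
    (B : Set X) (C : Set Y) (hB : IsClosed B) (hBc : Convex ℝ B)
    (hBi : (interior B).Nonempty) (hC : IsClosed C) (hCc : Convex ℝ C)
    (hCi : (interior C).Nonempty) (f : X → Y)
    (hmaps : Set.MapsTo f B C) (hinj : Set.InjOn f B) (hsurj : Set.SurjOn f B C)
    (hiso : ∀ x ∈ B, ∀ y ∈ B, ‖f x - f y‖ = ‖x - y‖) :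
    (∃ g : X ≃ᵃⁱ[ℝ] Y, Set.EqOn (⇑g) f B) ∧
      ((0 ∈ B ∧ f 0 = 0) → ∃ h : X ≃ₗᵢ[ℝ] Y, Set.EqOn (⇑h) f B) := by
  classical
  -- Step 1: an inverse function for f
  have hsurj' : ∀ y : Y, ∃ x : X, y ∈ C → (x ∈ B ∧ f x = y) := by
    intro y
    by_cases hy : y ∈ C
    · obtain ⟨x, hx, hfx⟩ := hsurj hy
      exact ⟨x, fun _ => ⟨hx, hfx⟩⟩
    · exact ⟨0, fun h => absurd h hy⟩
  choose finv hfinv using hsurj'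
  have hfinv_mem : ∀ y ∈ C, finv y ∈ B := fun y hy => (hfinv y hy).1
  have hfinv_right : ∀ y ∈ C, f (finv y) = y := fun y hy => (hfinv y hy).2
  have hfinv_left : ∀ x ∈ B, finv (f x) = x := by
    intro x hx
    exact hinj (hfinv_mem _ (hmaps hx)) hx (hfinv_right _ (hmaps hx))
  have hfinv_iso : ∀ p ∈ C, ∀ q ∈ C, ‖finv p - finv q‖ = ‖p - q‖ := by
    intro p hp q hq
    have h1 := hiso (finv p) (hfinv_mem p hp) (finv q) (hfinv_mem q hq)
    rw [hfinv_right p hp, hfinv_right q hq] at h1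
    exact h1.symm
  -- Step 2: a good pair of balls
  obtain ⟨bC, hbC⟩ := hCi
  have hbCC : bC ∈ C := interior_subset hbC
  obtain ⟨ε₁, hε₁0, hball₁⟩ := Metric.isOpen_iff.1 isOpen_interior bC hbC
  obtain ⟨ρ, hρ_def⟩ : ∃ ρ : ℝ, ρ = ε₁ / 4 := ⟨_, rfl⟩
  have hρ0 : 0 < ρ := by rw [hρ_def]; linarith
  have hCball : closedBall bC (2 * ρ) ⊆ C := by
    intro y hy
    apply interior_subset
    apply hball₁
    rw [mem_ball]
    calc dist y bC ≤ 2 * ρ := mem_closedBall.1 hy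
    _ < ε₁ := by rw [hρ_def]; linarith
  obtain ⟨bB, hbB⟩ := hBi
  obtain ⟨ε₂, hε₂0, hball₂⟩ := Metric.isOpen_iff.1 isOpen_interior bB hbB
  obtain ⟨rb, hrb_def⟩ : ∃ rb : ℝ, rb = ε₂ / 2 := ⟨_, rfl⟩
  have hrb0 : 0 < rb := by rw [hrb_def]; linarith
  have hBball : closedBall bB rb ⊆ B := by
    intro w hw
    apply interior_subset
    apply hball₂
    rw [mem_ball]
    calc dist w bB ≤ rb := mem_closedBall.1 hw
    _ < ε₂ := by rw [hrb_def]; linarith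
  obtain ⟨x₁, hx₁_def⟩ : ∃ x₁ : X, x₁ = finv bC := ⟨_, rfl⟩
  have hx₁B : x₁ ∈ B := by rw [hx₁_def]; exact hfinv_mem _ hbCC
  have hfx₁ : f x₁ = bC := by rw [hx₁_def]; exact hfinv_right _ hbCC
  obtain ⟨η, hη_def⟩ : ∃ η : ℝ, η = min 1 (ρ / (‖bB - x₁‖ + 1)) := ⟨_, rfl⟩
  have hη0 : 0 < η := by
    rw [hη_def]
    exact lt_min one_pos (by positivity)
  have hη1 : η ≤ 1 := by rw [hη_def]; exact min_le_left _ _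
  have hηd : η * ‖bB - x₁‖ ≤ ρ := by
    have h1 : η ≤ ρ / (‖bB - x₁‖ + 1) := by rw [hη_def]; exact min_le_right _ _
    have h2 : (0:ℝ) ≤ ‖bB - x₁‖ := norm_nonneg _
    calc η * ‖bB - x₁‖ ≤ (ρ / (‖bB - x₁‖ + 1)) * ‖bB - x₁‖ :=
          mul_le_mul_of_nonneg_right h1 h2
    _ ≤ ρ := by
        rw [div_mul_eq_mul_div, div_le_iff₀ (by positivity)]
        nlinarith [hρ0]
  obtain ⟨a, ha_def⟩ : ∃ a : X, a = x₁ + η • (bB - x₁) := ⟨_, rfl⟩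
  have hBall : closedBall a (η * rb) ⊆ B := by
    intro w hw
    have hz : bB + η⁻¹ • (w - a) ∈ B := by
      apply hBball
      rw [mem_closedBall, dist_eq_norm]
      have h3 : bB + η⁻¹ • (w - a) - bB = η⁻¹ • (w - a) := by abel
      rw [h3, norm_smul, Real.norm_eq_abs, abs_of_pos (by positivity : (0:ℝ) < η⁻¹)]
      have hwa : ‖w - a‖ ≤ η * rb := by
        rw [← dist_eq_norm]; exact mem_closedBall.1 hw
      calc η⁻¹ * ‖w - a‖ ≤ η⁻¹ * (η * rb) :=
            mul_le_mul_of_nonneg_left hwa (by positivity)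
      _ = rb := by field_simp
    have hcomb := hBc hx₁B hz (by linarith : (0:ℝ) ≤ 1 - η) hη0.le (by ring)
    have hval : (1 - η) • x₁ + η • (bB + η⁻¹ • (w - a)) = w := by
      rw [smul_add, smul_smul, mul_inv_cancel₀ hη0.ne', one_smul, ha_def]
      module
    rwa [hval] at hcomb
  have haB : a ∈ B := hBall (mem_closedBall_self (by positivity))
  have hfa_bC : ‖f a - bC‖ ≤ ρ := by
    have h1 : ‖f a - f x₁‖ = ‖a - x₁‖ := hiso a haB x₁ hx₁B
    have h2 : a - x₁ = η • (bB - x₁) := by rw [ha_def]; abel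
    rw [hfx₁] at h1
    rw [h1, h2, norm_smul, Real.norm_eq_abs, abs_of_pos hη0]
    exact hηd
  have hBall' : closedBall (f a) ρ ⊆ C := by
    intro y hy
    apply hCball
    rw [mem_closedBall]
    calc dist y bC ≤ dist y (f a) + dist (f a) bC := dist_triangle _ _ _
    _ ≤ ρ + ρ := add_le_add (mem_closedBall.1 hy) (by rw [dist_eq_norm]; exact hfa_bC)
    _ = 2 * ρ := by ring
  obtain ⟨r₀, hr₀_def⟩ : ∃ r₀ : ℝ, r₀ = min (η * rb) ρ := ⟨_, rfl⟩
  have hr₀0 : 0 < r₀ := by rw [hr₀_def]; exact lt_min (by positivity) hρ0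
  have hBall₀ : closedBall a r₀ ⊆ B :=
    (closedBall_subset_closedBall (by rw [hr₀_def]; exact min_le_left _ _)).trans hBall
  have hBall₀' : closedBall (f a) r₀ ⊆ C :=
    (closedBall_subset_closedBall (by rw [hr₀_def]; exact min_le_right _ _)).trans hBall'
  obtain ⟨e₀, he₀_def⟩ : ∃ e₀ : ℝ, e₀ = r₀ / 4 := ⟨_, rfl⟩
  have he₀0 : 0 < e₀ := by rw [he₀_def]; linarith
  have he₀r : e₀ ≤ r₀ := by rw [he₀_def]; linarith
  -- midpoint preservation on the good ball
  have hmidf : ∀ u ∈ closedBall a e₀, ∀ v ∈ closedBall a e₀,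
      f (midpoint ℝ u v) = midpoint ℝ (f u) (f v) := by
    intro u hu v hv
    rw [he₀_def] at hu hv
    exact midpoint_pres hiso hfinv_mem hfinv_right hfinv_left hBall₀ hBall₀' hu hv
  have hmidf' : ∀ p ∈ closedBall (f a) e₀, ∀ q ∈ closedBall (f a) e₀,
      finv (midpoint ℝ p q) = midpoint ℝ (finv p) (finv q) := by
    intro p hp q hq
    rw [he₀_def] at hp hq
    have hBall₀'' : closedBall (finv (f a)) r₀ ⊆ B := by
      rw [hfinv_left a haB]; exact hBall₀
    exact midpoint_pres hfinv_iso (fun x hx => hmaps hx) hfinv_left hfinv_right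
      hBall₀' hBall₀'' hp hq
  -- the local linear models
  have hamem : ∀ w : X, ‖w‖ ≤ e₀ → a + w ∈ closedBall a e₀ := by
    intro w hw
    rw [mem_closedBall, dist_eq_norm]
    have h1 : a + w - a = w := by abel
    rw [h1]; exact hw
  have hamemB : ∀ w : X, ‖w‖ ≤ e₀ → a + w ∈ B := by
    intro w hw
    exact hBall₀ ((closedBall_subset_closedBall he₀r) (hamem w hw))
  have hfamem : ∀ w : Y, ‖w‖ ≤ e₀ → f a + w ∈ closedBall (f a) e₀ := by
    intro w hw
    rw [mem_closedBall, dist_eq_norm]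
    have h1 : f a + w - f a = w := by abel
    rw [h1]; exact hw
  have hfamemC : ∀ w : Y, ‖w‖ ≤ e₀ → f a + w ∈ C := by
    intro w hw
    exact hBall₀' ((closedBall_subset_closedBall he₀r) (hfamem w hw))
  obtain ⟨T, hT_def⟩ : ∃ T : X → Y, T = fun w => f (a + w) - f a := ⟨_, rfl⟩
  have hT_eval : ∀ w, T w = f (a + w) - f a := fun w => by rw [hT_def]
  have hT0 : T 0 = 0 := by rw [hT_eval, add_zero, sub_self]
  have hT_iso : ∀ w w' : X, ‖w‖ ≤ e₀ → ‖w'‖ ≤ e₀ → ‖T w - T w'‖ = ‖w - w'‖ := by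
    intro w w' hw hw'
    rw [hT_eval, hT_eval, sub_sub_sub_cancel_right,
      hiso _ (hamemB w hw) _ (hamemB w' hw'), add_sub_add_left_eq_sub]
  have hT_mid : ∀ w w' : X, ‖w‖ ≤ e₀ → ‖w'‖ ≤ e₀ →
      T (midpoint ℝ w w') = midpoint ℝ (T w) (T w') := by
    intro w w' hw hw'
    have hmw : ‖midpoint ℝ w w'‖ ≤ e₀ := le_trans (norm_midpoint_le' w w') (max_le hw hw')
    rw [hT_eval, hT_eval, hT_eval, ← midpoint_const_add a w w',
      hmidf _ (hamem w hw) _ (hamem w' hw'), midpoint_sub_const]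
  obtain ⟨lin, hlin_small, hlin_iso⟩ := extend_linear he₀0 hT0 hT_iso hT_mid
  obtain ⟨T', hT'_def⟩ : ∃ T' : Y → X, T' = fun w => finv (f a + w) - a := ⟨_, rfl⟩
  have hT'_eval : ∀ w, T' w = finv (f a + w) - a := fun w => by rw [hT'_def]
  have hT'0 : T' 0 = 0 := by rw [hT'_eval, add_zero, hfinv_left a haB, sub_self]
  have hT'_iso : ∀ w w' : Y, ‖w‖ ≤ e₀ → ‖w'‖ ≤ e₀ → ‖T' w - T' w'‖ = ‖w - w'‖ := by
    intro w w' hw hw'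
    rw [hT'_eval, hT'_eval, sub_sub_sub_cancel_right,
      hfinv_iso _ (hfamemC w hw) _ (hfamemC w' hw'), add_sub_add_left_eq_sub]
  have hT'_mid : ∀ w w' : Y, ‖w‖ ≤ e₀ → ‖w'‖ ≤ e₀ →
      T' (midpoint ℝ w w') = midpoint ℝ (T' w) (T' w') := by
    intro w w' hw hw'
    rw [hT'_eval, hT'_eval, hT'_eval, ← midpoint_const_add (f a) w w',
      hmidf' _ (hfamem w hw) _ (hfamem w' hw'), midpoint_sub_const]
  obtain ⟨lin', hlin'_small, hlin'_iso⟩ := extend_linear he₀0 hT'0 hT'_iso hT'_mid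
  -- inverse identities
  have hTnorm : ∀ w : X, ‖w‖ ≤ e₀ → ‖T w‖ ≤ e₀ := by
    intro w hw
    have h1 := hT_iso w 0 hw (by rw [norm_zero]; exact he₀0.le)
    rw [hT0, sub_zero, sub_zero] at h1
    rw [h1]; exact hw
  have hT'norm : ∀ w : Y, ‖w‖ ≤ e₀ → ‖T' w‖ ≤ e₀ := by
    intro w hw
    have h1 := hT'_iso w 0 hw (by rw [norm_zero]; exact he₀0.le)
    rw [hT'0, sub_zero, sub_zero] at h1
    rw [h1]; exact hw
  have hsmall_inv : ∀ w : X, ‖w‖ ≤ e₀ → lin' (lin w) = w := by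
    intro w hw
    rw [hlin_small w hw, hlin'_small _ (hTnorm w hw), hT'_eval, hT_eval]
    have h1 : f a + (f (a + w) - f a) = f (a + w) := by abel
    rw [h1, hfinv_left _ (hamemB w hw)]
    abel
  have hsmall_inv' : ∀ w : Y, ‖w‖ ≤ e₀ → lin (lin' w) = w := by
    intro w hw
    rw [hlin'_small w hw, hlin_small _ (hT'norm w hw), hT_eval, hT'_eval]
    have h1 : a + (finv (f a + w) - a) = finv (f a + w) := by abel
    rw [h1, hfinv_right _ (hfamemC w hw)]
    abel
  have hshrink : ∀ x : X, ∃ n : ℕ, ‖((2:ℝ)⁻¹)^n • x‖ ≤ e₀ := by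
    intro x
    obtain ⟨n, hn⟩ := pow_unbounded_of_one_lt (‖x‖ / e₀) (by norm_num : (1:ℝ) < 2)
    refine ⟨n, ?_⟩
    rw [norm_smul, Real.norm_eq_abs, abs_of_pos (by positivity : (0:ℝ) < ((2:ℝ)⁻¹)^n)]
    rw [div_lt_iff₀ he₀0] at hn
    have h2 : ((2:ℝ)⁻¹)^n * (2:ℝ)^n = 1 := by rw [← mul_pow]; norm_num
    have h3 : (0:ℝ) < ((2:ℝ)⁻¹)^n := by positivity
    nlinarith [h3, hn, norm_nonneg x]
  have hshrink' : ∀ y : Y, ∃ n : ℕ, ‖((2:ℝ)⁻¹)^n • y‖ ≤ e₀ := by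
    intro y
    obtain ⟨n, hn⟩ := pow_unbounded_of_one_lt (‖y‖ / e₀) (by norm_num : (1:ℝ) < 2)
    refine ⟨n, ?_⟩
    rw [norm_smul, Real.norm_eq_abs, abs_of_pos (by positivity : (0:ℝ) < ((2:ℝ)⁻¹)^n)]
    rw [div_lt_iff₀ he₀0] at hn
    have h2 : ((2:ℝ)⁻¹)^n * (2:ℝ)^n = 1 := by rw [← mul_pow]; norm_num
    have h3 : (0:ℝ) < ((2:ℝ)⁻¹)^n := by positivity
    nlinarith [h3, hn, norm_nonneg y]
  have hinv_all : ∀ x : X, lin' (lin x) = x := by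
    intro x
    obtain ⟨n, hn⟩ := hshrink x
    have h1 := hsmall_inv _ hn
    rw [map_smul, map_smul] at h1
    exact smul_right_injective X
      (ne_of_gt (by positivity : (0:ℝ) < ((2:ℝ)⁻¹)^n)) h1
  have hinv_all' : ∀ y : Y, lin (lin' y) = y := by
    intro y
    obtain ⟨n, hn⟩ := hshrink' y
    have h1 := hsmall_inv' _ hn
    rw [map_smul, map_smul] at h1
    exact smul_right_injective Y
      (ne_of_gt (by positivity : (0:ℝ) < ((2:ℝ)⁻¹)^n)) h1
  -- the linear isometry equivalence
  have hnorm_lin : ∀ x : X, ‖lin x‖ = ‖x‖ := by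
    intro x
    have h1 := hlin_iso x 0
    rwa [map_zero, sub_zero, sub_zero] at h1
  obtain ⟨LeqI, hLeqI⟩ : ∃ LeqI : X ≃ₗᵢ[ℝ] Y, ∀ x, LeqI x = lin x := by
    refine ⟨⟨LinearEquiv.ofLinear lin lin'
      (LinearMap.ext hinv_all') (LinearMap.ext hinv_all), ?_⟩, fun x => rfl⟩
    intro x
    exact hnorm_lin x
  -- the affine isometry equivalence
  obtain ⟨gA, hgA⟩ : ∃ gA : X ≃ᵃⁱ[ℝ] Y, ∀ x, gA x = f a + lin (x - a) := by
    refine ⟨((AffineIsometryEquiv.constVAdd ℝ X (-a)).trans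
      LeqI.toAffineIsometryEquiv).trans (AffineIsometryEquiv.constVAdd ℝ Y (f a)), ?_⟩
    intro x
    rw [AffineIsometryEquiv.coe_trans, AffineIsometryEquiv.coe_trans]
    simp only [Function.comp_apply, AffineIsometryEquiv.coe_constVAdd,
      LinearIsometryEquiv.coe_toAffineIsometryEquiv, vadd_eq_add]
    rw [hLeqI]
    congr 1
    congr 1
    abel
  -- the normalized map F
  obtain ⟨F, hF_def⟩ : ∃ F : X → X, F = fun x => a + lin' (f x - f a) := ⟨_, rfl⟩
  have hF_eval : ∀ x, F x = a + lin' (f x - f a) := fun x => by rw [hF_def]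
  have hF_iso : ∀ x ∈ B, ∀ y ∈ B, ‖F x - F y‖ = ‖x - y‖ := by
    intro x hx y hy
    rw [hF_eval, hF_eval]
    have h1 : a + lin' (f x - f a) - (a + lin' (f y - f a))
        = lin' (f x - f a) - lin' (f y - f a) := by abel
    rw [h1, hlin'_iso]
    have h2 : f x - f a - (f y - f a) = f x - f y := by abel
    rw [h2]
    exact hiso x hx y hy
  have hBe₀ : closedBall a e₀ ⊆ B := (closedBall_subset_closedBall he₀r).trans hBall₀
  have hF_id0 : ∀ z ∈ closedBall a e₀, F z = z := by
    intro z hz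
    have hz' : ‖z - a‖ ≤ e₀ := by rw [← dist_eq_norm]; exact mem_closedBall.1 hz
    rw [hF_eval]
    have h1 : f z - f a = T (z - a) := by
      rw [hT_eval]
      congr 2
      abel
    rw [h1, hlin'_small _ (hTnorm _ hz'), hT'_eval, hT_eval]
    have h2 : a + (z - a) = z := by abel
    rw [h2]
    have h3 : f a + (f z - f a) = f z := by abel
    rw [h3, hfinv_left z (hBe₀ hz)]
    abel
  -- the extension step via rigidity
  have hRext : ∀ (c : X) (e : ℝ), 0 < e → closedBall c e ⊆ B →
      (∀ z ∈ closedBall c e, F z = z) →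
      ∀ u ∈ B, ‖u - c‖ ≤ 3/2 * e → F u = u := by
    intro c e he hcb hid u huB hdist
    have key : ∀ z : X, ‖z‖ ≤ e → ‖(F u - c) - z‖ = ‖(u - c) - z‖ := by
      intro z hz
      have hzc : c + z ∈ closedBall c e := by
        rw [mem_closedBall, dist_eq_norm]
        have h1 : c + z - c = z := by abel
        rw [h1]; exact hz
      have h1 : F (c + z) = c + z := hid _ hzc
      have h2 := hF_iso u huB (c + z) (hcb hzc)
      rw [h1] at h2
      have h3 : F u - (c + z) = F u - c - z := by abel
      have h4 : u - (c + z) = u - c - z := by abel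
      rw [h3, h4] at h2
      exact h2
    have hconc := rigid_aux he hdist key
    have h6 : F u - c + c = u - c + c := by rw [hconc]
    rwa [sub_add_cancel, sub_add_cancel] at h6
  -- the set of points near which F is the identity
  obtain ⟨S, hS_def⟩ : ∃ S : Set X,
      S = {x : X | ∃ ε : ℝ, 0 < ε ∧ closedBall x ε ⊆ B ∧
        ∀ z ∈ closedBall x ε, F z = z} := ⟨_, rfl⟩
  have hS_mem : ∀ x, x ∈ S ↔ ∃ ε : ℝ, 0 < ε ∧ closedBall x ε ⊆ B ∧
      ∀ z ∈ closedBall x ε, F z = z := by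
    intro x
    rw [hS_def]
    exact Iff.rfl
  have hS_open : IsOpen S := by
    rw [Metric.isOpen_iff]
    intro x hx
    rw [hS_mem] at hx
    obtain ⟨ε, hε0, hεB, hεid⟩ := hx
    refine ⟨ε/2, by positivity, ?_⟩
    intro x' hx'
    rw [mem_ball] at hx'
    rw [hS_mem]
    have hsub : closedBall x' (ε/2) ⊆ closedBall x ε := by
      intro z hz
      rw [mem_closedBall]
      calc dist z x ≤ dist z x' + dist x' x := dist_triangle _ _ _
      _ ≤ ε/2 + ε/2 := add_le_add (mem_closedBall.1 hz) hx'.le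
      _ = ε := by ring
    exact ⟨ε/2, by positivity, hsub.trans hεB, fun z hz => hεid z (hsub hz)⟩
  have hS_a : a ∈ S := by
    rw [hS_mem]
    exact ⟨e₀, he₀0, hBe₀, hF_id0⟩
  -- growth: a point of the interior in the closure of S is in S
  have hgrow : ∀ x ∈ interior B, x ∈ closure S → x ∈ S := by
    intro x hxi hxc
    obtain ⟨ε₃, hε₃0, hball₃⟩ := Metric.isOpen_iff.1 isOpen_interior x hxi
    obtain ⟨ρ₁, hρ₁_def⟩ : ∃ ρ₁ : ℝ, ρ₁ = ε₃ / 6 := ⟨_, rfl⟩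
    have hρ₁0 : 0 < ρ₁ := by rw [hρ₁_def]; linarith
    have hxball : closedBall x (5*ρ₁) ⊆ B := by
      intro w hw
      apply interior_subset
      apply hball₃
      rw [mem_ball]
      calc dist w x ≤ 5*ρ₁ := mem_closedBall.1 hw
      _ < ε₃ := by rw [hρ₁_def]; linarith
    obtain ⟨x', hx'S, hx'd⟩ : ∃ x' ∈ S, dist x x' < ρ₁ :=
      Metric.mem_closure_iff.1 hxc ρ₁ hρ₁0
    rw [hS_mem] at hx'S
    obtain ⟨ε', hε'0, hε'B, hε'id⟩ := hx'S
    obtain ⟨ε₄, hε₄_def⟩ : ∃ t : ℝ, t = min ε' (3*ρ₁) := ⟨_, rfl⟩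
    have hε₄0 : 0 < ε₄ := by
      rw [hε₄_def]
      exact lt_min hε'0 (by positivity)
    have hball_x' : closedBall x' (3*ρ₁) ⊆ B := by
      intro w hw
      apply hxball
      rw [mem_closedBall]
      calc dist w x ≤ dist w x' + dist x' x := dist_triangle _ _ _
      _ ≤ 3*ρ₁ + ρ₁ := add_le_add (mem_closedBall.1 hw)
          (by rw [dist_comm]; exact hx'd.le)
      _ ≤ 5*ρ₁ := by linarith
    have hstep : ∀ e : ℝ, 0 < e → e ≤ 3*ρ₁ → (∀ z ∈ closedBall x' e, F z = z) →
        ∀ z ∈ closedBall x' (min (3/2*e) (3*ρ₁)), F z = z := by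
      intro e he hle hidz z hz
      apply hRext x' e he ((closedBall_subset_closedBall hle).trans hball_x') hidz z
      · apply hball_x'
        exact (closedBall_subset_closedBall (min_le_right _ _)) hz
      · rw [← dist_eq_norm]
        calc dist z x' ≤ min (3/2*e) (3*ρ₁) := mem_closedBall.1 hz
        _ ≤ 3/2 * e := min_le_left _ _
    have hiter : ∀ n : ℕ, ∀ z ∈ closedBall x' (min ((3/2)^n * ε₄) (3*ρ₁)), F z = z := by
      intro n
      induction n with
      | zero =>
        intro z hz
        apply hε'id
        apply closedBall_subset_closedBall _ hz
        calc min ((3/2:ℝ)^0 * ε₄) (3*ρ₁) ≤ (3/2:ℝ)^0 * ε₄ := min_le_left _ _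
        _ = ε₄ := by norm_num
        _ ≤ ε' := by rw [hε₄_def]; exact min_le_left _ _
      | succ k ih =>
        have hek0 : 0 < min ((3/2:ℝ)^k * ε₄) (3*ρ₁) := lt_min (by positivity) (by positivity)
        have hekle : min ((3/2:ℝ)^k * ε₄) (3*ρ₁) ≤ 3*ρ₁ := min_le_right _ _
        have h2 := hstep _ hek0 hekle ih
        intro z hz
        apply h2
        apply closedBall_subset_closedBall _ hz
        rcases le_total ((3/2:ℝ)^k * ε₄) (3*ρ₁) with h | h
        · rw [min_eq_left h]
          apply le_min
          · calc min ((3/2:ℝ)^(k+1) * ε₄) (3*ρ₁) ≤ (3/2:ℝ)^(k+1) * ε₄ := min_le_left _ _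
            _ = 3/2 * ((3/2:ℝ)^k * ε₄) := by rw [pow_succ]; ring
          · exact min_le_right _ _
        · rw [min_eq_right h]
          apply le_min
          · calc min ((3/2:ℝ)^(k+1) * ε₄) (3*ρ₁) ≤ 3*ρ₁ := min_le_right _ _
            _ ≤ 3/2 * (3*ρ₁) := by linarith
          · exact min_le_right _ _
    obtain ⟨n, hn⟩ := pow_unbounded_of_one_lt ((3*ρ₁) / ε₄) (by norm_num : (1:ℝ) < 3/2)
    have hbig : 3*ρ₁ ≤ (3/2:ℝ)^n * ε₄ := by
      rw [div_lt_iff₀ hε₄0] at hn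
      linarith
    have hfin : ∀ z ∈ closedBall x' (3*ρ₁), F z = z := by
      intro z hz
      apply hiter n
      rwa [min_eq_right hbig]
    rw [hS_mem]
    refine ⟨ρ₁, hρ₁0, ?_, ?_⟩
    · exact (closedBall_subset_closedBall (by linarith)).trans hxball
    · intro z hz
      apply hfin
      rw [mem_closedBall]
      calc dist z x' ≤ dist z x + dist x x' := dist_triangle _ _ _
      _ ≤ ρ₁ + ρ₁ := add_le_add (mem_closedBall.1 hz) hx'd.le
      _ ≤ 3*ρ₁ := by linarith
  -- connectedness: S covers the interior of B
  have ha_int : a ∈ interior B :=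
    (interior_maximal (ball_subset_closedBall.trans hBall₀) isOpen_ball)
      (mem_ball_self hr₀0)
  have hIntS : interior B ⊆ S := by
    by_contra hcon
    obtain ⟨x₀, hx₀i, hx₀S⟩ := Set.not_subset.1 hcon
    have hconn : IsPreconnected (interior B) := hBc.interior.isPreconnected
    have hcover : interior B ⊆ S ∪ (closure S)ᶜ := by
      intro z hz
      by_cases hzc : z ∈ closure S
      · exact Or.inl (hgrow z hz hzc)
      · exact Or.inr hzc
    have hne1 : (interior B ∩ S).Nonempty := ⟨a, ha_int, hS_a⟩
    have hne2 : (interior B ∩ (closure S)ᶜ).Nonempty :=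
      ⟨x₀, hx₀i, fun hc => hx₀S (hgrow x₀ hx₀i hc)⟩
    obtain ⟨z, hz⟩ := hconn S (closure S)ᶜ hS_open isClosed_closure.isOpen_compl
      hcover hne1 hne2
    exact hz.2.2 (subset_closure hz.2.1)
  -- F is the identity on all of B
  have hFB : ∀ x ∈ B, F x = x := by
    intro x hxB
    by_contra hne
    have hpos : 0 < ‖F x - x‖ := norm_pos_iff.2 (sub_ne_zero.2 hne)
    have hax : a ≠ x := by
      intro h
      apply hne
      rw [← h]
      exact hF_id0 a (mem_closedBall_self he₀0.le)
    have hnax : 0 < ‖a - x‖ := norm_pos_iff.2 (sub_ne_zero.2 hax)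
    have key : ∀ t : ℝ, 0 < t → t ≤ 1 → ‖F x - x‖ ≤ 2 * t * ‖a - x‖ := by
      intro t ht0 ht1
      have hxt : t • a + (1 - t) • x ∈ interior B :=
        hBc.combo_interior_closure_mem_interior ha_int (subset_closure hxB) ht0
          (by linarith) (by ring)
      have hxtS := hIntS hxt
      rw [hS_mem] at hxtS
      obtain ⟨ε, hε0, hεB, hεid⟩ := hxtS
      have hFxt : F (t • a + (1 - t) • x) = t • a + (1 - t) • x :=
        hεid _ (mem_closedBall_self hε0.le)
      have hd := hF_iso x hxB _ (interior_subset hxt)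
      rw [hFxt] at hd
      have h1 : x - (t • a + (1 - t) • x) = -(t • (a - x)) := by module
      calc ‖F x - x‖
          ≤ ‖F x - (t • a + (1-t) • x)‖ + ‖(t • a + (1-t) • x) - x‖ :=
            norm_sub_le_norm_sub_add_norm_sub _ _ _
      _ = ‖x - (t • a + (1-t) • x)‖ + ‖(t • a + (1-t) • x) - x‖ := by rw [hd]
      _ = t * ‖a - x‖ + t * ‖a - x‖ := by
          have h2 : (t • a + (1-t) • x) - x = t • (a - x) := by module
          rw [h1, h2, norm_neg, norm_smul, Real.norm_eq_abs, abs_of_pos ht0]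
      _ = 2 * t * ‖a - x‖ := by ring
    obtain ⟨t, ht_def⟩ : ∃ t : ℝ, t = min 1 (‖F x - x‖ / (4 * ‖a - x‖)) := ⟨_, rfl⟩
    have ht0 : 0 < t := by
      rw [ht_def]
      exact lt_min one_pos (by positivity)
    have ht1 : t ≤ 1 := by rw [ht_def]; exact min_le_left _ _
    have htb : t ≤ ‖F x - x‖ / (4 * ‖a - x‖) := by
      rw [ht_def]; exact min_le_right _ _
    have h2 := key t ht0 ht1
    rw [le_div_iff₀ (by positivity)] at htb
    nlinarith [h2, htb, hpos, hnax, ht0]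
  -- f equals the affine model on B
  have hfA : ∀ x ∈ B, f x = f a + lin (x - a) := by
    intro x hx
    have h1 := hFB x hx
    rw [hF_eval] at h1
    have h3 : a + lin' (f x - f a) - a = x - a := by rw [h1]
    rw [add_sub_cancel_left] at h3
    have h4 := congrArg lin h3
    rw [hinv_all'] at h4
    rw [← h4]
    abel
  constructor
  · refine ⟨gA, ?_⟩
    intro x hx
    rw [hgA x]
    exact (hfA x hx).symm
  · rintro ⟨h0B, hf0⟩
    have hA0 : (0:Y) = f a + lin (0 - a) := by rw [← hf0]; exact hfA 0 h0B
    have hfa_lin : f a = lin a := by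
      rw [zero_sub, map_neg] at hA0
      have h2 : f a - lin a = 0 := by
        rw [← sub_eq_add_neg] at hA0
        exact hA0.symm
      exact sub_eq_zero.1 h2
    refine ⟨LeqI, ?_⟩
    intro x hx
    show LeqI x = f x
    rw [hLeqI x, hfA x hx, hfa_lin, map_sub]
    abel
end
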